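/- arXiv:1511.06588 — 8 statements merged into one kernel-verified Lean document; each statement's English description precedes it below -/
import Mathlib

section
/- Consider the transverse system ė = F(e,x), ẋ = G(e,x) satisfying Property TULES-NL with constants r, k, λ > 0. Assume there exist positive real numbers ρ, μ and c such that, for all x in ℝ^{n_x}, |∂F/∂e(0,x)| ≤ μ and |∂G/∂x(0,x)| ≤ ρ, and, for all (e,x) with |e| ≤ kr, |∂²F/∂e∂e(e,x)| ≤ c, |∂²F/∂x∂e(e,x)| ≤ c and |∂G/∂e(e,x)| ≤ c. Then the transversally linearized system δė = (∂F/∂e)(0,x)δ, ẋ = G̃(x) := G(0,x) is forward complete and there exist strictly positive real numbers k̃ and λ̃ such that every solution (δE(δ₀,x₀,t), X̃(x₀,t)) of the linearized system satisfies |δE(δ₀,x₀,t)| ≤ k̃ exp(−λ̃ t)|δ₀| for all (δ₀,x₀,t) in ℝ^{n_e}×ℝ^{n_x}×ℝ₊. -/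
open Real Set Filter
open scoped RealInnerProductSpace Topology

/-- Euclidean state space ℝⁿ. -/
abbrev Euc (n : ℕ) := EuclideanSpace ℝ (Fin n)

lemma aux_mvt {E F : Type*} [NormedAddCommGroup E] [NormedSpace ℝ E]
    [NormedAddCommGroup F] [NormedSpace ℝ F] {f : E → F} {f' : E → E →L[ℝ] F}
    {s : Set E} {C : ℝ} (hs : Convex ℝ s) (hd : ∀ y ∈ s, HasFDerivAt f (f' y) y)
    (hb : ∀ y ∈ s, ‖f' y‖ ≤ C) {x y : E} (hx : x ∈ s) (hy : y ∈ s) :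
    ‖f y - f x‖ ≤ C * ‖y - x‖ :=
  hs.norm_image_sub_le_of_norm_hasFDerivWithin_le
    (fun z hz => (hd z hz).hasFDerivWithinAt) hb hx hy

lemma aux_gronwall_le {K ε x : ℝ} (hK : 0 ≤ K) (hε : 0 ≤ ε) (hx : 0 ≤ x) :
    gronwallBound 0 K ε x ≤ ε * x * exp (K * x) := by
  rcases eq_or_ne K 0 with h | h
  · subst h
    rw [gronwallBound_K0]
    simp only [zero_add, zero_mul, Real.exp_zero, mul_one]
    exact le_rfl
  · have hKpos : 0 < K := lt_of_le_of_ne hK (Ne.symm h)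
    rw [gronwallBound_of_K_ne_0 h]
    have h1 : exp (K * x) - 1 ≤ K * x * exp (K * x) := by
      have h2 : (-(K * x)) + 1 ≤ exp (-(K * x)) := Real.add_one_le_exp _
      have h3 := mul_le_mul_of_nonneg_right h2 (Real.exp_pos (K * x)).le
      rw [add_mul, one_mul, ← Real.exp_add, neg_add_cancel, Real.exp_zero] at h3
      nlinarith
    have := mul_le_mul_of_nonneg_left h1 (div_nonneg hε hK)
    calc 0 * exp (K * x) + ε / K * (exp (K * x) - 1)
        ≤ ε / K * (K * x * exp (K * x)) := by simpa using this
      _ = ε * x * exp (K * x) := by field_simp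

lemma aux_contOn {E : Type*} [NormedAddCommGroup E] [NormedSpace ℝ E]
    {f : ℝ → E} {g : ℝ → E}
    (hd : ∀ t, 0 ≤ t → HasDerivWithinAt f (g t) (Ici 0) t) :
    ContinuousOn f (Ici 0) :=
  fun t ht => (hd t ht).continuousWithinAt


set_option maxHeartbeats 1000000 in
/-- **Fact 1 for transverse exponential stability** (Proposition 1):
If the system ė = F(e,x), ẋ = G(e,x) (with F(0,x) = 0, F, G of class C²,
forward complete, with flow (E, X)) satisfies Property TULES-NL with constants
r, k, λ > 0 and the indicated bounds on first and second partial derivatives hold,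
then the transversally linearized system δė = ∂F/∂e(0,x) δ, ẋ = G̃(x) := G(0,x)
is forward complete and all its solutions satisfy
|δE(δ₀,x₀,t)| ≤ k̃ exp(−λ̃ t) |δ₀| for some k̃, λ̃ > 0. -/
theorem fact1_transverse_local
    {ne nx : ℕ}
    (F : Euc ne × Euc nx → Euc ne) (G : Euc ne × Euc nx → Euc nx)
    (hF : ContDiff ℝ 2 F) (hG : ContDiff ℝ 2 G)
    (hF0 : ∀ x, F (0, x) = 0)
    -- partial derivatives of F and G
    (dFe : Euc ne → Euc nx → Euc ne →L[ℝ] Euc ne)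
    (hdFe : ∀ e x, HasFDerivAt (fun e' => F (e', x)) (dFe e x) e)
    (dGx : Euc ne → Euc nx → Euc nx →L[ℝ] Euc nx)
    (hdGx : ∀ e x, HasFDerivAt (fun x' => G (e, x')) (dGx e x) x)
    (dGe : Euc ne → Euc nx → Euc ne →L[ℝ] Euc nx)
    (hdGe : ∀ e x, HasFDerivAt (fun e' => G (e', x)) (dGe e x) e)
    (dFee : Euc ne → Euc nx → Euc ne →L[ℝ] Euc ne →L[ℝ] Euc ne)
    (hdFee : ∀ e x, HasFDerivAt (fun e' => dFe e' x) (dFee e x) e)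
    (dFxe : Euc ne → Euc nx → Euc nx →L[ℝ] Euc ne →L[ℝ] Euc ne)
    (hdFxe : ∀ e x, HasFDerivAt (fun x' => dFe e x') (dFxe e x) x)
    -- forward complete flow of the nonlinear system
    (Efl : Euc ne → Euc nx → ℝ → Euc ne) (Xfl : Euc ne → Euc nx → ℝ → Euc nx)
    (hinit : ∀ e x, Efl e x 0 = e ∧ Xfl e x 0 = x)
    (hflow : ∀ e x t, 0 ≤ t →
      HasDerivWithinAt (Efl e x) (F (Efl e x t, Xfl e x t)) (Ici 0) t ∧
      HasDerivWithinAt (Xfl e x) (G (Efl e x t, Xfl e x t)) (Ici 0) t)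
    -- Property TULES-NL
    (r k lam : ℝ) (hr : 0 < r) (hk : 0 < k) (hlam : 0 < lam)
    (hTULES : ∀ e x t, 0 ≤ t → ‖e‖ ≤ r → ‖Efl e x t‖ ≤ k * ‖e‖ * exp (-lam * t))
    -- bounds on the derivatives
    (ρ μ c : ℝ) (hρ : 0 < ρ) (hμ : 0 < μ) (hc : 0 < c)
    (hbnd1 : ∀ x, ‖dFe 0 x‖ ≤ μ ∧ ‖dGx 0 x‖ ≤ ρ)
    (hbnd2 : ∀ e x, ‖e‖ ≤ k * r → ‖dFee e x‖ ≤ c ∧ ‖dFxe e x‖ ≤ c ∧ ‖dGe e x‖ ≤ c) :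
    -- the linearized system is forward complete ...
    (∀ (δ0 : Euc ne) (x0 : Euc nx), ∃ (δE : ℝ → Euc ne) (X : ℝ → Euc nx),
      δE 0 = δ0 ∧ X 0 = x0 ∧
      ∀ t, 0 ≤ t →
        HasDerivWithinAt δE (dFe 0 (X t) (δE t)) (Ici 0) t ∧
        HasDerivWithinAt X (G (0, X t)) (Ici 0) t) ∧
    -- ... and every solution of it decays exponentially, uniformly
    (∃ kt > (0:ℝ), ∃ lamt > (0:ℝ),
      ∀ (δ0 : Euc ne) (x0 : Euc nx) (δE : ℝ → Euc ne) (X : ℝ → Euc nx),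
        δE 0 = δ0 → X 0 = x0 →
        (∀ t, 0 ≤ t →
          HasDerivWithinAt δE (dFe 0 (X t) (δE t)) (Ici 0) t ∧
          HasDerivWithinAt X (G (0, X t)) (Ici 0) t) →
        ∀ t, 0 ≤ t → ‖δE t‖ ≤ kt * exp (-lamt * t) * ‖δ0‖) := by
  have hkr : 0 < k * r := mul_pos hk hr
  -- Lipschitz bound for G(0,·)
  have lipG0 : ∀ x y : Euc nx, ‖G (0, x) - G (0, y)‖ ≤ ρ * ‖x - y‖ := by
    intro x y
    exact aux_mvt (f := fun x' => G (0, x')) (f' := fun x' => dGx 0 x') convex_univ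
      (fun z _ => hdGx 0 z) (fun z _ => (hbnd1 z).2) (mem_univ y) (mem_univ x)
  -- bound on G(e,x)-G(0,x)
  have Ge_bound : ∀ (e : Euc ne) (x : Euc nx), ‖e‖ ≤ k * r →
      ‖G (e, x) - G (0, x)‖ ≤ c * ‖e‖ := by
    intro e x he
    have := aux_mvt (f := fun e' => G (e', x)) (f' := fun e' => dGe e' x)
      (convex_closedBall (0 : Euc ne) (k * r))
      (fun z _ => hdGe z x)
      (fun z hz => (hbnd2 z x (mem_closedBall_zero_iff.mp hz)).2.2)
      (Metric.mem_closedBall_self hkr.le)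
      (mem_closedBall_zero_iff.mpr he)
    simpa using this
  -- Lipschitz-type bound for dFe in e
  have dFe_lip_e : ∀ (e : Euc ne) (x : Euc nx), ‖e‖ ≤ k * r →
      ‖dFe e x - dFe 0 x‖ ≤ c * ‖e‖ := by
    intro e x he
    have := aux_mvt (f := fun e' => dFe e' x) (f' := fun e' => dFee e' x)
      (convex_closedBall (0 : Euc ne) (k * r))
      (fun z _ => hdFee z x)
      (fun z hz => (hbnd2 z x (mem_closedBall_zero_iff.mp hz)).1)
      (Metric.mem_closedBall_self hkr.le)
      (mem_closedBall_zero_iff.mpr he)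
    rw [sub_zero] at this
    exact this
  -- Lipschitz bound for dFe 0 · in x
  have dFe_lip_x : ∀ x y : Euc nx, ‖dFe 0 x - dFe 0 y‖ ≤ c * ‖x - y‖ := by
    intro x y
    exact aux_mvt (f := fun x' => dFe 0 x') (f' := fun x' => dFxe 0 x') convex_univ
      (fun z _ => hdFxe 0 z)
      (fun z _ => (hbnd2 0 z (by simp [hkr.le])).2.1)
      (mem_univ y) (mem_univ x)
  -- second order Taylor bound for F
  have F_taylor : ∀ (e : Euc ne) (x : Euc nx), ‖e‖ ≤ k * r →
      ‖F (e, x) - dFe 0 x e‖ ≤ c * ‖e‖ * ‖e‖ := by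
    intro e x he
    have hmvt := aux_mvt (f := fun e' => F (e', x) - dFe 0 x e')
      (f' := fun e' => dFe e' x - dFe 0 x)
      (convex_closedBall (0 : Euc ne) ‖e‖)
      (fun z _ => (hdFe z x).sub (dFe 0 x).hasFDerivAt)
      (fun z hz => by
        have hz' : ‖z‖ ≤ ‖e‖ := mem_closedBall_zero_iff.mp hz
        have := dFe_lip_e z x (hz'.trans he)
        calc ‖dFe z x - dFe 0 x‖ ≤ c * ‖z‖ := this
          _ ≤ c * ‖e‖ := by gcongr)
      (Metric.mem_closedBall_self (norm_nonneg e))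
      (mem_closedBall_zero_iff.mpr le_rfl)
    simp only [hF0 x, map_zero, sub_zero] at hmvt
    exact hmvt
  -- continuity of the flows
  have contE : ∀ e x, ContinuousOn (Efl e x) (Ici 0) :=
    fun e x => aux_contOn (fun t ht => (hflow e x t ht).1)
  have contX : ∀ e x, ContinuousOn (Xfl e x) (Ici 0) :=
    fun e x => aux_contOn (fun t ht => (hflow e x t ht).2)
  -- zero initial error gives zero error forever
  have Efl0 : ∀ (x0 : Euc nx) (t : ℝ), 0 ≤ t → Efl 0 x0 t = 0 := by
    intro x0 t ht
    have := hTULES 0 x0 t ht (by simpa using hr.le)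
    simp only [norm_zero, mul_zero, zero_mul] at this
    exact norm_le_zero_iff.mp this
  refine ⟨?_, k, hk, lam, hlam, ?_⟩
  · -- part 1: forward completeness of the linearized system
    intro δ0 x0
    -- the x-component: nonlinear flow from (0, x0)
    have hXd : ∀ t, 0 ≤ t →
        HasDerivWithinAt (Xfl 0 x0) (G (0, Xfl 0 x0 t)) (Ici 0) t := by
      intro t ht
      have h1 := (hflow 0 x0 t ht).2
      rwa [Efl0 x0 t ht] at h1
    -- continuity of x ↦ dFe 0 x
    have hdFe_eq : ∀ (e : Euc ne) (x : Euc nx), dFe e x =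
        (fderiv ℝ F (e, x)).comp (ContinuousLinearMap.inl ℝ (Euc ne) (Euc nx)) := by
      intro e x
      refine (hdFe e x).unique ?_
      have hf : HasFDerivAt F (fderiv ℝ F (e, x)) (e, x) :=
        (hF.differentiable (by norm_num)).differentiableAt.hasFDerivAt
      exact hf.comp e (hasFDerivAt_prodMk_left e x)
    have contdFe : Continuous fun x : Euc nx => dFe 0 x := by
      have h1 : Continuous fun p : Euc ne × Euc nx => fderiv ℝ F p :=
        hF.continuous_fderiv (by norm_num)
      have h2 : Continuous fun x : Euc nx =>
          (fderiv ℝ F ((0 : Euc ne), x)).comp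
            (ContinuousLinearMap.inl ℝ (Euc ne) (Euc nx)) :=
        (h1.comp (continuous_const.prodMk continuous_id)).clm_comp continuous_const
      have h3 : (fun x : Euc nx => dFe 0 x) = fun x : Euc nx =>
          (fderiv ℝ F ((0 : Euc ne), x)).comp
            (ContinuousLinearMap.inl ℝ (Euc ne) (Euc nx)) :=
        funext fun x => hdFe_eq 0 x
      rw [h3]; exact h2
    have contA : ContinuousOn (fun t => dFe 0 (Xfl 0 x0 t)) (Ici 0) :=
      contdFe.comp_continuousOn (contX 0 x0)
    -- Picard-Lindelöf local existence step
    set τ : ℝ := (2 * μ)⁻¹ with hτ_def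
    have hτ : 0 < τ := by positivity
    have hμτ : μ * τ = 1 / 2 := by
      rw [hτ_def]; field_simp
    have step : ∀ (t0 : ℝ) (y0 : Euc ne), ∃ f : ℝ → Euc ne, 0 ≤ t0 →
        (f t0 = y0 ∧ ∀ t ∈ Icc t0 (t0 + τ),
          HasDerivWithinAt f (dFe 0 (Xfl 0 x0 t) (f t)) (Icc t0 (t0 + τ)) t) := by
      intro t0 y0
      by_cases ht0 : 0 ≤ t0
      swap
      · exact ⟨fun _ => y0, fun h => absurd h ht0⟩
      have hpl : IsPicardLindelof (fun t y => dFe 0 (Xfl 0 x0 t) y) (tmin := t0)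
          (tmax := t0 + τ) ⟨t0, le_rfl, by linarith⟩ y0 (max ‖y0‖₊ 1) 0
          (μ.toNNReal * (‖y0‖₊ + max ‖y0‖₊ 1)) μ.toNNReal := by
        constructor
        · intro t _
          refine LipschitzWith.lipschitzOnWith ?_
          refine (dFe 0 (Xfl 0 x0 t)).lipschitz.weaken ?_
          rw [← Real.toNNReal_coe (r := ‖dFe 0 (Xfl 0 x0 t)‖₊)]
          exact Real.toNNReal_mono (hbnd1 (Xfl 0 x0 t)).1
        · intro y _
          have hsub : Icc t0 (t0 + τ) ⊆ Ici (0:ℝ) := fun z hz => le_trans ht0 hz.1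
          exact (contA.mono hsub).clm_apply continuousOn_const
        · intro t _ y hy
          have hy' : ‖y‖ ≤ ‖y0‖ + max ‖y0‖ 1 := by
            have := norm_le_of_mem_closedBall hy
            push_cast at this
            linarith
          push_cast
          rw [Real.coe_toNNReal _ hμ.le]
          calc ‖dFe 0 (Xfl 0 x0 t) y‖ ≤ μ * ‖y‖ :=
              ContinuousLinearMap.le_of_opNorm_le _ (hbnd1 (Xfl 0 x0 t)).1 _
            _ ≤ μ * (‖y0‖ + max ‖y0‖ 1) := by gcongr
        · have hmax : max (t0 + τ - t0) (t0 - t0) = τ := by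
            rw [max_eq_left (by linarith)]; ring
          show _ * max (t0 + τ - t0) (t0 - t0) ≤ _
          rw [hmax]
          push_cast
          rw [Real.coe_toNNReal _ hμ.le, sub_zero]
          have hy0 : ‖y0‖ ≤ max ‖y0‖ 1 := le_max_left _ _
          calc μ * (‖y0‖ + max ‖y0‖ 1) * τ
              = (μ * τ) * (‖y0‖ + max ‖y0‖ 1) := by ring
            _ = (‖y0‖ + max ‖y0‖ 1) / 2 := by rw [hμτ]; ring
            _ ≤ max ‖y0‖ 1 := by linarith
      obtain ⟨f, hf0, hfd⟩ := hpl.exists_eq_forall_mem_Icc_hasDerivWithinAt₀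
      exact ⟨f, fun _ => ⟨hf0, hfd⟩⟩
    choose step' hstep using step
    -- glue the local solutions
    obtain ⟨g, hg0, hgS⟩ : ∃ g : ℕ → ℝ → Euc ne, g 0 = step' 0 δ0 ∧
        ∀ n : ℕ, g (n + 1) = step' (((n : ℝ) + 1) * τ) (g n (((n : ℝ) + 1) * τ)) :=
      ⟨fun n => Nat.rec (step' 0 δ0)
        (fun m fm => step' (((m : ℝ) + 1) * τ) (fm (((m : ℝ) + 1) * τ))) n,
        rfl, fun _ => rfl⟩
    have hstart0 : g 0 0 = δ0 := by rw [hg0]; exact (hstep 0 δ0 le_rfl).1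
    have hstartS : ∀ n : ℕ, g (n + 1) (((n : ℝ) + 1) * τ) = g n (((n : ℝ) + 1) * τ) := by
      intro n
      rw [hgS n]
      exact (hstep (((n : ℝ) + 1) * τ) _ (by positivity)).1
    have hderiv : ∀ n : ℕ, ∀ t ∈ Icc ((n : ℝ) * τ) (((n : ℝ) + 1) * τ),
        HasDerivWithinAt (g n) (dFe 0 (Xfl 0 x0 t) (g n t))
          (Icc ((n : ℝ) * τ) (((n : ℝ) + 1) * τ)) t := by
      intro n t htmem
      have hrng : ((n : ℝ) + 1) * τ = (n : ℝ) * τ + τ := by ring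
      rw [hrng] at htmem ⊢
      cases n with
      | zero =>
        have h1 := (hstep 0 δ0 le_rfl).2 t (by simpa using htmem)
        rw [hg0]
        simpa using h1
      | succ m =>
        have hpos : (0:ℝ) ≤ ((m : ℝ) + 1) * τ := by positivity
        have hcast : ((m + 1 : ℕ) : ℝ) = (m : ℝ) + 1 := by push_cast; ring
        rw [hcast] at htmem ⊢
        rw [hgS m]
        exact (hstep (((m : ℝ) + 1) * τ) _ hpos).2 t htmem
    -- the glued solution
    have hagree : ∀ n : ℕ, ∀ t : ℝ, (n : ℝ) * τ ≤ t → t ≤ ((n : ℝ) + 1) * τ →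
        g (⌊t / τ⌋₊) t = g n t := by
      intro n t h1 h2
      have htnn : (0:ℝ) ≤ t := le_trans (by positivity) h1
      rcases eq_or_lt_of_le h2 with heq | hlt
      · have hq : t / τ = (n : ℝ) + 1 := by
          rw [heq, mul_div_cancel_right₀ _ hτ.ne']
        have hfl : ⌊t / τ⌋₊ = n + 1 := by
          rw [hq, show ((n : ℝ) + 1) = ((n + 1 : ℕ) : ℝ) by push_cast; ring,
            Nat.floor_natCast]
        rw [hfl, heq, hstartS n]
      · have hfl : ⌊t / τ⌋₊ = n := by
          rw [Nat.floor_eq_iff (by positivity)]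
          constructor
          · rw [le_div_iff₀ hτ]; exact h1
          · rw [div_lt_iff₀ hτ]; exact hlt
        rw [hfl]
    refine ⟨fun t => g ⌊t / τ⌋₊ t, Xfl 0 x0, ?_, (hinit 0 x0).2, ?_⟩
    · show g ⌊(0:ℝ) / τ⌋₊ 0 = δ0
      rw [zero_div, Nat.floor_zero]
      exact hstart0
    · intro t ht
      refine ⟨?_, hXd t ht⟩
      set n := ⌊t / τ⌋₊ with hn_def
      have hn1 : (n : ℝ) * τ ≤ t := by
        rw [← le_div_iff₀ hτ]
        exact Nat.floor_le (by positivity)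
      have hn2 : t < ((n : ℝ) + 1) * τ := by
        rw [← div_lt_iff₀ hτ]
        exact Nat.lt_floor_add_one _
      have hEq : g ⌊t / τ⌋₊ t = g n t := by rw [← hn_def]
      rcases eq_or_lt_of_le hn1 with heq | hlt
      · -- t is a junction point (or 0)
        rcases Nat.eq_zero_or_pos n with hn0 | hn0
        · -- n = 0 : left endpoint of the first piece
          have hD := (hderiv n t ⟨hn1, hn2.le⟩).congr
            (fun y hy => hagree n y hy.1 hy.2) hEq
          refine hD.mono_of_mem_nhdsWithin ?_
          rw [mem_nhdsWithin_iff_exists_mem_nhds_inter]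
          refine ⟨Iio (((n : ℝ) + 1) * τ), Iio_mem_nhds hn2, ?_⟩
          rintro y ⟨hy1, hy2⟩
          refine ⟨?_, le_of_lt hy1⟩
          rw [show ((n : ℝ)) * τ = 0 by rw [hn0]; norm_num]
          exact hy2
        · -- n = m + 1 : junction between piece m and piece m+1
          obtain ⟨m, hm⟩ := Nat.exists_eq_succ_of_ne_zero hn0.ne'
          have hcast : ((m + 1 : ℕ) : ℝ) = (m : ℝ) + 1 := by push_cast; ring
          have hm' : (n : ℝ) = (m : ℝ) + 1 := by rw [hm]; push_cast; ring
          have htm : t = ((m : ℝ) + 1) * τ := by rw [← heq, hm']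
          have hmem1 : t ∈ Icc ((m : ℝ) * τ) (((m : ℝ) + 1) * τ) := by
            constructor
            · rw [htm]; nlinarith [hτ]
            · rw [htm]
          have hmem2 : t ∈ Icc (((m + 1 : ℕ) : ℝ) * τ) ((((m + 1 : ℕ) : ℝ) + 1) * τ) := by
            rw [hcast]
            constructor
            · rw [htm]
            · rw [htm]; nlinarith [hτ]
          have hgm1 : g (m + 1) t = g m t := by rw [htm]; exact hstartS m
          have hgn : g n t = g m t := by rw [hm]; exact hgm1
          have hA : HasDerivWithinAt (fun t => g ⌊t / τ⌋₊ t)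
              (dFe 0 (Xfl 0 x0 t) (g n t))
              (Icc ((m : ℝ) * τ) (((m : ℝ) + 1) * τ)) t := by
            rw [hgn]
            exact (hderiv m t hmem1).congr
              (fun y hy => hagree m y hy.1 hy.2)
              (hagree m t hmem1.1 hmem1.2)
          have hB : HasDerivWithinAt (fun t => g ⌊t / τ⌋₊ t)
              (dFe 0 (Xfl 0 x0 t) (g n t))
              (Icc (((m : ℝ) + 1) * τ) ((((m : ℝ) + 1) + 1) * τ)) t := by
            rw [hgn]
            have h2 := hderiv (m + 1) t hmem2
            rw [hgm1] at h2
            have h3 := h2.congr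
              (fun y hy => hagree (m + 1) y hy.1 hy.2)
              (hagree (m + 1) t hmem2.1 hmem2.2)
            rw [hcast] at h3
            exact h3
          have hU := hA.union hB
          rw [Icc_union_Icc_eq_Icc (by nlinarith [hτ]) (by nlinarith [hτ])] at hU
          refine hU.mono_of_mem_nhdsWithin (mem_nhdsWithin_of_mem_nhds ?_)
          refine Icc_mem_nhds ?_ ?_
          · rw [htm]; nlinarith [hτ]
          · rw [htm]; nlinarith [hτ]
      · -- interior point of piece n
        have hD := (hderiv n t ⟨hn1, hn2.le⟩).congr
          (fun y hy => hagree n y hy.1 hy.2) hEq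
        exact hD.mono_of_mem_nhdsWithin
          (mem_nhdsWithin_of_mem_nhds (Icc_mem_nhds hlt hn2))
  · -- part 2: exponential decay of arbitrary solutions
    intro δ0 x0 δE X hδE0 hX0 hsol T hT
    have cδE : ContinuousOn δE (Ici 0) := aux_contOn (fun t ht => (hsol t ht).1)
    have cX : ContinuousOn X (Ici 0) := aux_contOn (fun t ht => (hsol t ht).2)
    rcases eq_or_ne δ0 0 with h0 | h0
    · -- trivial case: zero initial condition
      have hg : ∀ t ∈ Icc (0:ℝ) T, ‖δE t‖ ≤ gronwallBound 0 μ 0 (t - 0) := by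
        refine norm_le_gronwallBound_of_norm_deriv_right_le
          (cδE.mono Icc_subset_Ici_self)
          (fun t ht => ((hsol t ht.1).1).mono (Ici_subset_Ici.mpr ht.1)) ?_ ?_
        · rw [hδE0, h0, norm_zero]
        · intro t ht
          rw [add_zero]
          exact ContinuousLinearMap.le_of_opNorm_le _ (hbnd1 (X t)).1 _
      have := hg T ⟨hT, le_rfl⟩
      rw [gronwallBound_ε0_δ0] at this
      have hrhs : (0:ℝ) ≤ k * exp (-lam * T) * ‖δ0‖ := by positivity
      linarith
    · have hδ0 : 0 < ‖δ0‖ := norm_pos_iff.mpr h0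
      set CT : ℝ := c * k ^ 2 * ‖δ0‖ ^ 2 * (1 + c * T * exp (ρ * T)) * T * exp (μ * T)
        with hCT_def
      have hCT : 0 ≤ CT := by
        have h1 : (0:ℝ) ≤ 1 + c * T * exp (ρ * T) := by positivity
        positivity
      refine le_of_forall_pos_le_add ?_
      intro ε hε
      set s : ℝ := min (min r (k * r) / ‖δ0‖) (ε / (CT + 1)) with hs_def
      have hspos : 0 < s :=
        lt_min (div_pos (lt_min hr hkr) hδ0) (div_pos hε (by linarith))
      have hsδ0 : s * ‖δ0‖ ≤ min r (k * r) := by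
        have : s ≤ min r (k * r) / ‖δ0‖ := min_le_left _ _
        calc s * ‖δ0‖ ≤ (min r (k * r) / ‖δ0‖) * ‖δ0‖ := by gcongr
          _ = min r (k * r) := div_mul_cancel₀ _ hδ0.ne'
      have hsr : s * ‖δ0‖ ≤ r := hsδ0.trans (min_le_left _ _)
      have hskr : s * ‖δ0‖ ≤ k * r := hsδ0.trans (min_le_right _ _)
      have he0 : ‖s • δ0‖ = s * ‖δ0‖ := by
        rw [norm_smul, Real.norm_of_nonneg hspos.le]
      set M : ℝ := k * (s * ‖δ0‖) with hM_def
      have hMpos : 0 < M := by positivity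
      have hMkr : M ≤ k * r := by
        rw [hM_def]
        exact mul_le_mul_of_nonneg_left hsr hk.le
      -- TULES bounds on the nonlinear flow
      have hEsM : ∀ t, 0 ≤ t → ‖Efl (s • δ0) x0 t‖ ≤ M := by
        intro t ht
        have h1 := hTULES (s • δ0) x0 t ht (by rw [he0]; exact hsr)
        rw [he0] at h1
        have h2 : exp (-lam * t) ≤ 1 := by
          rw [Real.exp_le_one_iff]
          nlinarith
        nlinarith [norm_nonneg (Efl (s • δ0) x0 t)]
      have hEskr : ∀ t, 0 ≤ t → ‖Efl (s • δ0) x0 t‖ ≤ k * r :=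
        fun t ht => (hEsM t ht).trans hMkr
      -- Gronwall 1: the x-components stay close
      have hwX : ∀ t ∈ Icc (0:ℝ) T,
          ‖Xfl (s • δ0) x0 t - X t‖ ≤ gronwallBound 0 ρ (c * M) (t - 0) := by
        refine norm_le_gronwallBound_of_norm_deriv_right_le
          (f := fun t => Xfl (s • δ0) x0 t - X t)
          (f' := fun t => G (Efl (s • δ0) x0 t, Xfl (s • δ0) x0 t) - G (0, X t))
          (δ := 0) (K := ρ) (ε := c * M) (a := 0) (b := T)
          (((contX (s • δ0) x0).sub cX).mono Icc_subset_Ici_self)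
          (fun t ht => (((hflow (s • δ0) x0 t ht.1).2).sub
            ((hsol t ht.1).2)).mono (Ici_subset_Ici.mpr ht.1)) ?_ ?_
        · show ‖Xfl (s • δ0) x0 0 - X 0‖ ≤ 0
          rw [(hinit (s • δ0) x0).2, hX0, sub_self, norm_zero]
        · intro t ht
          have htri : ‖G (Efl (s • δ0) x0 t, Xfl (s • δ0) x0 t) - G (0, X t)‖ ≤
              ‖G (Efl (s • δ0) x0 t, Xfl (s • δ0) x0 t) - G (0, Xfl (s • δ0) x0 t)‖ +
              ‖G (0, Xfl (s • δ0) x0 t) - G (0, X t)‖ := by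
            have := norm_sub_le_norm_sub_add_norm_sub
              (G (Efl (s • δ0) x0 t, Xfl (s • δ0) x0 t))
              (G (0, Xfl (s • δ0) x0 t)) (G (0, X t))
            exact this
          have h1 : ‖G (Efl (s • δ0) x0 t, Xfl (s • δ0) x0 t) -
              G (0, Xfl (s • δ0) x0 t)‖ ≤ c * M := by
            have := Ge_bound (Efl (s • δ0) x0 t) (Xfl (s • δ0) x0 t) (hEskr t ht.1)
            have h2 := hEsM t ht.1
            nlinarith
          have h2 := lipG0 (Xfl (s • δ0) x0 t) (X t)
          linarith
      set D : ℝ := c * M * T * exp (ρ * T) with hD_def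
      have hD : 0 ≤ D := by positivity
      have hwX' : ∀ t ∈ Icc (0:ℝ) T, ‖Xfl (s • δ0) x0 t - X t‖ ≤ D := by
        intro t ht
        have h1 := hwX t ht
        rw [sub_zero] at h1
        have h2 : gronwallBound 0 ρ (c * M) t ≤ c * M * t * exp (ρ * t) :=
          aux_gronwall_le hρ.le (by positivity) ht.1
        have h3 : c * M * t * exp (ρ * t) ≤ D := by
          rw [hD_def]
          gcongr
          exacts [ht.2, ht.2]
        linarith
      -- Gronwall 2: compare nonlinear flow with the scaled linear solution
      set εw : ℝ := c * M ^ 2 + c * D * M with hεw_def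
      have hεw : 0 ≤ εw := by positivity
      have hw : ∀ t ∈ Icc (0:ℝ) T,
          ‖Efl (s • δ0) x0 t - s • δE t‖ ≤ gronwallBound 0 μ εw (t - 0) := by
        refine norm_le_gronwallBound_of_norm_deriv_right_le
          (f := fun t => Efl (s • δ0) x0 t - s • δE t)
          (f' := fun t => F (Efl (s • δ0) x0 t, Xfl (s • δ0) x0 t) -
            s • (dFe 0 (X t) (δE t)))
          (δ := 0) (K := μ) (ε := εw) (a := 0) (b := T)
          (((contE (s • δ0) x0).sub (cδE.const_smul s)).mono Icc_subset_Ici_self)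
          (fun t ht => (((hflow (s • δ0) x0 t ht.1).1).sub
            (((hsol t ht.1).1).const_smul s)).mono (Ici_subset_Ici.mpr ht.1)) ?_ ?_
        · show ‖Efl (s • δ0) x0 0 - s • δE 0‖ ≤ 0
          rw [(hinit (s • δ0) x0).1, hδE0, sub_self, norm_zero]
        · intro t ht
          show ‖F (Efl (s • δ0) x0 t, Xfl (s • δ0) x0 t) -
              s • (dFe 0 (X t) (δE t))‖ ≤ μ * ‖Efl (s • δ0) x0 t - s • δE t‖ + εw
          have hid : F (Efl (s • δ0) x0 t, Xfl (s • δ0) x0 t) -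
              s • (dFe 0 (X t) (δE t)) =
              (F (Efl (s • δ0) x0 t, Xfl (s • δ0) x0 t) -
                dFe 0 (Xfl (s • δ0) x0 t) (Efl (s • δ0) x0 t)) +
              ((dFe 0 (Xfl (s • δ0) x0 t) - dFe 0 (X t)) (Efl (s • δ0) x0 t)) +
              (dFe 0 (X t)) (Efl (s • δ0) x0 t - s • δE t) := by
            simp only [ContinuousLinearMap.sub_apply, map_sub, map_smul]
            abel
          rw [hid]
          have hEsM' := hEsM t ht.1
          have hEskr' := hEskr t ht.1
          have hn1 : ‖F (Efl (s • δ0) x0 t, Xfl (s • δ0) x0 t) -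
              dFe 0 (Xfl (s • δ0) x0 t) (Efl (s • δ0) x0 t)‖ ≤ c * M ^ 2 := by
            have h5 := F_taylor (Efl (s • δ0) x0 t) (Xfl (s • δ0) x0 t) hEskr'
            calc ‖F (Efl (s • δ0) x0 t, Xfl (s • δ0) x0 t) -
                dFe 0 (Xfl (s • δ0) x0 t) (Efl (s • δ0) x0 t)‖
                ≤ c * ‖Efl (s • δ0) x0 t‖ * ‖Efl (s • δ0) x0 t‖ := h5
              _ ≤ c * M * M := by gcongr <;> exact hEsM'
              _ = c * M ^ 2 := by ring
          have hn2 : ‖(dFe 0 (Xfl (s • δ0) x0 t) - dFe 0 (X t))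
              (Efl (s • δ0) x0 t)‖ ≤ c * D * M := by
            have hop := ContinuousLinearMap.le_opNorm
              (dFe 0 (Xfl (s • δ0) x0 t) - dFe 0 (X t)) (Efl (s • δ0) x0 t)
            have hlip := dFe_lip_x (Xfl (s • δ0) x0 t) (X t)
            have hXd := hwX' t ⟨ht.1, ht.2.le⟩
            have hN : ‖dFe 0 (Xfl (s • δ0) x0 t) - dFe 0 (X t)‖ ≤ c * D :=
              hlip.trans (by gcongr)
            calc ‖(dFe 0 (Xfl (s • δ0) x0 t) - dFe 0 (X t)) (Efl (s • δ0) x0 t)‖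
                ≤ ‖dFe 0 (Xfl (s • δ0) x0 t) - dFe 0 (X t)‖ * ‖Efl (s • δ0) x0 t‖ :=
                  hop
              _ ≤ (c * D) * M := mul_le_mul hN hEsM' (norm_nonneg _) (by positivity)
              _ = c * D * M := by ring
          have hn3 : ‖(dFe 0 (X t)) (Efl (s • δ0) x0 t - s • δE t)‖ ≤
              μ * ‖Efl (s • δ0) x0 t - s • δE t‖ :=
            ContinuousLinearMap.le_of_opNorm_le _ (hbnd1 (X t)).1 _
          calc ‖_ + _ + _‖ ≤ _ := norm_add₃_le
            _ ≤ μ * ‖Efl (s • δ0) x0 t - s • δE t‖ + εw := by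
              rw [hεw_def]; linarith
      have hwT : ‖Efl (s • δ0) x0 T - s • δE T‖ ≤ εw * T * exp (μ * T) := by
        have h1 := hw T ⟨hT, le_rfl⟩
        rw [sub_zero] at h1
        exact h1.trans (aux_gronwall_le hμ.le hεw hT)
      -- put everything together
      have hEsT := hTULES (s • δ0) x0 T hT (by rw [he0]; exact hsr)
      rw [he0] at hEsT
      have htri : s * ‖δE T‖ ≤ ‖Efl (s • δ0) x0 T‖ +
          ‖Efl (s • δ0) x0 T - s • δE T‖ := by
        have h1 := norm_sub_le (Efl (s • δ0) x0 T) (Efl (s • δ0) x0 T - s • δE T)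
        have h2 : Efl (s • δ0) x0 T - (Efl (s • δ0) x0 T - s • δE T) = s • δE T := by
          abel
        rw [h2, norm_smul, Real.norm_of_nonneg hspos.le] at h1
        exact h1
      have hεweq : εw * T * exp (μ * T) = s * (s * CT) := by
        rw [hεw_def, hD_def, hM_def, hCT_def]; ring
      have hmain : s * ‖δE T‖ ≤ s * (k * ‖δ0‖ * exp (-lam * T)) + s * (s * CT) := by
        rw [← hεweq]
        have : k * (s * ‖δ0‖) * exp (-lam * T) = s * (k * ‖δ0‖ * exp (-lam * T)) := by
          ring
        linarith [this ▸ hEsT]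
      have hdiv : ‖δE T‖ ≤ k * ‖δ0‖ * exp (-lam * T) + s * CT := by
        have := (mul_le_mul_iff_right₀ hspos).mp (by linarith [hmain] :
          s * ‖δE T‖ ≤ s * (k * ‖δ0‖ * exp (-lam * T) + s * CT))
        exact this
      have hsCT : s * CT ≤ ε := by
        have hs2 : s ≤ ε / (CT + 1) := min_le_right _ _
        have : s * CT ≤ (ε / (CT + 1)) * CT := by gcongr
        calc s * CT ≤ (ε / (CT + 1)) * CT := this
          _ ≤ ε := by
            rw [div_mul_eq_mul_div, div_le_iff₀ (by linarith : (0:ℝ) < CT + 1)]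
            nlinarith
      calc ‖δE T‖ ≤ k * ‖δ0‖ * exp (-lam * T) + s * CT := hdiv
        _ ≤ k * exp (-lam * T) * ‖δ0‖ + ε := by rw [mul_right_comm]; linarith
end

section
/- Consider the transverse system ė = F(e,x), ẋ = G(e,x). Assume Property ULMTE holds: there exist a symmetric positive definite matrix Q in ℝ^{n_e×n_e}, a C¹ function P : ℝ^{n_x} → ℝ^{n_e×n_e} taking symmetric values and strictly positive real numbers p̲, p̄ such that 𝔡_{G̃}P(x) + P(x)(∂F/∂e)(0,x) + (∂F/∂e)(0,x)ᵀP(x) ≤ −Q and p̲ I ≤ P(x) ≤ p̄ I for all x, where 𝔡_{G̃}P(x) := lim_{h→0} (P(X̃(x,h)) − P(x))/h and G̃(x) := G(0,x). Assume moreover that there exist positive real numbers η and c such that |∂P/∂x(x)| ≤ c for all x, and for all (e,x) with |e| ≤ η, |∂²F/∂e∂e(e,x)| ≤ c, |∂²F/∂x∂e(e,x)| ≤ c and |∂G/∂e(e,x)| ≤ c. Then Property TULES-NL holds: there exist strictly positive real numbers r, k, λ such that |E(e₀,x₀,t)| ≤ k |e₀| exp(−λ t) for all (e₀,x₀,t)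 in ℝ^{n_e}×ℝ^{n_x}×ℝ₊ with |e₀| ≤ r. -/
set_option maxHeartbeats 1000000
set_option synthInstance.maxHeartbeats 100000
open Real Set Filter
open scoped RealInnerProductSpace Topology

lemma gron_scalar {f f' : ℝ → ℝ} {d K : ℝ} {T : ℝ}
    (hf : ContinuousOn f (Icc 0 T))
    (hf' : ∀ s ∈ Ico 0 T, HasDerivWithinAt f (f' s) (Ici s) s)
    (ha : f 0 ≤ d) (bound : ∀ s ∈ Ico 0 T, f' s ≤ K * f s) :
    ∀ t ∈ Icc 0 T, f t ≤ d * Real.exp (K * t) := by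
  intro t ht
  have H := le_gronwallBound_of_liminf_deriv_right_le (ε := 0) (K := K) (δ := d) hf
    (fun s hs r hr => ((hf' s hs).liminf_right_slope_le hr).mono
      (fun z hz => by rwa [slope_def_field, div_eq_inv_mul] at hz))
    ha (fun s hs => by simpa using bound s hs) t ht
  simpa [gronwallBound_ε0] using H

lemma sa_inner_bound {n : ℕ} (A : Euc n →L[ℝ] Euc n)
    (hsym : ∀ u v : Euc n, ⟪A u, v⟫ = ⟪u, A v⟫) {pu : ℝ} (hpu : 0 ≤ pu)
    (h0 : ∀ v : Euc n, 0 ≤ ⟪A v, v⟫) (hub : ∀ v : Euc n, ⟪A v, v⟫ ≤ pu * ‖v‖ ^ 2)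
    (u v : Euc n) : ⟪A u, v⟫ ≤ 2 * pu * ‖u‖ * ‖v‖ := by
  have key : ∀ w z : Euc n, 2 * ⟪A w, z⟫ ≤ pu * (‖w‖ + ‖z‖) ^ 2 := by
    intro w z
    have e1 : ⟪A (w + z), w + z⟫ = ⟪A w, w⟫ + 2 * ⟪A w, z⟫ + ⟪A z, z⟫ := by
      have hzw : ⟪A z, w⟫ = ⟪A w, z⟫ := by
        rw [hsym z w, real_inner_comm]
      rw [map_add, inner_add_left, inner_add_right, inner_add_right, hzw]
      ring
    have e2 : ⟪A (w + z), w + z⟫ ≤ pu * (‖w‖ + ‖z‖) ^ 2 := by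
      calc ⟪A (w + z), w + z⟫ ≤ pu * ‖w + z‖ ^ 2 := hub _
        _ ≤ pu * (‖w‖ + ‖z‖) ^ 2 := by
            apply mul_le_mul_of_nonneg_left _ hpu
            have := norm_add_le w z
            nlinarith [norm_nonneg w, norm_nonneg z, norm_nonneg (w+z)]
    nlinarith [h0 w, h0 z]
  rcases eq_or_ne u 0 with hu | hu
  · simp [hu]
  rcases eq_or_ne v 0 with hv | hv
  · simp [hv]
  have hnu : (0:ℝ) < ‖u‖ := norm_pos_iff.mpr hu
  have hnv : (0:ℝ) < ‖v‖ := norm_pos_iff.mpr hv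
  have := key (‖v‖ • u) (‖u‖ • v)
  rw [map_smul, real_inner_smul_left, real_inner_smul_right, norm_smul, norm_smul] at this
  simp only [Real.norm_eq_abs, abs_of_pos hnu, abs_of_pos hnv] at this
  nlinarith [this, mul_pos hnu hnv]

lemma q_min {n : ℕ} (hn : n ≠ 0) (Q : Euc n →L[ℝ] Euc n)
    (hQpos : ∀ v : Euc n, v ≠ 0 → 0 < ⟪Q v, v⟫) :
    ∃ q > (0:ℝ), ∀ v : Euc n, q * ‖v‖ ^ 2 ≤ ⟪Q v, v⟫ := by
  haveI : Nontrivial (Euc n) := by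
    refine ⟨EuclideanSpace.single ⟨0, Nat.pos_of_ne_zero hn⟩ 1, 0, ?_⟩
    intro h
    have := congrArg (fun f => f ⟨0, Nat.pos_of_ne_zero hn⟩) h
    simpa using this
  have hcont : ContinuousOn (fun v : Euc n => ⟪Q v, v⟫) (Metric.sphere 0 1) :=
    (Q.continuous.inner continuous_id).continuousOn
  obtain ⟨v0, hv0s, hv0min⟩ := (isCompact_sphere (0 : Euc n) 1).exists_isMinOn
    (NormedSpace.sphere_nonempty.mpr zero_le_one) hcont
  have hv0n : ‖v0‖ = 1 := mem_sphere_zero_iff_norm.mp hv0s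
  have hv0ne : v0 ≠ 0 := by
    intro h; rw [h, norm_zero] at hv0n; exact one_ne_zero hv0n.symm
  refine ⟨⟪Q v0, v0⟫, hQpos v0 hv0ne, ?_⟩
  intro v
  rcases eq_or_ne v 0 with hv | hv
  · simp [hv]
  have hnv : (0:ℝ) < ‖v‖ := norm_pos_iff.mpr hv
  have hmem : (‖v‖⁻¹ • v) ∈ Metric.sphere (0:Euc n) 1 := by
    rw [mem_sphere_zero_iff_norm, norm_smul, Real.norm_eq_abs, abs_of_pos (inv_pos.mpr hnv),
      inv_mul_cancel₀ hnv.ne']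
  have h2 : ⟪Q v0, v0⟫ ≤ ⟪Q (‖v‖⁻¹ • v), (‖v‖⁻¹ • v)⟫ := hv0min hmem
  rw [map_smul, real_inner_smul_left, real_inner_smul_right] at h2
  have h3 : ‖v‖⁻¹ * (‖v‖⁻¹ * ⟪Q v, v⟫) = ⟪Q v, v⟫ / ‖v‖ ^ 2 := by
    rw [pow_two, div_eq_mul_inv, mul_inv]; ring
  rw [h3] at h2
  exact (le_div_iff₀ (by positivity)).mp h2

/-- **Fact 3 for transverse exponential stability** (Proposition 3):
If Property ULMTE holds (a C¹ symmetric-matrix-valued P with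
𝔡_{G̃}P(x) + P(x) ∂F/∂e(0,x) + ∂F/∂e(0,x)ᵀ P(x) ≤ −Q and p̲ I ≤ P(x) ≤ p̄ I),
and moreover |∂P/∂x| ≤ c everywhere and the second-derivative bounds
|∂²F/∂e∂e| ≤ c, |∂²F/∂x∂e| ≤ c, |∂G/∂e| ≤ c hold for |e| ≤ η, then Property
TULES-NL holds: there are r, k, λ > 0 with |E(e₀,x₀,t)| ≤ k |e₀| exp(−λ t)
whenever |e₀| ≤ r and t ≥ 0. -/
theorem fact3_transverse_local
    {ne nx : ℕ}
    (F : Euc ne × Euc nx → Euc ne) (G : Euc ne × Euc nx → Euc nx)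
    (hF : ContDiff ℝ 2 F) (hG : ContDiff ℝ 2 G)
    (hF0 : ∀ x, F (0, x) = 0)
    -- partial derivatives of F and G
    (dFe : Euc ne → Euc nx → Euc ne →L[ℝ] Euc ne)
    (hdFe : ∀ e x, HasFDerivAt (fun e' => F (e', x)) (dFe e x) e)
    (dGe : Euc ne → Euc nx → Euc ne →L[ℝ] Euc nx)
    (hdGe : ∀ e x, HasFDerivAt (fun e' => G (e', x)) (dGe e x) e)
    (dFee : Euc ne → Euc nx → Euc ne →L[ℝ] Euc ne →L[ℝ] Euc ne)
    (hdFee : ∀ e x, HasFDerivAt (fun e' => dFe e' x) (dFee e x) e)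
    (dFxe : Euc ne → Euc nx → Euc nx →L[ℝ] Euc ne →L[ℝ] Euc ne)
    (hdFxe : ∀ e x, HasFDerivAt (fun x' => dFe e x') (dFxe e x) x)
    -- forward complete flow of the nonlinear system
    (Efl : Euc ne → Euc nx → ℝ → Euc ne) (Xfl : Euc ne → Euc nx → ℝ → Euc nx)
    (hinit : ∀ e x, Efl e x 0 = e ∧ Xfl e x 0 = x)
    (hflow : ∀ e x t, 0 ≤ t →
      HasDerivWithinAt (Efl e x) (F (Efl e x t, Xfl e x t)) (Ici 0) t ∧
      HasDerivWithinAt (Xfl e x) (G (Efl e x t, Xfl e x t)) (Ici 0) t)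
    -- flow X̃ of ẋ = G̃(x) := G(0,x)
    (Xt : Euc nx → ℝ → Euc nx)
    (hXt0 : ∀ x, Xt x 0 = x)
    (hXt : ∀ x t, 0 ≤ t → HasDerivWithinAt (Xt x) (G (0, Xt x t)) (Ici 0) t)
    -- Property ULMTE
    (Q : Euc ne →L[ℝ] Euc ne) (hQsa : IsSelfAdjoint Q)
    (hQpos : ∀ v, v ≠ 0 → 0 < ⟪Q v, v⟫)
    (P : Euc nx → Euc ne →L[ℝ] Euc ne) (hP : ContDiff ℝ 1 P)
    (hPsa : ∀ x, IsSelfAdjoint (P x))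
    (dP : Euc nx → Euc ne →L[ℝ] Euc ne)
    (hdP : ∀ x, HasDerivWithinAt (fun h => P (Xt x h)) (dP x) (Ici 0) 0)
    (hULMTE : ∀ x v, ⟪(dP x + P x ∘L dFe 0 x +
        ContinuousLinearMap.adjoint (dFe 0 x) ∘L P x) v, v⟫ ≤ -⟪Q v, v⟫)
    (pl pu : ℝ) (hpl : 0 < pl) (hpu : 0 < pu)
    (hPbnd : ∀ x v, pl * ‖v‖ ^ 2 ≤ ⟪P x v, v⟫ ∧ ⟪P x v, v⟫ ≤ pu * ‖v‖ ^ 2)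
    -- bounds on ∂P/∂x and on the second derivatives
    (η c : ℝ) (hη : 0 < η) (hc : 0 < c)
    (hdPbnd : ∀ x, ‖fderiv ℝ P x‖ ≤ c)
    (hbnd2 : ∀ e x, ‖e‖ ≤ η → ‖dFee e x‖ ≤ c ∧ ‖dFxe e x‖ ≤ c ∧ ‖dGe e x‖ ≤ c) :
    -- Property TULES-NL
    ∃ r > (0:ℝ), ∃ k > (0:ℝ), ∃ lam > (0:ℝ),
      ∀ e x t, 0 ≤ t → ‖e‖ ≤ r → ‖Efl e x t‖ ≤ k * ‖e‖ * exp (-lam * t) := by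
  rcases Nat.eq_zero_or_pos ne with hne | hne
  · subst hne
    refine ⟨1, one_pos, 1, one_pos, 1, one_pos, ?_⟩
    intro e x t ht he
    have h0 : Efl e x t = 0 := Subsingleton.elim _ _
    rw [h0, norm_zero]
    positivity
  -- symmetric inner identity for P
  have hPsym : ∀ x (u v : Euc ne), ⟪P x u, v⟫ = ⟪u, P x v⟫ := fun x =>
    ContinuousLinearMap.isSelfAdjoint_iff_isSymmetric.mp (hPsa x)
  have hP0 : ∀ x (v : Euc ne), 0 ≤ ⟪P x v, v⟫ := fun x v =>
    le_trans (by positivity) (hPbnd x v).1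
  have hPub2 : ∀ x (u v : Euc ne), ⟪P x u, v⟫ ≤ 2 * pu * ‖u‖ * ‖v‖ := fun x =>
    sa_inner_bound (P x) (hPsym x) hpu.le (hP0 x) (fun v => (hPbnd x v).2)
  obtain ⟨q, hq, hqbnd⟩ := q_min (Nat.pos_iff_ne_zero.mp hne) Q hQpos
  -- MVT bounds
  have hGdiff : ∀ (x : Euc nx) (e : Euc ne), ‖e‖ ≤ η → ‖G (e, x) - G (0, x)‖ ≤ c * ‖e‖ := by
    intro x e he
    have := Convex.norm_image_sub_le_of_norm_hasFDerivWithin_le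
      (f := fun e' => G (e', x)) (f' := fun e' => dGe e' x) (s := Metric.closedBall 0 η)
      (fun e' _ => (hdGe e' x).hasFDerivWithinAt)
      (fun e' he' => (hbnd2 e' x (mem_closedBall_zero_iff.mp he')).2.2)
      (convex_closedBall _ _) (Metric.mem_closedBall_self hη.le)
      (mem_closedBall_zero_iff.mpr he)
    simpa only [sub_zero] using this
  have hdFediff : ∀ (x : Euc nx) (e' : Euc ne), ‖e'‖ ≤ η → ‖dFe e' x - dFe 0 x‖ ≤ c * ‖e'‖ := by
    intro x e' he'
    have := Convex.norm_image_sub_le_of_norm_hasFDerivWithin_le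
      (f := fun e'' => dFe e'' x) (f' := fun e'' => dFee e'' x) (s := Metric.closedBall 0 η)
      (fun e'' _ => (hdFee e'' x).hasFDerivWithinAt)
      (fun e'' he'' => (hbnd2 e'' x (mem_closedBall_zero_iff.mp he'')).1)
      (convex_closedBall _ _) (Metric.mem_closedBall_self hη.le)
      (mem_closedBall_zero_iff.mpr he')
    simpa only [sub_zero] using this
  have hFrem : ∀ (x : Euc nx) (e : Euc ne), ‖e‖ ≤ η →
      ‖F (e, x) - dFe 0 x e‖ ≤ c * ‖e‖ * ‖e‖ := by
    intro x e he
    have key := Convex.norm_image_sub_le_of_norm_hasFDerivWithin_le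
      (f := fun e' => F (e', x) - dFe 0 x e') (f' := fun e' => dFe e' x - dFe 0 x)
      (s := Metric.closedBall 0 ‖e‖)
      (fun e' _ => ((hdFe e' x).sub ((dFe 0 x).hasFDerivAt)).hasFDerivWithinAt)
      (fun e' he' => by
        have h1 := mem_closedBall_zero_iff.mp he'
        exact (hdFediff x e' (h1.trans he)).trans
          (mul_le_mul_of_nonneg_left h1 hc.le))
      (convex_closedBall _ _)
      (Metric.mem_closedBall_self (norm_nonneg e))
      (mem_closedBall_zero_iff.mpr le_rfl)
    simp only [hF0, map_zero, sub_zero] at key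
    exact key
  -- identification of dP
  have hdPeq : ∀ x : Euc nx, dP x = fderiv ℝ P x (G (0, x)) := by
    intro x
    have hx0 : HasDerivWithinAt (Xt x) (G (0, x)) (Ici 0) 0 := by
      have := hXt x 0 le_rfl; rwa [hXt0] at this
    have hfd : HasFDerivAt P (fderiv ℝ P x) (Xt x 0) := by
      rw [hXt0]; exact (hP.differentiable one_ne_zero x).hasFDerivAt
    have h2 : HasDerivWithinAt (fun h => P (Xt x h)) (fderiv ℝ P x (G (0, x))) (Ici 0) 0 :=
      hfd.comp_hasDerivWithinAt 0 hx0
    rw [← (hdP x).derivWithin (uniqueDiffOn_Ici 0 0 self_mem_Ici),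
      h2.derivWithin (uniqueDiffOn_Ici 0 0 self_mem_Ici)]
  -- constants
  set C := c ^ 2 + 4 * pu * c with hCdef
  have hC : 0 < C := by positivity
  set δ := min η (q / (2 * C)) with hδdef
  have hδ : 0 < δ := lt_min hη (by positivity)
  have hδη : δ ≤ η := min_le_left _ _
  have hδq : C * δ ≤ q / 2 := by
    have h1 : δ ≤ q / (2 * C) := min_le_right _ _
    calc C * δ ≤ C * (q / (2 * C)) := mul_le_mul_of_nonneg_left h1 hC.le
      _ = q / 2 := by field_simp
  set μ := q / (2 * pu) with hμdef
  have hμ : 0 < μ := by positivity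
  set lam := q / (4 * pu) with hlamdef
  have hlam : 0 < lam := by positivity
  have hμlam : μ = 2 * lam := by rw [hμdef, hlamdef]; ring
  set r := δ * Real.sqrt (pl / pu) / 2 with hrdef
  have hsqrt : 0 < Real.sqrt (pl / pu) := Real.sqrt_pos.mpr (by positivity)
  have hrpos : 0 < r := by positivity
  set k := Real.sqrt (pu / pl) with hkdef
  have hk : 0 < k := Real.sqrt_pos.mpr (by positivity)
  refine ⟨r, hrpos, k, hk, lam, hlam, ?_⟩
  intro e x t ht her
  set E_ := Efl e x with hE_def
  set X_ := Xfl e x with hX_def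
  have hE0 : E_ 0 = e := (hinit e x).1
  have hX0 : X_ 0 = x := (hinit e x).2
  have hED : ∀ s, 0 ≤ s → HasDerivWithinAt E_ (F (E_ s, X_ s)) (Ici 0) s :=
    fun s hs => (hflow e x s hs).1
  have hXD : ∀ s, 0 ≤ s → HasDerivWithinAt X_ (G (E_ s, X_ s)) (Ici 0) s :=
    fun s hs => (hflow e x s hs).2
  have contE : ContinuousOn E_ (Ici 0) := fun s hs => (hED s hs).continuousWithinAt
  have contX : ContinuousOn X_ (Ici 0) := fun s hs => (hXD s hs).continuousWithinAt
  clear_value E_ X_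
  clear hE_def hX_def
  set V : ℝ → ℝ := fun s => ⟪P (X_ s) (E_ s), E_ s⟫ with hVdef
  set Vd : ℝ → ℝ := fun s =>
    ⟪(P (X_ s)) (E_ s), F (E_ s, X_ s)⟫ +
      ⟪(fderiv ℝ P (X_ s)) (G (E_ s, X_ s)) (E_ s) + (P (X_ s)) (F (E_ s, X_ s)), E_ s⟫
    with hVddef
  have hVat : ∀ s, V s = ⟪P (X_ s) (E_ s), E_ s⟫ := fun s => rfl
  have hVdat : ∀ s, Vd s = ⟪(P (X_ s)) (E_ s), F (E_ s, X_ s)⟫ +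
      ⟪(fderiv ℝ P (X_ s)) (G (E_ s, X_ s)) (E_ s) + (P (X_ s)) (F (E_ s, X_ s)), E_ s⟫ :=
    fun s => rfl
  have contV : ContinuousOn V (Ici 0) :=
    ContinuousOn.inner ((hP.continuous.comp_continuousOn contX).clm_apply contE) contE
  have hVderiv : ∀ s, 0 ≤ s → HasDerivWithinAt V (Vd s) (Ici s) s := by
    intro s hs
    have hE := (hED s hs).mono (Ici_subset_Ici.mpr hs)
    have hX := (hXD s hs).mono (Ici_subset_Ici.mpr hs)
    have hPX : HasDerivWithinAt (fun u => P (X_ u))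
        ((fderiv ℝ P (X_ s)) (G (E_ s, X_ s))) (Ici s) s :=
      ((hP.differentiable one_ne_zero (X_ s)).hasFDerivAt).comp_hasDerivWithinAt s hX
    exact HasDerivWithinAt.inner ℝ (hPX.clm_apply hE) hE
  clear_value V Vd
  clear hVdef hVddef
  have Vlb : ∀ s, pl * ‖E_ s‖ ^ 2 ≤ V s := by
    intro s; rw [hVat s]; exact (hPbnd (X_ s) (E_ s)).1
  have Vub : ∀ s, V s ≤ pu * ‖E_ s‖ ^ 2 := by
    intro s; rw [hVat s]; exact (hPbnd (X_ s) (E_ s)).2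
  -- the key differential inequality
  have hVdbnd : ∀ s, 0 ≤ s → ‖E_ s‖ ≤ δ → Vd s ≤ -μ * V s := by
    intro s hs hesδ
    have haη : ‖E_ s‖ ≤ η := hesδ.trans hδη
    set es := E_ s with hesdef
    set xs := X_ s with hxsdef
    set a := ‖es‖ with ha
    have ha0 : 0 ≤ a := norm_nonneg _
    set R := F (es, xs) - dFe 0 xs es with hRdef
    have hRn : ‖R‖ ≤ c * a * a := hFrem xs es haη
    have hFsplit : F (es, xs) = dFe 0 xs es + R := by rw [hRdef]; abel
    set DG := G (es, xs) - G (0, xs) with hDGdef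
    have hDGn : ‖DG‖ ≤ c * a := hGdiff xs es haη
    have hGsplit : G (es, xs) = G (0, xs) + DG := by rw [hDGdef]; abel
    clear_value R DG
    clear hRdef hDGdef
    set t1 := ⟪dP xs es, es⟫ with ht1
    set t2 := ⟪P xs (dFe 0 xs es), es⟫ with ht2
    set t3 := ⟪(fderiv ℝ P xs) DG es, es⟫ with ht3
    set t4 := ⟪P xs R, es⟫ with ht4
    have hVdeq : Vd s = t1 + 2 * t2 + t3 + 2 * t4 := by
      have h1 : ⟪P xs es, F (es, xs)⟫ = ⟪P xs (F (es, xs)), es⟫ := by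
        rw [hPsym xs es (F (es, xs))]; exact real_inner_comm _ _
      have h2 : Vd s = ⟪P xs (F (es, xs)), es⟫ +
          (⟪(fderiv ℝ P xs) (G (es, xs)) es, es⟫ + ⟪P xs (F (es, xs)), es⟫) := by
        rw [hVdat s, h1, inner_add_left]
      rw [h2, hFsplit, hGsplit, map_add (P xs), map_add (fderiv ℝ P xs),
        ContinuousLinearMap.add_apply, inner_add_left, inner_add_left, ← hdPeq xs]
      rw [← ht1, ← ht2, ← ht3, ← ht4]
      ring
    have hULeq : ⟪(dP xs + P xs ∘L dFe 0 xs +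
        ContinuousLinearMap.adjoint (dFe 0 xs) ∘L P xs) es, es⟫ = t1 + 2 * t2 := by
      rw [ContinuousLinearMap.add_apply, ContinuousLinearMap.add_apply,
        inner_add_left, inner_add_left, ContinuousLinearMap.comp_apply,
        ContinuousLinearMap.comp_apply, ContinuousLinearMap.adjoint_inner_left]
      have h3 : ⟪P xs es, dFe 0 xs es⟫ = t2 := by
        rw [hPsym xs es (dFe 0 xs es)]; rw [ht2]; exact real_inner_comm _ _
      rw [h3, ← ht1, ← ht2]; ring
    have hb1 : t1 + 2 * t2 ≤ -(q * a ^ 2) := by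
      have h4 := hULMTE xs es
      rw [hULeq] at h4
      have h5 := hqbnd es
      linarith
    have hb3 : t3 ≤ c * (c * a) * a * a := by
      rw [ht3]
      calc ⟪(fderiv ℝ P xs) DG es, es⟫ ≤ ‖(fderiv ℝ P xs) DG es‖ * a :=
            real_inner_le_norm _ _
        _ ≤ (‖(fderiv ℝ P xs) DG‖ * a) * a := by
            gcongr; exact (fderiv ℝ P xs DG).le_opNorm es
        _ ≤ ((c * (c * a)) * a) * a := by
            gcongr
            calc ‖(fderiv ℝ P xs) DG‖ ≤ ‖fderiv ℝ P xs‖ * ‖DG‖ :=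
                  (fderiv ℝ P xs).le_opNorm DG
              _ ≤ c * (c * a) := mul_le_mul (hdPbnd xs) hDGn (norm_nonneg _) hc.le
        _ = c * (c * a) * a * a := by ring
    have hb4 : t4 ≤ 2 * pu * (c * a * a) * a := by
      rw [ht4]
      calc ⟪P xs R, es⟫ ≤ 2 * pu * ‖R‖ * a := hPub2 xs R es
        _ ≤ 2 * pu * (c * a * a) * a := by gcongr
    clear_value t1 t2 t3 t4 a es xs
    have hfin : Vd s ≤ -(q * a ^ 2) + C * (a * a ^ 2) := by
      rw [hVdeq, hCdef]
      nlinarith [hb1, hb3, hb4]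
    have h5 : C * (a * a ^ 2) ≤ q / 2 * a ^ 2 := by
      have hCa : C * a ≤ q / 2 := le_trans (mul_le_mul_of_nonneg_left hesδ hC.le) hδq
      nlinarith [sq_nonneg a, ha0]
    have h6 : μ * V s ≤ q / 2 * a ^ 2 := by
      have hVub' : V s ≤ pu * a ^ 2 := by rw [ha, hesdef]; exact Vub s
      have h7 : μ * V s ≤ μ * (pu * a ^ 2) := mul_le_mul_of_nonneg_left hVub' hμ.le
      have h8 : μ * pu = q / 2 := by rw [hμdef]; field_simp
      nlinarith [h7, h8]
    linarith
  -- Grönwall on intervals where the solution stays small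
  have key : ∀ T, 0 ≤ T → (∀ s ∈ Ico (0:ℝ) T, ‖E_ s‖ ≤ δ) →
      ∀ u ∈ Icc (0:ℝ) T, V u ≤ pu * ‖e‖ ^ 2 * Real.exp (-μ * u) := by
    intro T hT hsmall u hu
    have hstart : V 0 ≤ pu * ‖e‖ ^ 2 := by
      rw [hVat 0, hE0, hX0]; exact (hPbnd x e).2
    have := gron_scalar (f := V) (f' := Vd) (d := pu * ‖e‖ ^ 2) (K := -μ) (T := T)
      (contV.mono (fun u hu => hu.1))
      (fun s hs => hVderiv s hs.1) hstart
      (fun s hs => hVdbnd s hs.1 (hsmall s hs)) u hu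
    exact this
  -- the solution stays in the small region forever
  have claim : ∀ s, 0 ≤ s → ‖E_ s‖ ≤ δ := by
    by_contra hcon
    push_neg at hcon
    obtain ⟨s0, hs0, hs0δ⟩ := hcon
    set Sb : Set ℝ := {s | 0 ≤ s ∧ δ < ‖E_ s‖} with hSbdef
    have hSbne : Sb.Nonempty := ⟨s0, hs0, hs0δ⟩
    have hSbbdd : BddBelow Sb := ⟨0, fun s hs => hs.1⟩
    set T := sInf Sb with hTdef
    have hTcl : T ∈ closure Sb := csInf_mem_closure hSbne hSbbdd
    have hclosed : IsClosed ((Ici (0:ℝ)) ∩ (fun s => ‖E_ s‖) ⁻¹' (Ici δ)) :=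
      (contE.norm).preimage_isClosed_of_isClosed isClosed_Ici isClosed_Ici
    have hTmem : T ∈ (Ici (0:ℝ)) ∩ (fun s => ‖E_ s‖) ⁻¹' (Ici δ) := by
      refine closure_minimal ?_ hclosed hTcl
      intro s hs; exact ⟨hs.1, le_of_lt hs.2⟩
    obtain ⟨hT0, hTδ⟩ := hTmem
    have hsmall : ∀ s ∈ Ico (0:ℝ) T, ‖E_ s‖ ≤ δ := by
      intro s hs
      by_contra hgt
      push_neg at hgt
      exact absurd (csInf_le hSbbdd ⟨hs.1, hgt⟩) (not_le.mpr hs.2)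
    have hVT := key T hT0 hsmall T (right_mem_Icc.mpr hT0)
    have hexp1 : Real.exp (-μ * T) ≤ 1 := by
      have hT1 : -μ * T ≤ 0 := by nlinarith [mul_nonneg hμ.le hT0]
      calc Real.exp (-μ * T) ≤ Real.exp 0 := Real.exp_le_exp.mpr hT1
        _ = 1 := Real.exp_zero
    have he2 : ‖e‖ ^ 2 ≤ r ^ 2 := pow_le_pow_left₀ (norm_nonneg e) her 2
    have h1 : V T ≤ pu * r ^ 2 := by
      have hbase : 0 ≤ pu * ‖e‖ ^ 2 := by positivity
      have h0 : pu * ‖e‖ ^ 2 * Real.exp (-μ * T) ≤ pu * ‖e‖ ^ 2 * 1 :=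
        mul_le_mul_of_nonneg_left hexp1 hbase
      have h9 : pu * ‖e‖ ^ 2 ≤ pu * r ^ 2 := mul_le_mul_of_nonneg_left he2 hpu.le
      rw [mul_one] at h0
      linarith [hVT]
    have h2 : pu * r ^ 2 = pl * δ ^ 2 / 4 := by
      have hsq : Real.sqrt (pl / pu) ^ 2 = pl / pu := Real.sq_sqrt (by positivity)
      rw [hrdef, div_pow, mul_pow, hsq]
      field_simp
      ring
    have h3 : pl * δ ^ 2 ≤ V T := by
      have h4 : pl * δ ^ 2 ≤ pl * ‖E_ T‖ ^ 2 :=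
        mul_le_mul_of_nonneg_left (pow_le_pow_left₀ hδ.le hTδ 2) hpl.le
      linarith [Vlb T]
    have hpos : 0 < pl * δ ^ 2 := by positivity
    linarith [h1, h2, h3]
  -- conclude
  have hVt := key t ht (fun s hs => claim s hs.1) t (right_mem_Icc.mpr ht)
  have hrhs : 0 ≤ k * ‖e‖ * Real.exp (-lam * t) := by positivity
  have hEt2 : ‖E_ t‖ ^ 2 ≤ (k * ‖e‖ * Real.exp (-lam * t)) ^ 2 := by
    have hk2 : k ^ 2 = pu / pl := Real.sq_sqrt (by positivity)
    have hexp2 : Real.exp (-lam * t) ^ 2 = Real.exp (-μ * t) := by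
      rw [sq, ← Real.exp_add]; congr 1; rw [hμlam]; ring
    rw [mul_pow, mul_pow, hk2, hexp2, div_mul_eq_mul_div, div_mul_eq_mul_div,
      le_div_iff₀ hpl]
    have h1 := (Vlb t).trans hVt
    linarith [h1]
  calc ‖E_ t‖ = Real.sqrt (‖E_ t‖ ^ 2) := (Real.sqrt_sq (norm_nonneg _)).symm
    _ ≤ Real.sqrt ((k * ‖e‖ * Real.exp (-lam * t)) ^ 2) := Real.sqrt_le_sqrt hEt2
    _ = k * ‖e‖ * Real.exp (-lam * t) := Real.sqrt_sq hrhs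
end

section
/- Assume the origin of the system ė = F(e) is locally exponentially stable and globally attractive. Then there exist a positive real number λ and a continuous strictly increasing function k : ℝ₊ → ℝ₊ such that |E(e,t)| ≤ k(|e|) exp(−λ t)|e| for all e in ℝ^{n} and all t ≥ 0. -/
open Real Set Filter
open scoped RealInnerProductSpace Topology

/-- If the origin of ė = F(e) (F of class C¹, F(0) = 0, forward complete flow E)
is locally exponentially stable and globally attractive, then there exist λ > 0
and a continuous strictly increasing function k : ℝ₊ → ℝ₊ such that
|E(e,t)| ≤ k(|e|) exp(−λ t) |e| for all e and t ≥ 0. -/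
theorem les_ga_exp_estimate
    {n : ℕ}
    (F : Euc n → Euc n) (hF : ContDiff ℝ 1 F) (hF0 : F 0 = 0)
    (Efl : Euc n → ℝ → Euc n)
    (hinit : ∀ e, Efl e 0 = e)
    (hflow : ∀ e t, 0 ≤ t → HasDerivWithinAt (Efl e) (F (Efl e t)) (Ici 0) t)
    -- local exponential stability
    (k1 lam1 r1 : ℝ) (hk1 : 0 < k1) (hlam1 : 0 < lam1) (hr1 : 0 < r1)
    (hLES : ∀ e t, 0 ≤ t → ‖e‖ ≤ r1 → ‖Efl e t‖ ≤ k1 * exp (-lam1 * t) * ‖e‖)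
    -- global attractivity
    (hGA : ∀ e, Tendsto (fun t => ‖Efl e t‖) atTop (𝓝 0)) :
    ∃ lam > (0:ℝ), ∃ k : ℝ → ℝ,
      ContinuousOn k (Ici 0) ∧ StrictMonoOn k (Ici 0) ∧ (∀ s, 0 ≤ s → 0 ≤ k s) ∧
      ∀ e t, 0 ≤ t → ‖Efl e t‖ ≤ k ‖e‖ * exp (-lam * t) * ‖e‖ := by
  -- continuity of each trajectory
  have hcontT : ∀ e, ContinuousOn (Efl e) (Ici 0) :=
    fun e t ht => (hflow e t ht).continuousWithinAt
  -- Lipschitz constants on closed balls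
  have hLip : ∀ R : ℝ, 0 ≤ R → ∃ K : NNReal, LipschitzOnWith K F (Metric.closedBall 0 R) := by
    intro R hR
    have hne : (Metric.closedBall (0:Euc n) R).Nonempty := ⟨0, by simp [hR]⟩
    have hc : ContinuousOn (fun x => ‖fderiv ℝ F x‖) (Metric.closedBall 0 R) :=
      ((hF.continuous_fderiv one_ne_zero).norm).continuousOn
    obtain ⟨z, _, hz⟩ :=
      (isCompact_closedBall (0:Euc n) R).exists_isMaxOn hne hc
    set C := ‖fderiv ℝ F z‖ with hC
    refine ⟨C.toNNReal, LipschitzOnWith.of_dist_le_mul ?_⟩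
    intro x hx y hy
    have := (convex_closedBall (0:Euc n) R).norm_image_sub_le_of_norm_fderiv_le
      (fun u _ => (hF.differentiable one_ne_zero).differentiableAt)
      (fun u hu => hz hu) hy hx
    calc dist (F x) (F y) = ‖F x - F y‖ := dist_eq_norm _ _
      _ ≤ C * ‖x - y‖ := this
      _ ≤ (C.toNNReal : ℝ) * ‖x - y‖ := by
          apply mul_le_mul_of_nonneg_right (Real.le_coe_toNNReal C) (norm_nonneg _)
      _ = (C.toNNReal : ℝ) * dist x y := by rw [dist_eq_norm]
  -- every trajectory is bounded
  have hbdd : ∀ e, ∃ M, 0 ≤ M ∧ ∀ t, 0 ≤ t → ‖Efl e t‖ ≤ M := by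
    intro e
    obtain ⟨T, hT⟩ := (Filter.eventually_atTop).1
      ((hGA e).eventually (eventually_le_nhds (by norm_num : (0:ℝ) < 1)))
    set T' := max T 0 with hT'
    have hne : (Icc (0:ℝ) T').Nonempty := ⟨0, le_rfl, le_max_right _ _⟩
    have hc : ContinuousOn (fun t => ‖Efl e t‖) (Icc 0 T') :=
      ((hcontT e).mono Icc_subset_Ici_self).norm
    obtain ⟨z, _, hz⟩ := (isCompact_Icc).exists_isMaxOn hne hc
    refine ⟨max ‖Efl e z‖ 1, le_trans zero_le_one (le_max_right _ _), ?_⟩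
    intro t ht
    rcases le_or_gt t T' with h | h
    · exact le_max_of_le_left (hz ⟨ht, h⟩)
    · exact le_max_of_le_right (hT t ((le_max_left _ _).trans h.le))
  -- Gronwall comparison of two trajectories staying in a common ball
  have hGron : ∀ (R : ℝ) (K : NNReal), LipschitzOnWith K F (Metric.closedBall 0 R) →
      ∀ (x y : Euc n) (T : ℝ), 0 ≤ T →
      (∀ t ∈ Icc (0:ℝ) T, Efl x t ∈ Metric.closedBall (0:Euc n) R) →
      (∀ t ∈ Icc (0:ℝ) T, Efl y t ∈ Metric.closedBall (0:Euc n) R) →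
      ∀ t ∈ Icc (0:ℝ) T, dist (Efl x t) (Efl y t) ≤ dist x y * exp (K * t) := by
    intro R K hK x y T hT hx hy t ht
    have h := dist_le_of_trajectories_ODE_of_mem (v := fun _ u => F u)
      (s := fun _ => Metric.closedBall (0:Euc n) R) (fun _ _ => hK)
      ((hcontT x).mono Icc_subset_Ici_self)
      (fun u hu => (hflow x u hu.1).mono (Ici_subset_Ici.2 hu.1))
      (fun u hu => hx u ⟨hu.1, hu.2.le⟩)
      ((hcontT y).mono Icc_subset_Ici_self)
      (fun u hu => (hflow y u hu.1).mono (Ici_subset_Ici.2 hu.1))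
      (fun u hu => hy u ⟨hu.1, hu.2.le⟩)
      (by rw [hinit, hinit]) t ht
    simpa using h
  -- semigroup property
  have hsemi : ∀ (e : Euc n) (T t : ℝ), 0 ≤ T → 0 ≤ t →
      Efl e (T + t) = Efl (Efl e T) t := by
    intro e T t hT ht
    obtain ⟨M1, hM1, hM1b⟩ := hbdd e
    obtain ⟨M2, hM2, hM2b⟩ := hbdd (Efl e T)
    set R := max M1 M2 with hR
    obtain ⟨K, hK⟩ := hLip R (le_trans hM1 (le_max_left _ _))
    have hf' : ∀ u ∈ Ico (0:ℝ) t,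
        HasDerivWithinAt (fun s => Efl e (T + s)) (F (Efl e (T + u))) (Ici u) u := by
      intro u hu
      have h1 : HasDerivWithinAt (Efl e) (F (Efl e (T + u))) (Ici (T + u)) (T + u) :=
        (hflow e (T + u) (by linarith [hu.1])).mono
          (Ici_subset_Ici.2 (by linarith [hu.1]))
      have h2 : HasDerivWithinAt (fun s : ℝ => T + s) 1 (Ici u) u :=
        ((hasDerivAt_id u).const_add T).hasDerivWithinAt
      have h3 := HasDerivWithinAt.scomp u h1 h2
        (fun s hs => by simpa using add_le_add_left (mem_Ici.1 hs) T)
      simpa [Function.comp_def] using h3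
    have hcont1 : ContinuousOn (fun s => Efl e (T + s)) (Icc 0 t) := by
      apply (hcontT e).comp (by fun_prop : ContinuousOn (fun s : ℝ => T + s) (Icc 0 t))
      intro s hs
      simp only [mem_Icc] at hs
      simp only [mem_Ici]
      linarith
    have key := ODE_solution_unique_of_mem_Icc_right (v := fun _ u => F u)
      (s := fun _ => Metric.closedBall (0:Euc n) R) (fun _ _ => hK)
      (f := fun s => Efl e (T + s)) (g := Efl (Efl e T)) (a := 0) (b := t)
      hcont1
      hf'
      (fun u hu => by
        simp only [Metric.mem_closedBall, dist_zero_right]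
        exact (hM1b (T + u) (by linarith [hu.1])).trans (le_max_left _ _))
      ((hcontT (Efl e T)).mono Icc_subset_Ici_self)
      (fun u hu => (hflow (Efl e T) u hu.1).mono (Ici_subset_Ici.2 hu.1))
      (fun u hu => by
        simp only [Metric.mem_closedBall, dist_zero_right]
        exact (hM2b u hu.1).trans (le_max_right _ _))
      (by simp [hinit])
    exact key ⟨ht, le_rfl⟩
  -- local uniform bound and continuous dependence up to a finite time
  have hLoc : ∀ (e₀ : Euc n) (T : ℝ), 0 ≤ T → ∃ δ > (0:ℝ), ∃ M, 0 ≤ M ∧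
      ∀ e, dist e e₀ < δ → ∀ t ∈ Icc (0:ℝ) T,
        ‖Efl e t‖ ≤ M ∧ dist (Efl e t) (Efl e₀ t) ≤ r1 / 2 := by
    intro e₀ T hT
    obtain ⟨M₀, hM₀, hM₀b⟩ := hbdd e₀
    set R := M₀ + 1 with hRdef
    obtain ⟨K, hK⟩ := hLip R (by positivity)
    set ε := min (1/2) (r1/2) with hεdef
    have hε0 : 0 < ε := lt_min (by norm_num) (by linarith)
    have hε1 : ε ≤ 1/2 := min_le_left _ _
    set δ := ε * exp (-(K * T)) with hδdef
    have hδ0 : 0 < δ := by positivity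
    have hδε : δ * exp (K * T) ≤ ε := by
      rw [hδdef, mul_assoc, ← Real.exp_add, neg_add_cancel, Real.exp_zero, mul_one]
    have hδ1 : δ ≤ ε := by
      have : exp (-(K * T)) ≤ 1 := by
        rw [Real.exp_le_one_iff]
        have : (0:ℝ) ≤ (K:ℝ) * T := mul_nonneg K.2 hT
        linarith
      calc δ = ε * exp (-(K * T)) := rfl
        _ ≤ ε * 1 := by nlinarith
        _ = ε := mul_one _
    refine ⟨δ, hδ0, R, by positivity, ?_⟩
    intro e he
    -- trajectory of e₀ stays in ball R
    have he₀ball : ∀ t ∈ Icc (0:ℝ) T, Efl e₀ t ∈ Metric.closedBall (0:Euc n) R := by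
      intro t htT
      simp only [Metric.mem_closedBall, dist_zero_right]
      have := hM₀b t htT.1
      linarith
    -- Gronwall estimate valid whenever e's trajectory stays in the ball up to time t'
    have hgron : ∀ t' ∈ Icc (0:ℝ) T,
        (∀ s ∈ Icc (0:ℝ) t', Efl e s ∈ Metric.closedBall (0:Euc n) R) →
        ∀ t ∈ Icc (0:ℝ) t', dist (Efl e t) (Efl e₀ t) ≤ ε := by
      intro t' ht' hball t ht
      have h := hGron R K hK e e₀ t' ht'.1 hball
        (fun s hs => he₀ball s ⟨hs.1, hs.2.trans ht'.2⟩) t ht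
      have hexp : exp ((K:ℝ) * t) ≤ exp ((K:ℝ) * T) := by
        apply Real.exp_le_exp.2
        exact mul_le_mul_of_nonneg_left (ht.2.trans ht'.2) K.2
      calc dist (Efl e t) (Efl e₀ t) ≤ dist e e₀ * exp ((K:ℝ) * t) := h
        _ ≤ δ * exp ((K:ℝ) * T) := by
            apply mul_le_mul he.le hexp (Real.exp_nonneg _) hδ0.le
        _ ≤ ε := hδε
    -- the invariant set of times
    set A := {t | t ∈ Icc (0:ℝ) T ∧ ∀ s ∈ Icc (0:ℝ) t, ‖Efl e s‖ ≤ R} with hAdef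
    have hnormA : ∀ t ∈ A, ∀ s ∈ Icc (0:ℝ) t, ‖Efl e s‖ ≤ M₀ + ε := by
      intro t htA s hs
      have hd := hgron t htA.1 (fun u hu => by
        simp only [Metric.mem_closedBall, dist_zero_right]; exact htA.2 u hu) s hs
      calc ‖Efl e s‖ ≤ ‖Efl e₀ s‖ + dist (Efl e s) (Efl e₀ s) := by
            rw [dist_eq_norm]
            have := norm_sub_norm_le (Efl e s) (Efl e₀ s)
            linarith [abs_norm_sub_norm_le (Efl e s) (Efl e₀ s),
              norm_sub_rev (Efl e s) (Efl e₀ s)]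
        _ ≤ M₀ + ε := add_le_add (hM₀b s hs.1) hd
    have hA0 : (0:ℝ) ∈ A := by
      refine ⟨⟨le_rfl, hT⟩, ?_⟩
      intro s hs
      have hs0 : s = 0 := le_antisymm hs.2 hs.1
      subst hs0
      rw [hinit]
      have : ‖e‖ ≤ ‖e₀‖ + dist e e₀ := by
        rw [dist_eq_norm]
        linarith [norm_sub_norm_le e e₀]
      have h2 := hM₀b 0 le_rfl
      rw [hinit] at h2
      have : ‖e‖ ≤ M₀ + δ := by linarith
      have : δ ≤ 1 := by linarith
      linarith
    have hAne : A.Nonempty := ⟨0, hA0⟩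
    have hAbdd : BddAbove A := ⟨T, fun t htA => htA.1.2⟩
    set τ := sSup A with hτdef
    have hτmem : τ ∈ Icc (0:ℝ) T :=
      ⟨le_csSup hAbdd hA0, csSup_le hAne (fun t htA => htA.1.2)⟩
    have hτlt : ∀ s, 0 ≤ s → s < τ → ‖Efl e s‖ ≤ R := by
      intro s hs0 hsτ
      obtain ⟨t, htA, hst⟩ := exists_lt_of_lt_csSup hAne hsτ
      exact htA.2 s ⟨hs0, hst.le⟩
    have hτA : τ ∈ A := by
      refine ⟨hτmem, ?_⟩
      intro s hs
      rcases lt_or_eq_of_le hs.2 with h | h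
      · exact hτlt s hs.1 h
      · subst h
        rcases eq_or_lt_of_le hτmem.1 with h0 | h0
        · rw [← h0, hinit]
          have h2 := hM₀b 0 le_rfl
          rw [hinit] at h2
          have h3 : ‖e‖ ≤ ‖e₀‖ + dist e e₀ := by
            rw [dist_eq_norm]; linarith [norm_sub_norm_le e e₀]
          have : δ ≤ 1 := by linarith
          linarith
        · -- τ > 0 : limit from the left
          have hne2 : (𝓝[Ioo (0:ℝ) τ] τ).NeBot := by
            rw [← mem_closure_iff_nhdsWithin_neBot, closure_Ioo (ne_of_lt h0)]
            exact ⟨h0.le, le_rfl⟩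
          have htend : Tendsto (fun u => ‖Efl e u‖) (𝓝[Ioo (0:ℝ) τ] τ) (𝓝 ‖Efl e τ‖) :=
            (((hcontT e) τ h0.le).mono (fun u hu => hu.1.le)).norm
          refine le_of_tendsto htend ?_
          exact eventually_mem_nhdsWithin.mono (fun u hu => hτlt u hu.1.le hu.2)
    have hτT : τ = T := by
      by_contra hne
      have hltT : τ < T := lt_of_le_of_ne hτmem.2 hne
      have hsm := hnormA τ hτA τ ⟨hτmem.1, le_rfl⟩
      have hstrict : ‖Efl e τ‖ < R := by
        rw [hRdef]; linarith
      have hmem : (fun u => ‖Efl e u‖) ⁻¹' (Iio R) ∈ 𝓝[Ici τ] τ := by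
        have hc : ContinuousWithinAt (fun u => ‖Efl e u‖) (Ici τ) τ :=
          (((hcontT e) τ hτmem.1).mono (Ici_subset_Ici.2 hτmem.1)).norm
        exact hc (Iio_mem_nhds hstrict)
      obtain ⟨b, hb, hIcc⟩ := mem_nhdsGE_iff_exists_Icc_subset.1 hmem
      set b' := min b T with hb'def
      have hτb' : τ < b' := lt_min hb hltT
      have hb'A : b' ∈ A := by
        refine ⟨⟨hτmem.1.trans hτb'.le, min_le_right _ _⟩, ?_⟩
        intro u hu
        rcases le_or_gt u τ with h | h
        · exact hτA.2 u ⟨hu.1, h⟩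
        · exact (hIcc ⟨h.le, hu.2.trans (min_le_left _ _)⟩).le
      exact absurd (le_csSup hAbdd hb'A) (not_le.2 hτb')
    have hTA : T ∈ A := hτT ▸ hτA
    have hball : ∀ s ∈ Icc (0:ℝ) T, Efl e s ∈ Metric.closedBall (0:Euc n) R := by
      intro s hs
      simp only [Metric.mem_closedBall, dist_zero_right]
      exact hTA.2 s hs
    intro t ht
    refine ⟨hTA.2 t ht, ?_⟩
    exact (hgron T ⟨hT, le_rfl⟩ (fun s hs => hball s hs) t ht).trans (min_le_right _ _)
  -- uniform exponential bound on every ball (via compactness)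
  have hCover : ∀ R : ℝ, 0 ≤ R → ∃ C, 0 ≤ C ∧
      ∀ e, ‖e‖ ≤ R → ∀ t, 0 ≤ t → ‖Efl e t‖ ≤ C * exp (-lam1 * t) := by
    intro R hR
    have hpt : ∀ e₀ : Euc n, ∃ δ > (0:ℝ), ∃ C, 0 ≤ C ∧
        ∀ e, dist e e₀ < δ → ∀ t, 0 ≤ t → ‖Efl e t‖ ≤ C * exp (-lam1 * t) := by
      intro e₀
      obtain ⟨T0, hT0⟩ := (Filter.eventually_atTop).1
        ((hGA e₀).eventually (eventually_le_nhds (half_pos hr1)))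
      set T := max T0 0 with hTdef
      have hT : 0 ≤ T := le_max_right _ _
      have hT0' : ‖Efl e₀ T‖ ≤ r1 / 2 := hT0 T (le_max_left _ _)
      obtain ⟨δ, hδ0, M, hM0, hloc⟩ := hLoc e₀ T hT
      refine ⟨δ, hδ0, max M (k1 * r1) * exp (lam1 * T), by positivity, ?_⟩
      intro e he t ht
      have hEr1 : ‖Efl e T‖ ≤ r1 := by
        have h1 := (hloc e he T ⟨hT, le_rfl⟩).2
        have h2 : ‖Efl e T‖ - ‖Efl e₀ T‖ ≤ ‖Efl e T - Efl e₀ T‖ :=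
          norm_sub_norm_le _ _
        rw [← dist_eq_norm] at h2
        linarith
      have hmax0 : 0 ≤ max M (k1 * r1) := le_trans hM0 (le_max_left _ _)
      rcases le_or_gt t T with h | h
      · have hM := (hloc e he t ⟨ht, h⟩).1
        have hexp : 1 ≤ exp (lam1 * T) * exp (-lam1 * t) := by
          rw [← Real.exp_add, ← Real.exp_zero]
          apply Real.exp_le_exp.2
          nlinarith
        calc ‖Efl e t‖ ≤ M := hM
          _ = M * 1 := (mul_one _).symm
          _ ≤ max M (k1 * r1) * (exp (lam1 * T) * exp (-lam1 * t)) :=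
              mul_le_mul (le_max_left _ _) hexp zero_le_one hmax0
          _ = max M (k1 * r1) * exp (lam1 * T) * exp (-lam1 * t) := by ring
      · have hts : Efl e t = Efl (Efl e T) (t - T) := by
          have := hsemi e T (t - T) hT (by linarith)
          rwa [add_sub_cancel] at this
        rw [hts]
        have hles := hLES (Efl e T) (t - T) (by linarith) hEr1
        calc ‖Efl (Efl e T) (t - T)‖ ≤ k1 * exp (-lam1 * (t - T)) * ‖Efl e T‖ := hles
          _ ≤ k1 * exp (-lam1 * (t - T)) * r1 := by
              apply mul_le_mul_of_nonneg_left hEr1 (by positivity)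
          _ = k1 * r1 * (exp (lam1 * T) * exp (-lam1 * t)) := by
              rw [← Real.exp_add]; ring_nf
          _ ≤ max M (k1 * r1) * (exp (lam1 * T) * exp (-lam1 * t)) := by
              apply mul_le_mul_of_nonneg_right (le_max_right _ _) (by positivity)
          _ = max M (k1 * r1) * exp (lam1 * T) * exp (-lam1 * t) := by ring
    choose δf hδf Cf hCf hspec using hpt
    have hcov : Metric.closedBall (0:Euc n) R ⊆ ⋃ e₀, Metric.ball e₀ (δf e₀) :=
      fun x _ => mem_iUnion.2 ⟨x, Metric.mem_ball_self (hδf x)⟩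
    obtain ⟨S, hS⟩ := (isCompact_closedBall (0:Euc n) R).elim_finite_subcover
      (fun e₀ => Metric.ball e₀ (δf e₀)) (fun _ => Metric.isOpen_ball) hcov
    refine ⟨∑ i ∈ S, Cf i, Finset.sum_nonneg (fun i _ => hCf i), ?_⟩
    intro e heR t ht
    have hmem : e ∈ ⋃ i ∈ S, Metric.ball i (δf i) := by
      apply hS
      simp only [Metric.mem_closedBall, dist_zero_right]
      exact heR
    obtain ⟨i, hiS, hei⟩ := mem_iUnion₂.1 hmem
    calc ‖Efl e t‖ ≤ Cf i * exp (-lam1 * t) :=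
          hspec i e (by simpa [Metric.mem_ball] using hei) t ht
      _ ≤ (∑ j ∈ S, Cf j) * exp (-lam1 * t) :=
          mul_le_mul_of_nonneg_right
            (Finset.single_le_sum (fun j _ => hCf j) hiS) (Real.exp_nonneg _)
  -- for every radius there is a constant making the exponential estimate true
  have hExistsC : ∀ s : ℝ, ∃ c, 0 ≤ c ∧
      ∀ e t, 0 ≤ t → ‖e‖ ≤ max s 0 → ‖Efl e t‖ ≤ c * exp (-lam1 * t) * ‖e‖ := by
    intro s
    obtain ⟨C, hC0, hC⟩ := hCover (max s 0) (le_max_right _ _)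
    refine ⟨max k1 (C / r1), le_trans hk1.le (le_max_left _ _), ?_⟩
    intro e t ht he
    have hexpn : (0:ℝ) ≤ exp (-lam1 * t) := Real.exp_nonneg _
    rcases le_or_gt ‖e‖ r1 with h | h
    · calc ‖Efl e t‖ ≤ k1 * exp (-lam1 * t) * ‖e‖ := hLES e t ht h
        _ ≤ max k1 (C / r1) * exp (-lam1 * t) * ‖e‖ := by
            apply mul_le_mul_of_nonneg_right
              (mul_le_mul_of_nonneg_right (le_max_left _ _) hexpn) (norm_nonneg _)
    · calc ‖Efl e t‖ ≤ C * exp (-lam1 * t) := hC e he t ht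
        _ = C / r1 * exp (-lam1 * t) * r1 := by field_simp
        _ ≤ C / r1 * exp (-lam1 * t) * ‖e‖ :=
            mul_le_mul_of_nonneg_left h.le (by positivity)
        _ ≤ max k1 (C / r1) * exp (-lam1 * t) * ‖e‖ := by
            apply mul_le_mul_of_nonneg_right
              (mul_le_mul_of_nonneg_right (le_max_right _ _) hexpn) (norm_nonneg _)
  -- the optimal constant as a function of the radius
  set Sc : ℝ → Set ℝ := fun s => {c | 0 ≤ c ∧
      ∀ e t, 0 ≤ t → ‖e‖ ≤ max s 0 → ‖Efl e t‖ ≤ c * exp (-lam1 * t) * ‖e‖} with hSc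
  set B : ℝ → ℝ := fun s => sInf (Sc s) with hB
  have hScne : ∀ s, (Sc s).Nonempty := fun s => hExistsC s
  have hScbdd : ∀ s, BddBelow (Sc s) := fun s => ⟨0, fun c hc => hc.1⟩
  have hB0 : ∀ s, 0 ≤ B s := fun s => le_csInf (hScne s) (fun c hc => hc.1)
  have hBmono : Monotone B := by
    intro s s' hss'
    exact csInf_le_csInf (hScbdd s) (hScne s')
      (fun c hc => ⟨hc.1, fun e t ht he => hc.2 e t ht
        (he.trans (max_le_max hss' le_rfl))⟩)
  have hBspec : ∀ e t, 0 ≤ t → ‖Efl e t‖ ≤ B ‖e‖ * exp (-lam1 * t) * ‖e‖ := by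
    intro e t ht
    have hme : ‖e‖ ≤ max ‖e‖ 0 := le_max_left _ _
    rcases eq_or_lt_of_le (norm_nonneg e) with h0 | h0
    · obtain ⟨c₀, hc₀⟩ := hScne ‖e‖
      have h := hc₀.2 e t ht hme
      rw [← h0] at h
      have h2 : B ‖e‖ * exp (-lam1 * t) * ‖e‖ = 0 := by rw [← h0]; ring
      rw [h2]
      simpa using h
    · have hpos : 0 < exp (-lam1 * t) * ‖e‖ := by positivity
      have hkey : ‖Efl e t‖ / (exp (-lam1 * t) * ‖e‖) ≤ B ‖e‖ := by
        apply le_csInf (hScne _)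
        intro c hc
        have h := hc.2 e t ht hme
        rw [div_le_iff₀ hpos]
        calc ‖Efl e t‖ ≤ c * exp (-lam1 * t) * ‖e‖ := h
          _ = c * (exp (-lam1 * t) * ‖e‖) := by ring
      calc ‖Efl e t‖ = ‖Efl e t‖ / (exp (-lam1 * t) * ‖e‖) * (exp (-lam1 * t) * ‖e‖) :=
            (div_mul_cancel₀ _ (ne_of_gt hpos)).symm
        _ ≤ B ‖e‖ * (exp (-lam1 * t) * ‖e‖) :=
            mul_le_mul_of_nonneg_right hkey hpos.le
        _ = B ‖e‖ * exp (-lam1 * t) * ‖e‖ := by ring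
  -- define k via an integral of B
  have hBint : ∀ a b : ℝ, IntervalIntegrable B MeasureTheory.volume a b :=
    fun a b => (hBmono.monotoneOn _).intervalIntegrable
  set k : ℝ → ℝ := fun s => s + 1 + ∫ u in s..(s+1), B u with hk
  have hkB : ∀ s, 0 ≤ s → B s ≤ k s := by
    intro s hs
    have h1 : (∫ _ in s..(s+1), B s) = B s := by
      rw [intervalIntegral.integral_const]; simp
    have h2 : (∫ _ in s..(s+1), B s) ≤ ∫ u in s..(s+1), B u :=
      intervalIntegral.integral_mono_on (by linarith) intervalIntegrable_const
        (hBint _ _) (fun u hu => hBmono hu.1)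
    show B s ≤ s + 1 + ∫ u in s..(s+1), B u
    linarith
  have hkcont : Continuous k := by
    have hH : Continuous (fun x => ∫ u in (0:ℝ)..x, B u) :=
      intervalIntegral.continuous_primitive (fun a b => hBint a b) 0
    have hrw : k = fun s => s + 1 +
        ((∫ u in (0:ℝ)..(s+1), B u) - ∫ u in (0:ℝ)..s, B u) := by
      funext s
      rw [intervalIntegral.integral_interval_sub_left (hBint 0 (s+1)) (hBint 0 s)]
    rw [hrw]
    exact (continuous_id.add continuous_const).add
      ((hH.comp (continuous_id.add continuous_const)).sub hH)
  have hkmono : StrictMono k := by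
    intro s s' hss'
    have hd : 0 ≤ s' - s := by linarith
    have hint2 : IntervalIntegrable (fun u => B (u + (s' - s)))
        MeasureTheory.volume s (s+1) :=
      ((hBmono.comp (monotone_id.add_const (s' - s))).monotoneOn _).intervalIntegrable
    have hcomp : (∫ u in s..(s+1), B (u + (s' - s))) = ∫ u in s'..(s'+1), B u := by
      rw [intervalIntegral.integral_comp_add_right]
      have e1 : s + (s' - s) = s' := by ring
      have e2 : s + 1 + (s' - s) = s' + 1 := by ring
      rw [e1, e2]
    have hle : (∫ u in s..(s+1), B u) ≤ ∫ u in s'..(s'+1), B u := by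
      rw [← hcomp]
      exact intervalIntegral.integral_mono_on (by linarith) (hBint _ _) hint2
        (fun u _ => hBmono (by linarith))
    show s + 1 + (∫ u in s..(s+1), B u) < s' + 1 + ∫ u in s'..(s'+1), B u
    linarith
  have hknonneg : ∀ s, 0 ≤ s → 0 ≤ k s := by
    intro s hs
    have h : 0 ≤ ∫ u in s..(s+1), B u :=
      intervalIntegral.integral_nonneg (by linarith) (fun u _ => hB0 u)
    show 0 ≤ s + 1 + ∫ u in s..(s+1), B u
    linarith
  refine ⟨lam1, hlam1, k, hkcont.continuousOn, hkmono.strictMonoOn _, hknonneg, ?_⟩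
  intro e t ht
  refine (hBspec e t ht).trans ?_
  have h1 : (0:ℝ) ≤ exp (-lam1 * t) * ‖e‖ := by positivity
  calc B ‖e‖ * exp (-lam1 * t) * ‖e‖ = B ‖e‖ * (exp (-lam1 * t) * ‖e‖) := by ring
    _ ≤ k ‖e‖ * (exp (-lam1 * t) * ‖e‖) :=
        mul_le_mul_of_nonneg_right (hkB _ (norm_nonneg e)) h1
    _ = k ‖e‖ * exp (-lam1 * t) * ‖e‖ := by ring
end

section
/- Assume the origin of the system ė = F(e) is locally exponentially stable with constants k₁, λ₁, r₁ > 0 and is globally attractive. Fix λ with 0 < λ < λ₁ and define c(e,t) := |E(e,t)|/(|e| exp(−λ t)) for e ≠ 0. Then for every s ≥ r₁, the supremum c̄(s) := sup { c(e,t) : r₁ ≤ |e| ≤ s, t ≥ 0 } is finite. -/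
open Real Set Filter
open scoped RealInnerProductSpace Topology NNReal

/-- A `C¹` vector field is Lipschitz on every closed ball. -/
lemma aux_lipschitz {n : ℕ} (F : Euc n → Euc n) (hF : ContDiff ℝ 1 F) (R : ℝ) :
    ∃ L : ℝ≥0, LipschitzOnWith L F (Metric.closedBall 0 R) := by
  obtain ⟨C, hC⟩ := (isCompact_closedBall (0 : Euc n) R).exists_bound_of_continuousOn
    ((hF.continuous_fderiv one_ne_zero).continuousOn)
  refine ⟨⟨max C 0, le_max_right _ _⟩,
    (convex_closedBall _ _).lipschitzOnWith_of_nnnorm_fderiv_le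
    (fun x _ => (hF.differentiable one_ne_zero).differentiableAt) (fun x hx => ?_)⟩
  have := hC x hx
  apply NNReal.coe_le_coe.1
  show (‖fderiv ℝ F x‖₊ : ℝ) ≤ max C 0
  rw [coe_nnnorm]
  exact le_trans this (le_max_left C 0)

/-- Semigroup property of the flow, from uniqueness of ODE solutions. -/
lemma aux_semigroup {n : ℕ} (F : Euc n → Euc n) (hF : ContDiff ℝ 1 F)
    (Efl : Euc n → ℝ → Euc n)
    (hinit : ∀ e, Efl e 0 = e)
    (hflow : ∀ e t, 0 ≤ t → HasDerivWithinAt (Efl e) (F (Efl e t)) (Ici 0) t)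
    (e : Euc n) (t0 : ℝ) (ht0 : 0 ≤ t0) (u : ℝ) (hu : 0 ≤ u) :
    Efl e (t0 + u) = Efl (Efl e t0) u := by
  have hcont : ∀ e', ContinuousOn (Efl e') (Ici (0:ℝ)) :=
    fun e' t ht => (hflow e' t ht).continuousWithinAt
  set f : ℝ → Euc n := fun v => Efl e (t0 + v) with hfdef
  set g : ℝ → Euc n := Efl (Efl e t0) with hgdef
  have hfc : ContinuousOn f (Icc 0 u) := by
    refine (hcont e).comp (by fun_prop) ?_
    intro v hv
    exact add_nonneg ht0 hv.1
  have hgc : ContinuousOn g (Icc 0 u) := (hcont _).mono Icc_subset_Ici_self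
  have hf' : ∀ v ∈ Ico (0:ℝ) u, HasDerivWithinAt f (F (f v)) (Ici v) v := by
    intro v hv
    have h1 : HasDerivWithinAt (Efl e) (F (Efl e (t0 + v))) (Ici 0) (t0 + v) :=
      hflow e (t0 + v) (add_nonneg ht0 hv.1)
    have h2 : HasDerivWithinAt (fun w : ℝ => t0 + w) 1 (Ici v) v :=
      ((hasDerivAt_id v).const_add t0).hasDerivWithinAt
    have h3 := h1.scomp_of_eq v h2
      (fun w hw => add_nonneg ht0 (le_trans hv.1 hw)) rfl
    rw [one_smul] at h3
    exact h3
  have hg' : ∀ v ∈ Ico (0:ℝ) u, HasDerivWithinAt g (F (g v)) (Ici v) v :=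
    fun v hv => (hflow (Efl e t0) v hv.1).mono (Ici_subset_Ici.2 hv.1)
  have hKf : IsCompact (f '' Icc 0 u) := isCompact_Icc.image_of_continuousOn hfc
  have hKg : IsCompact (g '' Icc 0 u) := isCompact_Icc.image_of_continuousOn hgc
  obtain ⟨R, hR⟩ := (hKf.isBounded.union hKg.isBounded).subset_closedBall 0
  obtain ⟨L, hL⟩ := aux_lipschitz F hF R
  have key := ODE_solution_unique_of_mem_Icc_right (v := fun _ x => F x)
    (s := fun _ => Metric.closedBall (0 : Euc n) R) (K := L) (fun _ _ => hL) hfc hf'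
    (fun v hv => hR (Or.inl ⟨v, Ico_subset_Icc_self hv, rfl⟩)) hgc hg'
    (fun v hv => hR (Or.inr ⟨v, Ico_subset_Icc_self hv, rfl⟩))
    (by simp [hfdef, hgdef, hinit])
  have := key (right_mem_Icc.2 hu)
  simpa [hfdef, hgdef] using this

/-- Assume the origin of ė = F(e) is locally exponentially stable with constants
k₁, λ₁, r₁ > 0 and globally attractive. Fix 0 < λ < λ₁ and set
c(e,t) := |E(e,t)| / (|e| exp (−λ t)).  Then for every s ≥ r₁ the supremum
c̄(s) := sup { c(e,t) : r₁ ≤ |e| ≤ s, t ≥ 0 } is finite, i.e. the corresponding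
set of values is bounded above. -/
theorem sup_c_finite
    {n : ℕ}
    (F : Euc n → Euc n) (hF : ContDiff ℝ 1 F) (hF0 : F 0 = 0)
    (Efl : Euc n → ℝ → Euc n)
    (hinit : ∀ e, Efl e 0 = e)
    (hflow : ∀ e t, 0 ≤ t → HasDerivWithinAt (Efl e) (F (Efl e t)) (Ici 0) t)
    -- local exponential stability with constants k₁, λ₁, r₁
    (k1 lam1 r1 : ℝ) (hk1 : 0 < k1) (hlam1 : 0 < lam1) (hr1 : 0 < r1)
    (hLES : ∀ e t, 0 ≤ t → ‖e‖ ≤ r1 → ‖Efl e t‖ ≤ k1 * exp (-lam1 * t) * ‖e‖)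
    -- global attractivity
    (hGA : ∀ e, Tendsto (fun t => ‖Efl e t‖) atTop (𝓝 0))
    -- fix 0 < λ < λ₁
    (lam : ℝ) (hlam : 0 < lam) (hlamlt : lam < lam1) :
    ∀ s, r1 ≤ s →
      BddAbove {y : ℝ | ∃ e : Euc n, ∃ t : ℝ, r1 ≤ ‖e‖ ∧ ‖e‖ ≤ s ∧ 0 ≤ t ∧
        y = ‖Efl e t‖ / (‖e‖ * exp (-lam * t))} := by
  intro s hs
  have hcont : ∀ e, ContinuousOn (Efl e) (Ici (0:ℝ)) :=
    fun e t ht => (hflow e t ht).continuousWithinAt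
  set A : Set (Euc n) := {e | r1 ≤ ‖e‖ ∧ ‖e‖ ≤ s} with hA
  have hAcomp : IsCompact A := by
    have hEq : A = Metric.closedBall 0 s ∩ (Metric.ball 0 r1)ᶜ := by
      ext e
      simp [hA, Metric.mem_closedBall, Metric.mem_ball, dist_zero_right, not_lt, and_comm]
    rw [hEq]
    exact (isCompact_closedBall _ _).inter_right Metric.isOpen_ball.isClosed_compl
  -- local bound around every point of A
  have key : ∀ e0 ∈ A, ∃ ε > 0, ∃ C : ℝ, ∀ e ∈ A, dist e e0 < ε → ∀ t, 0 ≤ t →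
      ‖Efl e t‖ / (‖e‖ * exp (-lam * t)) ≤ C := by
    intro e0 _he0
    -- a time at which the reference trajectory is well inside the ball of radius r1
    obtain ⟨T0, hT0⟩ := eventually_atTop.1 ((hGA e0).eventually (gt_mem_nhds (by positivity :
      (0:ℝ) < r1 / 2)))
    set T : ℝ := max T0 0 with hTdef
    have hT : 0 ≤ T := le_max_right _ _
    have hTr : ‖Efl e0 T‖ < r1 / 2 := hT0 T (le_max_left _ _)
    -- a bound for the reference trajectory on [0, T]
    obtain ⟨R0, hR0⟩ := ((isCompact_Icc.image_of_continuousOn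
      ((hcont e0).mono Icc_subset_Ici_self)).isBounded).subset_closedBall 0
    have hR0' : ∀ t ∈ Icc (0:ℝ) T, ‖Efl e0 t‖ ≤ R0 := by
      intro t ht
      have := hR0 ⟨t, ht, rfl⟩
      simpa [Metric.mem_closedBall, dist_zero_right] using this
    have hR0nonneg : 0 ≤ R0 := le_trans (norm_nonneg _) (hR0' 0 ⟨le_rfl, hT⟩)
    obtain ⟨L, hL⟩ := aux_lipschitz F hF (R0 + 1)
    set δ : ℝ := min 1 (r1 / 2) with hδdef
    have hδ : 0 < δ := lt_min one_pos (by positivity)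
    have hδ1 : δ ≤ 1 := min_le_left _ _
    have hδr : δ ≤ r1 / 2 := min_le_right _ _
    set ε : ℝ := δ / (2 * exp (L * T)) with hεdef
    have hexp1 : (1:ℝ) ≤ exp (L * T) := one_le_exp (by positivity)
    have hε : 0 < ε := by positivity
    have hεδ : ε * exp (L * T) = δ / 2 := by
      rw [hεdef]
      field_simp
    -- continuous-dependence claim via Grönwall + bootstrap
    have claim : ∀ e, dist e e0 < ε → ∀ t ∈ Icc (0:ℝ) T,
        dist (Efl e t) (Efl e0 t) ≤ δ := by
      intro e he
      set φ : ℝ → ℝ := fun t => dist (Efl e t) (Efl e0 t) with hφdef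
      have hφc : ContinuousOn φ (Ici 0) :=
        continuous_dist.comp_continuousOn ((hcont e).prodMk (hcont e0))
      have hφ0 : φ 0 < ε := by simpa [hφdef, hinit] using he
      -- Grönwall estimate valid as long as we stay δ-close
      have gron : ∀ b ∈ Icc (0:ℝ) T, (∀ u ∈ Ico (0:ℝ) b, φ u ≤ δ) →
          φ b ≤ dist e e0 * exp (L * b) := by
        intro b hb hsmall
        have memf : ∀ u ∈ Ico (0:ℝ) b, Efl e u ∈ Metric.closedBall (0 : Euc n) (R0 + 1) := by
          intro u hu
          have h1 : dist (Efl e u) (Efl e0 u) ≤ δ := hsmall u hu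
          have h2 : ‖Efl e0 u‖ ≤ R0 := hR0' u ⟨hu.1, le_trans hu.2.le hb.2⟩
          have : dist (Efl e u) 0 ≤ dist (Efl e u) (Efl e0 u) + dist (Efl e0 u) 0 :=
            dist_triangle _ _ _
          rw [Metric.mem_closedBall]
          rw [dist_zero_right] at this ⊢
          calc ‖Efl e u‖ ≤ dist (Efl e u) (Efl e0 u) + ‖Efl e0 u‖ := by
                simpa [dist_zero_right] using this
            _ ≤ δ + R0 := add_le_add h1 h2
            _ ≤ R0 + 1 := by linarith
        have memg : ∀ u ∈ Ico (0:ℝ) b, Efl e0 u ∈ Metric.closedBall (0 : Euc n) (R0 + 1) := by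
          intro u hu
          rw [Metric.mem_closedBall, dist_zero_right]
          have := hR0' u ⟨hu.1, le_trans hu.2.le hb.2⟩
          linarith
        have h := dist_le_of_trajectories_ODE_of_mem (v := fun _ x => F x)
          (s := fun _ => Metric.closedBall (0 : Euc n) (R0 + 1)) (K := L) (fun _ _ => hL)
          ((hcont e).mono Icc_subset_Ici_self)
          (fun u hu => (hflow e u hu.1).mono (Ici_subset_Ici.2 hu.1)) memf
          ((hcont e0).mono Icc_subset_Ici_self)
          (fun u hu => (hflow e0 u hu.1).mono (Ici_subset_Ici.2 hu.1)) memg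
          (by rw [hinit, hinit]) b (right_mem_Icc.2 hb.1)
        simpa [hφdef] using h
      -- bootstrap
      set Cs : Set ℝ := {t | t ∈ Icc 0 T ∧ ∀ u ∈ Icc 0 t, φ u ≤ δ} with hCsdef
      have h0mem : (0:ℝ) ∈ Cs := by
        refine ⟨⟨le_rfl, hT⟩, fun u hu => ?_⟩
        have hu0 : u = 0 := le_antisymm hu.2 hu.1
        rw [hu0]
        have : ε ≤ δ := by
          calc ε = ε * 1 := (mul_one ε).symm
            _ ≤ ε * exp (L * T) := by
                have := hε.le
                exact mul_le_mul_of_nonneg_left hexp1 this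
            _ = δ / 2 := hεδ
            _ ≤ δ := half_le_self hδ.le
        linarith [hφ0]
      have hbdd : BddAbove Cs := ⟨T, fun t ht => ht.1.2⟩
      have hne : Cs.Nonempty := ⟨0, h0mem⟩
      set tstar : ℝ := sSup Cs with htsdef
      have hts0 : 0 ≤ tstar := le_csSup hbdd h0mem
      have htsT : tstar ≤ T := csSup_le hne fun t ht => ht.1.2
      have hpre : ∀ u, 0 ≤ u → u < tstar → φ u ≤ δ := by
        intro u hu hu2
        obtain ⟨t, htmem, hlt⟩ := exists_lt_of_lt_csSup hne hu2
        exact htmem.2 u ⟨hu, hlt.le⟩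
      have hstar2 : φ tstar ≤ δ / 2 := by
        have hg := gron tstar ⟨hts0, htsT⟩ (fun u hu => hpre u hu.1 hu.2)
        calc φ tstar ≤ dist e e0 * exp (L * tstar) := hg
          _ ≤ ε * exp (L * T) := by
              apply mul_le_mul he.le (exp_le_exp.2 ?_) (exp_nonneg _) hε.le
              exact mul_le_mul_of_nonneg_left htsT L.coe_nonneg
          _ = δ / 2 := hεδ
      have hstarmem : tstar ∈ Cs := by
        refine ⟨⟨hts0, htsT⟩, fun u hu => ?_⟩
        rcases lt_or_eq_of_le hu.2 with h | h
        · exact hpre u hu.1 h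
        · rw [h]; linarith [hstar2]
      have htseq : tstar = T := by
        by_contra hne'
        have hlt : tstar < T := lt_of_le_of_ne htsT hne'
        have hcw : ContinuousWithinAt φ (Ici tstar) tstar :=
          ((hφc tstar hts0).mono (Ici_subset_Ici.2 hts0))
        have hev : ∀ᶠ u in 𝓝[Set.Ici tstar] tstar, φ u < δ :=
          hcw.eventually (gt_mem_nhds (lt_of_le_of_lt hstar2 (by linarith)))
        rw [Filter.eventually_iff, mem_nhdsGE_iff_exists_Ico_subset] at hev
        obtain ⟨u, hu, hsub⟩ := hev
        have huts : tstar < u := hu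
        set t' : ℝ := min ((tstar + u) / 2) T with ht'def
        have ht'1 : tstar < t' := lt_min (by linarith) hlt
        have ht'2 : t' ≤ T := min_le_right _ _
        have ht'3 : t' < u := lt_of_le_of_lt (min_le_left _ _) (by linarith)
        have ht'mem : t' ∈ Cs := by
          refine ⟨⟨le_trans hts0 ht'1.le, ht'2⟩, fun w hw => ?_⟩
          rcases lt_or_ge w tstar with h | h
          · exact hpre w hw.1 h
          · exact (hsub ⟨h, lt_of_le_of_lt hw.2 ht'3⟩).le
        have := le_csSup hbdd ht'mem
        linarith
      intro t ht
      rw [htseq] at hstarmem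
      exact hstarmem.2 t ht
    -- the local bound
    refine ⟨ε, hε, max ((R0 + 1) / (r1 * exp (-(lam * T)))) (k1 * exp (lam * T)), ?_⟩
    intro e heA hde t ht
    rcases le_or_gt t T with hcase | hcase
    · -- t ∈ [0, T]
      have hnum : ‖Efl e t‖ ≤ R0 + 1 := by
        have h1 := claim e hde t ⟨ht, hcase⟩
        have h2 := hR0' t ⟨ht, hcase⟩
        calc ‖Efl e t‖ = dist (Efl e t) 0 := (dist_zero_right _).symm
          _ ≤ dist (Efl e t) (Efl e0 t) + dist (Efl e0 t) 0 := dist_triangle _ _ _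
          _ ≤ δ + R0 := by rw [dist_zero_right]; exact add_le_add h1 h2
          _ ≤ R0 + 1 := by linarith
      have hden : r1 * exp (-(lam * T)) ≤ ‖e‖ * exp (-lam * t) := by
        apply mul_le_mul heA.1 ?_ (exp_nonneg _) (norm_nonneg _)
        apply exp_le_exp.2
        nlinarith
      refine le_trans ?_ (le_max_left _ _)
      exact div_le_div₀ (by positivity) hnum (by positivity) hden
    · -- t > T
      set u : ℝ := t - T with hudef
      have hu0 : 0 ≤ u := by simp [hudef]; linarith
      have hsem : Efl e t = Efl (Efl e T) u := by
        have := aux_semigroup F hF Efl hinit hflow e T hT u hu0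
        rw [← this]
        congr 1
        simp [hudef]
      have hET : ‖Efl e T‖ ≤ r1 := by
        have h1 := claim e hde T ⟨hT, le_rfl⟩
        calc ‖Efl e T‖ = dist (Efl e T) 0 := (dist_zero_right _).symm
          _ ≤ dist (Efl e T) (Efl e0 T) + dist (Efl e0 T) 0 := dist_triangle _ _ _
          _ ≤ δ + ‖Efl e0 T‖ := by rw [dist_zero_right]; exact add_le_add h1 le_rfl
          _ ≤ r1 / 2 + r1 / 2 := add_le_add hδr hTr.le
          _ = r1 := by ring
      have hnum : ‖Efl e t‖ ≤ k1 * exp (-lam1 * u) * r1 := by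
        rw [hsem]
        calc ‖Efl (Efl e T) u‖ ≤ k1 * exp (-lam1 * u) * ‖Efl e T‖ :=
              hLES (Efl e T) u hu0 hET
          _ ≤ k1 * exp (-lam1 * u) * r1 := by
              apply mul_le_mul_of_nonneg_left hET (by positivity)
      have hepos : (0:ℝ) < ‖e‖ := lt_of_lt_of_le hr1 heA.1
      refine le_trans ?_ (le_max_right _ _)
      rw [div_le_iff₀ (mul_pos hepos (exp_pos _))]
      have hexpkey : exp (-lam1 * u) ≤ exp (lam * T) * exp (-lam * t) := by
        rw [← exp_add]
        apply exp_le_exp.2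
        have h1 : lam * u ≤ lam1 * u := mul_le_mul_of_nonneg_right hlamlt.le hu0
        have h2 : t = T + u := by simp [hudef]
        nlinarith
      calc ‖Efl e t‖ ≤ k1 * exp (-lam1 * u) * r1 := hnum
        _ ≤ k1 * (exp (lam * T) * exp (-lam * t)) * ‖e‖ := by
            apply mul_le_mul ?_ heA.1 hr1.le (by positivity)
            exact mul_le_mul_of_nonneg_left hexpkey hk1.le
        _ = k1 * exp (lam * T) * (‖e‖ * exp (-lam * t)) := by ring
  -- compactness argument
  choose! εf hεf Cf hCf using key
  obtain ⟨tfin, htfinA, hcover⟩ := hAcomp.elim_nhds_subcover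
    (fun e0 => Metric.ball e0 (εf e0)) (fun e0 he0 => Metric.ball_mem_nhds _ (hεf e0 he0))
  obtain ⟨B, hB⟩ := (tfin.finite_toSet.image Cf).bddAbove
  refine ⟨B, fun y hy => ?_⟩
  obtain ⟨e, t, h1, h2, h3, h4⟩ := hy
  have heA : e ∈ A := ⟨h1, h2⟩
  have := hcover heA
  rw [mem_iUnion₂] at this
  obtain ⟨e0, he0t, hball⟩ := this
  have hC := hCf e0 (htfinA e0 he0t) e heA (by simpa [Metric.mem_ball] using hball) t h3
  rw [h4]
  exact le_trans hC (hB ⟨e0, he0t, rfl⟩)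
end

section
/- Let F be C¹ on ℝ^{n} and C² in a neighborhood of the origin, with F(0) = 0. Assume the origin of ė = F(e) is locally exponentially stable and globally attractive. Then there exist a positive real number λ̃ and a strictly increasing function k̃ : ℝ₊ → ℝ₊ such that the solutions of the linearized system along trajectories satisfy |Φ(e,t) δ| ≤ k̃(|e|) exp(−λ̃ t)|δ| for all e, δ in ℝ^{n} and all t ≥ 0. -/
open Real Set Filter Metric
open scoped RealInnerProductSpace Topology NNReal

namespace Fact1Aux

variable {n : ℕ} {X : Type*} [NormedAddCommGroup X] [NormedSpace ℝ X]

lemma contOn (f d : ℝ → X) (h : ∀ t, 0 ≤ t → HasDerivWithinAt f (d t) (Ici 0) t) :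
    ContinuousOn f (Ici 0) := fun t ht => (h t ht).continuousWithinAt

lemma shift_deriv (f d : ℝ → X) (T : ℝ) (hT : 0 ≤ T)
    (h : ∀ t, 0 ≤ t → HasDerivWithinAt f (d t) (Ici 0) t) :
    ∀ u, 0 ≤ u → HasDerivWithinAt (fun u => f (T + u)) (d (T + u)) (Ici 0) u := by
  intro u hu
  have h1 : HasDerivWithinAt (fun u : ℝ => T + u) 1 (Ici 0) u :=
    ((hasDerivAt_id u).const_add T).hasDerivWithinAt
  have hm : MapsTo (fun u : ℝ => T + u) (Ici 0) (Ici 0) := fun x hx => by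
    simp only [mem_Ici] at *; linarith
  have := (h (T + u) (by linarith)).scomp u h1 hm
  simpa [Function.comp_def] using this

lemma gronwall_norm_le (f d : ℝ → X) (K δ0 εg b : ℝ)
    (hfc : ContinuousOn f (Icc 0 b))
    (hf' : ∀ t ∈ Ico 0 b, HasDerivWithinAt f (d t) (Ici t) t)
    (h0 : ‖f 0‖ ≤ δ0)
    (hb : ∀ t ∈ Ico 0 b, ‖d t‖ ≤ K * ‖f t‖ + εg) :
    ∀ t ∈ Icc 0 b, ‖f t‖ ≤ gronwallBound δ0 K εg t := by
  intro t ht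
  have := norm_le_gronwallBound_of_norm_deriv_right_le hfc hf' h0 hb t ht
  simpa using this

/-- Lipschitz constant of a C¹ map on a closed ball. -/
lemma lipschitzOn_ball (F : Euc n → Euc n) (hF : ContDiff ℝ 1 F) (R : ℝ) :
    ∃ K : ℝ≥0, LipschitzOnWith K F (closedBall 0 R) := by
  obtain ⟨M, hM⟩ := (isCompact_closedBall (0 : Euc n) R).exists_bound_of_continuousOn
    ((hF.continuous_fderiv one_ne_zero).continuousOn)
  refine ⟨(max M 0).toNNReal, LipschitzOnWith.of_dist_le_mul fun x hx y hy => ?_⟩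
  have := Convex.norm_image_sub_le_of_norm_fderiv_le
    (f := F) (C := max M 0) (fun z hz => (hF.differentiable one_ne_zero).differentiableAt)
    (fun z hz => le_max_of_le_left (hM z hz)) (convex_closedBall _ _) hy hx
  rw [dist_eq_norm, dist_eq_norm]
  calc ‖F x - F y‖ ≤ max M 0 * ‖x - y‖ := this
    _ = ((max M 0).toNNReal : ℝ) * ‖x - y‖ := by
        rw [Real.coe_toNNReal _ (le_max_right M 0)]


/-- Uniqueness of trajectories of the nonlinear ODE (locally Lipschitz field). -/
lemma eqOn_traj (F : Euc n → Euc n) (hF : ContDiff ℝ 1 F) (b : ℝ) (f g : ℝ → Euc n)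
    (hfc : ContinuousOn f (Icc 0 b)) (hgc : ContinuousOn g (Icc 0 b))
    (hf' : ∀ t ∈ Ico 0 b, HasDerivWithinAt f (F (f t)) (Ici t) t)
    (hg' : ∀ t ∈ Ico 0 b, HasDerivWithinAt g (F (g t)) (Ici t) t)
    (h0 : f 0 = g 0) : EqOn f g (Icc 0 b) := by
  rcases lt_or_ge b 0 with hb | hb
  · intro t ht; exact absurd ht (by simp [Icc_eq_empty_of_lt hb])
  obtain ⟨Rf, hRf⟩ := ((isCompact_Icc.image_of_continuousOn hfc).isBounded).subset_closedBall 0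
  obtain ⟨Rg, hRg⟩ := ((isCompact_Icc.image_of_continuousOn hgc).isBounded).subset_closedBall 0
  set R := max Rf Rg with hR
  obtain ⟨K, hK⟩ := lipschitzOn_ball F hF R
  refine ODE_solution_unique_of_mem_Icc_right (v := fun _ => F)
      (s := fun _ => closedBall (0 : Euc n) R) (fun _ _ => hK) hfc hf' ?_ hgc hg' ?_ h0
  · intro t ht
    exact closedBall_subset_closedBall (le_max_left _ _)
      (hRf (mem_image_of_mem f (Ico_subset_Icc_self ht)))
  · intro t ht
    exact closedBall_subset_closedBall (le_max_right _ _)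
      (hRg (mem_image_of_mem g (Ico_subset_Icc_self ht)))

/-- Uniqueness for linear (matrix) ODEs with continuous coefficient. -/
lemma lin_eqOn (B : ℝ → (Euc n →L[ℝ] Euc n)) (hB : ContinuousOn B (Ici 0)) (b : ℝ)
    (f g : ℝ → (Euc n →L[ℝ] Euc n))
    (hfc : ContinuousOn f (Icc 0 b)) (hgc : ContinuousOn g (Icc 0 b))
    (hf' : ∀ t ∈ Ico 0 b, HasDerivWithinAt f ((B t).comp (f t)) (Ici t) t)
    (hg' : ∀ t ∈ Ico 0 b, HasDerivWithinAt g ((B t).comp (g t)) (Ici t) t)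
    (h0 : f 0 = g 0) : EqOn f g (Icc 0 b) := by
  rcases lt_or_ge b 0 with hb | hb
  · intro t ht; exact absurd ht (by simp [Icc_eq_empty_of_lt hb])
  set c : ℝ → ℝ := fun t => max 0 (min t b) with hc
  have hcmem : ∀ t, c t ∈ Icc 0 b := fun t => ⟨le_max_left _ _, max_le hb (min_le_right _ _)⟩
  obtain ⟨M, hM⟩ := (isCompact_Icc (a := (0:ℝ)) (b := b)).exists_bound_of_continuousOn
    (hB.mono (fun x hx => hx.1))
  have hM0 : 0 ≤ max M 0 := le_max_right _ _
  have hceq : ∀ t ∈ Ico 0 b, c t = t := by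
    intro t ht; simp [hc, min_eq_left ht.2.le, max_eq_right ht.1]
  refine ODE_solution_unique_of_mem_Icc_right
      (v := fun t W => (B (c t)).comp W) (s := fun _ => (univ : Set (Euc n →L[ℝ] Euc n)))
      (K := (max M 0).toNNReal) (fun t _ => ?_) hfc ?_ (fun _ _ => trivial) hgc ?_
      (fun _ _ => trivial) h0
  · refine (LipschitzWith.of_dist_le_mul fun W W' => ?_).lipschitzOnWith
    rw [dist_eq_norm, dist_eq_norm, ← ContinuousLinearMap.comp_sub]
    calc ‖(B (c t)).comp (W - W')‖ ≤ ‖B (c t)‖ * ‖W - W'‖ := ContinuousLinearMap.opNorm_comp_le _ _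
      _ ≤ max M 0 * ‖W - W'‖ := by
          apply mul_le_mul_of_nonneg_right (le_max_of_le_left (hM _ (hcmem t))) (norm_nonneg _)
      _ = ((max M 0).toNNReal : ℝ) * ‖W - W'‖ := by rw [Real.coe_toNNReal _ hM0]
  · intro t ht; simp only []; rw [hceq t ht]; exact hf' t ht
  · intro t ht; simp only []; rw [hceq t ht]; exact hg' t ht

end Fact1Aux

set_option maxHeartbeats 3000000 in
/-- **Fact 1 for global properties**: let F be C¹ on ℝⁿ and C² around the origin,
F(0) = 0, and assume the origin of ė = F(e) (forward complete flow E) is locally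
exponentially stable and globally attractive.  Then there exist λ̃ > 0 and a
strictly increasing function k̃ : ℝ₊ → ℝ₊ such that the solutions δE(δ,e,t) =
Φ(e,t) δ of the linearization along solutions satisfy
|Φ(e,t) δ| ≤ k̃(|e|) exp(−λ̃ t) |δ| for all e, δ and t ≥ 0. -/
theorem fact1_global
    {n : ℕ}
    (F : Euc n → Euc n) (hF : ContDiff ℝ 1 F) (hF0 : F 0 = 0)
    -- F is C² around the origin
    (ε : ℝ) (hε : 0 < ε) (hF2 : ContDiffOn ℝ 2 F (Metric.ball 0 ε))
    -- forward complete flow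
    (Efl : Euc n → ℝ → Euc n)
    (hinit : ∀ e, Efl e 0 = e)
    (hflow : ∀ e t, 0 ≤ t → HasDerivWithinAt (Efl e) (F (Efl e t)) (Ici 0) t)
    -- transition matrix of the linearization along solutions
    (Φ : Euc n → ℝ → Euc n →L[ℝ] Euc n)
    (hΦ0 : ∀ e, Φ e 0 = ContinuousLinearMap.id ℝ (Euc n))
    (hΦ : ∀ e t, 0 ≤ t →
      HasDerivWithinAt (Φ e) ((fderiv ℝ F (Efl e t)) ∘L Φ e t) (Ici 0) t)
    -- local exponential stability
    (k1 lam1 r1 : ℝ) (hk1 : 0 < k1) (hlam1 : 0 < lam1) (hr1 : 0 < r1)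
    (hLES : ∀ e t, 0 ≤ t → ‖e‖ ≤ r1 → ‖Efl e t‖ ≤ k1 * exp (-lam1 * t) * ‖e‖)
    -- global attractivity
    (hGA : ∀ e, Tendsto (fun t => ‖Efl e t‖) atTop (𝓝 0)) :
    ∃ lamt > (0:ℝ), ∃ kt : ℝ → ℝ,
      StrictMonoOn kt (Ici 0) ∧ (∀ s, 0 ≤ s → 0 ≤ kt s) ∧
      ∀ (e δ : Euc n) (t : ℝ), 0 ≤ t →
        ‖Φ e t δ‖ ≤ kt ‖e‖ * exp (-lamt * t) * ‖δ‖ := by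
  classical
  rcases Nat.eq_zero_or_pos n with hn | hn
  · subst hn
    haveI : Subsingleton (Euc 0) := ⟨fun a b => by ext i; exact i.elim0⟩
    refine ⟨1, one_pos, fun s => s + 1, ?_, ?_, ?_⟩
    · intro a _ b _ hab; simpa using hab
    · intro s hs; show (0:ℝ) ≤ s + 1; linarith
    · intro e δ t _
      have hδ : δ = (0 : Euc 0) := Subsingleton.elim δ 0
      subst hδ
      simp only [map_zero, norm_zero, mul_zero, le_refl]
  · have hk1' : (1:ℝ) ≤ k1 := by
      have h := hLES (EuclideanSpace.single ⟨0, hn⟩ r1) 0 le_rfl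
        (by rw [EuclideanSpace.norm_single]; simp [abs_of_pos hr1])
      rw [hinit, EuclideanSpace.norm_single] at h
      simp [abs_of_pos hr1] at h
      nlinarith
    set A := fderiv ℝ F 0 with hA
    have hEcont : ∀ e, ContinuousOn (Efl e) (Ici 0) :=
      fun e => Fact1Aux.contOn _ _ (hflow e)
    have hΦcont : ∀ e, ContinuousOn (Φ e) (Ici 0) :=
      fun e => Fact1Aux.contOn _ _ (hΦ e)
    have hGcont : Continuous (fderiv ℝ F) := hF.continuous_fderiv one_ne_zero
    have hEfl0 : ∀ t, 0 ≤ t → Efl 0 t = 0 := by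
      intro t ht
      have := Fact1Aux.eqOn_traj F hF t (Efl 0) (fun _ => 0)
        ((hEcont 0).mono Icc_subset_Ici_self) continuousOn_const
        (fun s hs => (hflow 0 s hs.1).mono (Ici_subset_Ici.2 hs.1))
        (fun s hs => by simpa [hF0] using hasDerivWithinAt_const s (Ici s) (0 : Euc n))
        (hinit 0)
      exact this (right_mem_Icc.2 ht)
    have hPd : ∀ u, 0 ≤ u → HasDerivWithinAt (Φ 0) (A ∘L Φ 0 u) (Ici 0) u := by
      intro u hu
      have := hΦ 0 u hu
      rwa [hEfl0 u hu] at this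
    have hcompLcont : ∀ (W : Euc n →L[ℝ] Euc n), Continuous
        (fun M : Euc n →L[ℝ] Euc n => M.comp W) := by
      intro W
      exact ((ContinuousLinearMap.compL ℝ (Euc n) (Euc n) (Euc n)).flip W).continuous
    have hcompRcont : ∀ (W : Euc n →L[ℝ] Euc n), Continuous
        (fun M : Euc n →L[ℝ] Euc n => W.comp M) := by
      intro W
      exact ((ContinuousLinearMap.compL ℝ (Euc n) (Euc n) (Euc n)) W).continuous
    have hPA : ∀ u, 0 ≤ u → A ∘L Φ 0 u = Φ 0 u ∘L A := by
      intro u hu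
      have := Fact1Aux.lin_eqOn (fun _ => A) continuousOn_const u
        (fun v => A ∘L Φ 0 v) (fun v => Φ 0 v ∘L A)
        ((hcompRcont A).comp_continuousOn ((hΦcont 0).mono Icc_subset_Ici_self))
        ((hcompLcont A).comp_continuousOn ((hΦcont 0).mono Icc_subset_Ici_self))
        (fun v hv => by
          have h1 := ((hasDerivWithinAt_const v (Ici v) A).clm_comp
            ((hPd v hv.1).mono (Ici_subset_Ici.2 hv.1)))
          simpa [ContinuousLinearMap.comp_assoc] using h1)
        (fun v hv => by
          have h1 := (((hPd v hv.1).mono (Ici_subset_Ici.2 hv.1)).clm_comp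
            (hasDerivWithinAt_const v (Ici v) A))
          simpa [ContinuousLinearMap.comp_assoc] using h1)
        (by simp [hΦ0])
      exact this (right_mem_Icc.2 hu)
    have happly : ∀ (δ : Euc n), Continuous (fun M : Euc n →L[ℝ] Euc n => M δ) :=
      fun δ => (ContinuousLinearMap.apply ℝ (Euc n) δ).continuous
    have hnormP : ∀ t, 0 ≤ t → ‖Φ 0 t‖ ≤ k1 * exp (-lam1 * t) := by
      intro t ht
      have hb : 0 ≤ k1 * exp (-lam1 * t) := by positivity
      apply ContinuousLinearMap.opNorm_le_bound _ hb
      intro δ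
      rcases eq_or_ne δ 0 with rfl | hδ0
      · simp
      have hδpos : 0 < ‖δ‖ := norm_pos_iff.2 hδ0
      apply le_of_forall_pos_le_add
      intro c hc
      set K' := ‖A‖ + 1 with hK'
      have hK'1 : (1:ℝ) ≤ K' := by have := norm_nonneg A; linarith
      set D := k1 * ‖δ‖ * exp (K' * t) with hD
      have hDpos : 0 < D := by positivity
      set c' := c / D with hc'
      have hc'pos : 0 < c' := by positivity
      -- little-o property of F at 0
      have hdf : HasFDerivAt F A 0 := ((hF.differentiable one_ne_zero) 0).hasFDerivAt
      have hlo : ∀ᶠ x in 𝓝 (0:Euc n), ‖F x - A x‖ ≤ c' * ‖x‖ := by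
        have h1 := hdf.isLittleO.bound hc'pos
        filter_upwards [h1] with x hx
        simpa [hF0] using hx
      obtain ⟨r, hr0, hr⟩ := Metric.eventually_nhds_iff.1 hlo
      set h := min (r1 / (‖δ‖ + 1)) (r / ((k1 + 1) * (‖δ‖ + 1))) with hh
      have hhpos : 0 < h := lt_min (by positivity) (by positivity)
      have hhr1 : h * ‖δ‖ ≤ r1 := by
        have h1 : h ≤ r1 / (‖δ‖ + 1) := min_le_left _ _
        have h2 : h * ‖δ‖ ≤ r1 / (‖δ‖ + 1) * ‖δ‖ :=
          mul_le_mul_of_nonneg_right h1 hδpos.le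
        have h3 : r1 / (‖δ‖ + 1) * ‖δ‖ ≤ r1 := by
          rw [div_mul_eq_mul_div, div_le_iff₀ (by positivity)]
          nlinarith
        linarith
      have hhr : k1 * (h * ‖δ‖) < r := by
        have h1 : h ≤ r / ((k1 + 1) * (‖δ‖ + 1)) := min_le_right _ _
        have h2 : k1 * (h * ‖δ‖) ≤ k1 * (r / ((k1 + 1) * (‖δ‖ + 1)) * ‖δ‖) := by
          have := mul_le_mul_of_nonneg_right h1 hδpos.le
          nlinarith
        have h3 : k1 * (r / ((k1 + 1) * (‖δ‖ + 1)) * ‖δ‖) < r := by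
          have hX : (0:ℝ) < (k1 + 1) * (‖δ‖ + 1) := by positivity
          have hq : 0 < r / ((k1 + 1) * (‖δ‖ + 1)) := by positivity
          have hqX : r / ((k1 + 1) * (‖δ‖ + 1)) * ((k1 + 1) * (‖δ‖ + 1)) = r :=
            div_mul_cancel₀ r (ne_of_gt hX)
          nlinarith [mul_pos hq hδpos, mul_pos hq hk1]
        linarith
      have hnorm_hδ : ‖h • δ‖ = h * ‖δ‖ := by
        rw [norm_smul, Real.norm_eq_abs, abs_of_pos hhpos]
      -- trajectory bound
      have hEb : ∀ s, 0 ≤ s → ‖Efl (h • δ) s‖ ≤ k1 * (h * ‖δ‖) := by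
        intro s hs
        have := hLES (h • δ) s hs (by rw [hnorm_hδ]; exact hhr1)
        rw [hnorm_hδ] at this
        have hexp : exp (-lam1 * s) ≤ 1 := exp_le_one_iff.2 (by nlinarith)
        have h5 : k1 * (h * ‖δ‖) * exp (-lam1 * s) ≤ k1 * (h * ‖δ‖) * 1 :=
          mul_le_mul_of_nonneg_left hexp (by positivity)
        nlinarith [h5]
      set u : ℝ → Euc n := fun s => Efl (h • δ) s - h • (Φ 0 s δ) with hu
      set εg := c' * (k1 * (h * ‖δ‖)) with hεg
      have hεg0 : 0 ≤ εg := by positivity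
      have hucont : ContinuousOn u (Icc 0 t) := by
        apply ContinuousOn.sub
        · exact (hEcont (h • δ)).mono Icc_subset_Ici_self
        · exact (((happly δ).comp_continuousOn
            ((hΦcont 0).mono Icc_subset_Ici_self)).const_smul h)
      have hud : ∀ s ∈ Ico 0 t, HasDerivWithinAt u
          (F (Efl (h • δ) s) - h • ((A ∘L Φ 0 s) δ)) (Ici s) s := by
        intro s hs
        have hd1 : HasDerivWithinAt (Efl (h • δ)) (F (Efl (h • δ) s)) (Ici s) s :=
          (hflow (h • δ) s hs.1).mono (Ici_subset_Ici.2 hs.1)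
        have hd2 : HasDerivWithinAt (fun s => Φ 0 s δ) ((A ∘L Φ 0 s) δ) (Ici s) s := by
          have := ((hPd s hs.1).mono (Ici_subset_Ici.2 hs.1)).clm_apply
            (hasDerivWithinAt_const s (Ici s) δ)
          simpa using this
        exact hd1.sub (hd2.const_smul h)
      have hbound : ∀ s ∈ Ico 0 t,
          ‖F (Efl (h • δ) s) - h • ((A ∘L Φ 0 s) δ)‖ ≤ K' * ‖u s‖ + εg := by
        intro s hs
        have hEs := hEb s hs.1
        have hmem : dist (Efl (h • δ) s) 0 < r := by
          rw [dist_zero_right]; exact lt_of_le_of_lt hEs hhr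
        have hlo' := hr hmem
        have hAu : A (u s) = A (Efl (h • δ) s) - h • ((A ∘L Φ 0 s) δ) := by
          simp [hu, map_sub, map_smul]
        have heq : F (Efl (h • δ) s) - h • ((A ∘L Φ 0 s) δ)
            = (F (Efl (h • δ) s) - A (Efl (h • δ) s)) + A (u s) := by
          rw [hAu]; abel
        rw [heq]
        calc ‖(F (Efl (h • δ) s) - A (Efl (h • δ) s)) + A (u s)‖
            ≤ ‖F (Efl (h • δ) s) - A (Efl (h • δ) s)‖ + ‖A (u s)‖ := norm_add_le _ _
          _ ≤ c' * ‖Efl (h • δ) s‖ + ‖A‖ * ‖u s‖ :=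
              add_le_add hlo' (A.le_opNorm _)
          _ ≤ K' * ‖u s‖ + εg := by
              have h1 : c' * ‖Efl (h • δ) s‖ ≤ εg := by
                rw [hεg]; exact mul_le_mul_of_nonneg_left hEs hc'pos.le
              have h2 : ‖A‖ * ‖u s‖ ≤ K' * ‖u s‖ := by
                apply mul_le_mul_of_nonneg_right _ (norm_nonneg _)
                rw [hK']; linarith
              linarith
      have h0 : ‖u 0‖ ≤ 0 := by simp [hu, hinit, hΦ0]
      have hgr := Fact1Aux.gronwall_norm_le u _ K' 0 εg t hucont hud h0 hbound t
        (right_mem_Icc.2 ht)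
      have hK'0 : K' ≠ 0 := by linarith
      rw [gronwallBound_of_K_ne_0 hK'0] at hgr
      have hut : ‖u t‖ ≤ εg * exp (K' * t) := by
        have he1 : (1:ℝ) ≤ exp (K' * t) := by
          rw [← exp_zero]; exact exp_le_exp.2 (by nlinarith)
        have : εg / K' * (exp (K' * t) - 1) ≤ εg * exp (K' * t) := by
          rw [div_mul_eq_mul_div, div_le_iff₀ (by linarith : (0:ℝ) < K')]
          nlinarith [mul_nonneg hεg0 (exp_pos (K' * t)).le,
            mul_nonneg (mul_nonneg hεg0 (exp_pos (K' * t)).le)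
              (by linarith : (0:ℝ) ≤ K' - 1)]
        nlinarith
      -- conclude
      have hsplit : h • (Φ 0 t δ) = Efl (h • δ) t - u t := by simp [hu]
      have hnorm1 : h * ‖Φ 0 t δ‖ ≤ k1 * exp (-lam1 * t) * (h * ‖δ‖) + εg * exp (K' * t) := by
        have h1 : ‖h • (Φ 0 t δ)‖ ≤ ‖Efl (h • δ) t‖ + ‖u t‖ := by
          rw [hsplit]; exact norm_sub_le _ _
        have h2 : ‖h • (Φ 0 t δ)‖ = h * ‖Φ 0 t δ‖ := by
          rw [norm_smul, Real.norm_eq_abs, abs_of_pos hhpos]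
        have h3 := hLES (h • δ) t ht (by rw [hnorm_hδ]; exact hhr1)
        rw [hnorm_hδ] at h3
        rw [h2] at h1
        calc h * ‖Φ 0 t δ‖ ≤ ‖Efl (h • δ) t‖ + ‖u t‖ := h1
          _ ≤ k1 * exp (-lam1 * t) * (h * ‖δ‖) + εg * exp (K' * t) := add_le_add h3 hut
      have hεgD : εg * exp (K' * t) = h * c := by
        rw [hεg, hc']
        field_simp
        ring
      rw [hεgD] at hnorm1
      have : h * ‖Φ 0 t δ‖ ≤ h * (k1 * exp (-lam1 * t) * ‖δ‖ + c) := by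
        rw [mul_add]
        calc h * ‖Φ 0 t δ‖ ≤ k1 * exp (-lam1 * t) * (h * ‖δ‖) + h * c := hnorm1
          _ = h * (k1 * exp (-lam1 * t) * ‖δ‖) + h * c := by ring
      exact le_of_mul_le_mul_left this hhpos
    obtain ⟨L, hL0, hL⟩ : ∃ L, 0 ≤ L ∧
        ∀ x ∈ closedBall (0:Euc n) (ε/2), ‖fderiv ℝ F x - A‖ ≤ L * ‖x‖ := by
      have hsub : closedBall (0:Euc n) (ε/2) ⊆ ball (0:Euc n) ε :=
        closedBall_subset_ball (by linarith)
      have hd1 : ContDiffOn ℝ 1 (fderiv ℝ F) (ball (0:Euc n) ε) :=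
        hF2.fderiv_of_isOpen isOpen_ball (by norm_num)
      have hd2 : ContinuousOn (fderiv ℝ (fderiv ℝ F)) (ball (0:Euc n) ε) :=
        hd1.continuousOn_fderiv_of_isOpen isOpen_ball le_rfl
      obtain ⟨L0, hL0b⟩ := (isCompact_closedBall (0:Euc n) (ε/2)).exists_bound_of_continuousOn (f := fderiv ℝ (fderiv ℝ F))
        (hd2.mono hsub)
      have hdiff : ∀ x ∈ closedBall (0:Euc n) (ε/2), DifferentiableAt ℝ (fderiv ℝ F) x :=
        fun x hx => (hd1.differentiableOn one_ne_zero).differentiableAt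
          (isOpen_ball.mem_nhds (hsub hx))
      refine ⟨max L0 0, le_max_right _ _, fun x hx => ?_⟩
      have h0mem : (0:Euc n) ∈ closedBall (0:Euc n) (ε/2) := by
        simp [mem_closedBall]; positivity
      have := Convex.norm_image_sub_le_of_norm_fderiv_le (C := max L0 0) hdiff
        (fun z hz => le_max_of_le_left (hL0b z hz)) (convex_closedBall _ _) h0mem hx
      rw [sub_zero] at this
      rw [hA]
      exact this
    set lamt := lam1 / 2 with hlamt
    have hlamt0 : 0 < lamt := by positivity
    set r2 := min r1 (min (ε/(2*(k1+1))) (lam1/(2*(k1^2*L+1)))) with hr2def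
    have hr20 : 0 < r2 := by
      refine lt_min hr1 (lt_min (by positivity) (by positivity))
    have hr21 : r2 ≤ r1 := min_le_left _ _
    set K := k1^2 * L * r2 with hKdef
    have hK0 : 0 ≤ K := by positivity
    have hKle : K ≤ lam1 / 2 := by
      have h1 : r2 ≤ lam1 / (2*(k1^2*L+1)) := le_trans (min_le_right _ _) (min_le_right _ _)
      have h2 : (0:ℝ) < 2*(k1^2*L+1) := by positivity
      rw [le_div_iff₀ h2] at h1
      rw [hKdef]
      nlinarith [mul_nonneg (mul_nonneg (sq_nonneg k1) hL0) hr20.le,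
        mul_nonneg (sq_nonneg k1) hL0]
    have hsmall : ∀ e, ‖e‖ ≤ r2 → ∀ t, 0 ≤ t → ‖Φ e t‖ ≤ k1 * exp (-lamt * t) := by
      intro e he
      have hE1 : ∀ s, 0 ≤ s → ‖Efl e s‖ ≤ k1 * ‖e‖ := by
        intro s hs
        have h1 := hLES e s hs (le_trans he hr21)
        have hexp : exp (-lam1 * s) ≤ 1 := exp_le_one_iff.2 (by nlinarith)
        have h5 : k1 * ‖e‖ * exp (-lam1 * s) ≤ k1 * ‖e‖ * 1 :=
          mul_le_mul_of_nonneg_left hexp (by positivity)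
        nlinarith [h5]
      have hEhalf : ∀ s, 0 ≤ s → Efl e s ∈ closedBall (0:Euc n) (ε/2) := by
        intro s hs
        have h1 := hE1 s hs
        have hr2ε : k1 * r2 ≤ ε/2 := by
          have h2 : r2 ≤ ε/(2*(k1+1)) := le_trans (min_le_right _ _) (min_le_left _ _)
          rw [le_div_iff₀ (by positivity)] at h2
          nlinarith
        simp only [mem_closedBall, dist_zero_right]
        nlinarith [mul_le_mul_of_nonneg_left he hk1.le]
      have hm : ∀ s, 0 ≤ s → k1 * ‖fderiv ℝ F (Efl e s) - A‖ ≤ K := by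
        intro s hs
        have h1 := hL _ (hEhalf s hs)
        have h2 : ‖Efl e s‖ ≤ k1 * r2 := le_trans (hE1 s hs)
          (mul_le_mul_of_nonneg_left he hk1.le)
        have h3 : L * ‖Efl e s‖ ≤ L * (k1 * r2) :=
          mul_le_mul_of_nonneg_left h2 hL0
        rw [hKdef]
        nlinarith
      -- the function χ
      set χ : ℝ → ℝ := fun s => exp (lam1 * max s 0) * ‖Φ e (max s 0)‖ with hχdef
      have hχcont : Continuous χ := by
        have hmax : Continuous (fun s : ℝ => max s 0) := continuous_id.max continuous_const
        have hmem : ∀ s : ℝ, max s 0 ∈ Ici (0:ℝ) := fun s => mem_Ici.2 (le_max_right _ _)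
        have h1 : Continuous (fun s : ℝ => Φ e (max s 0)) :=
          (hΦcont e).comp_continuous hmax hmem
        exact ((Real.continuous_exp.comp (continuous_const.mul hmax))).mul h1.norm
      have hχeq : ∀ s, 0 ≤ s → χ s = exp (lam1 * s) * ‖Φ e s‖ := by
        intro s hs
        show exp (lam1 * max s 0) * ‖Φ e (max s 0)‖ = exp (lam1 * s) * ‖Φ e s‖
        rw [max_eq_left hs]
      have hχ0 : ∀ s, 0 ≤ χ s := fun s => by positivity
      -- integral inequality
      have hkey : ∀ t, 0 ≤ t → χ t ≤ k1 + K * ∫ s in (0:ℝ)..t, χ s := by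
        intro t ht
        set B : ℝ → Euc n →L[ℝ] Euc n := fun s => fderiv ℝ F (Efl e s) with hBdef
        set G : ℝ → Euc n →L[ℝ] Euc n := fun s => (Φ 0 (t - s)) ∘L (Φ e s) with hGdef
        set G' : ℝ → Euc n →L[ℝ] Euc n :=
          fun s => (Φ 0 (t - s)) ∘L ((B s - A) ∘L (Φ e s)) with hG'def
        have hmapsub : MapsTo (fun s : ℝ => t - s) (Icc 0 t) (Ici 0) :=
          fun s hs => by simp only [mem_Ici]; linarith [hs.2]
        have hPcont : ContinuousOn (fun s => Φ 0 (t - s)) (Icc 0 t) :=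
          (hΦcont 0).comp ((continuous_const.sub continuous_id).continuousOn) hmapsub
        have hGcontOn : ContinuousOn G (Icc 0 t) :=
          hPcont.clm_comp ((hΦcont e).mono Icc_subset_Ici_self)
        have hG'contOn : ContinuousOn G' (Icc 0 t) := by
          apply hPcont.clm_comp
          apply ContinuousOn.clm_comp
          · exact ((hGcont.comp_continuousOn ((hEcont e).mono Icc_subset_Ici_self)).sub
              continuousOn_const)
          · exact (hΦcont e).mono Icc_subset_Ici_self
        have hGderiv : ∀ s ∈ Ioo 0 t, HasDerivAt G (G' s) s := by
          intro s hs
          have h0ts : (0:ℝ) ≤ t - s := by linarith [hs.2]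
          have hPu : HasDerivAt (Φ 0) (A ∘L Φ 0 (t - s)) (t - s) := by
            rcases eq_or_lt_of_le h0ts with heq | hlt
            · exfalso; linarith [hs.1, hs.2, heq]
            · exact (hPd (t - s) h0ts).hasDerivAt (Ici_mem_nhds hlt)
          have hsub : HasDerivAt (fun s : ℝ => t - s) (-1) s := by
            simpa using (hasDerivAt_id s).const_sub t
          have hP : HasDerivAt (fun s => Φ 0 (t - s)) (-(A ∘L Φ 0 (t - s))) s := by
            have := hPu.scomp s hsub
            simpa [Function.comp_def] using this
          have hΦe : HasDerivAt (Φ e) (B s ∘L Φ e s) s :=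
            (hΦ e s hs.1.le).hasDerivAt (Ici_mem_nhds hs.1)
          have hcomp := hP.clm_comp hΦe
          have heq : (-(A ∘L Φ 0 (t - s))) ∘L Φ e s + (Φ 0 (t - s)) ∘L (B s ∘L Φ e s)
              = G' s := by
            refine ContinuousLinearMap.ext fun x => ?_
            have h9 := ContinuousLinearMap.ext_iff.1 (hPA (t - s) h0ts) (Φ e s x)
            simp only [ContinuousLinearMap.comp_apply] at h9
            simp only [hG'def, ContinuousLinearMap.add_apply, ContinuousLinearMap.comp_apply,
              ContinuousLinearMap.neg_apply, ContinuousLinearMap.sub_apply, map_sub]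
            rw [h9]
            abel
          rw [← heq]
          exact hcomp
        have hint : IntervalIntegrable G' MeasureTheory.volume 0 t := by
          apply ContinuousOn.intervalIntegrable
          rwa [uIcc_of_le ht]
        have hFTC := intervalIntegral.integral_eq_sub_of_hasDeriv_right_of_le ht hGcontOn
          (fun s hs => (hGderiv s hs).hasDerivWithinAt) hint
        have hGt : G t = Φ e t := by
          rw [hGdef]; simp only [sub_self, hΦ0]; exact ContinuousLinearMap.id_comp _
        have hG0 : G 0 = Φ 0 t := by
          rw [hGdef]; simp only [sub_zero, hΦ0]; exact ContinuousLinearMap.comp_id _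
        have hid : Φ e t = Φ 0 t + ∫ s in (0:ℝ)..t, G' s := by
          rw [hFTC, hGt, hG0]; abel
        -- norm bound of integrand
        have hptwise : ∀ s ∈ Icc 0 t, ‖G' s‖ ≤ K * exp (-lam1 * t) * χ s := by
          intro s hs
          have h1 : ‖G' s‖ ≤ ‖Φ 0 (t - s)‖ * (‖B s - A‖ * ‖Φ e s‖) := by
            calc ‖G' s‖ ≤ ‖Φ 0 (t - s)‖ * ‖(B s - A) ∘L Φ e s‖ :=
                  ContinuousLinearMap.opNorm_comp_le _ _
              _ ≤ ‖Φ 0 (t - s)‖ * (‖B s - A‖ * ‖Φ e s‖) := by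
                  apply mul_le_mul_of_nonneg_left (ContinuousLinearMap.opNorm_comp_le _ _)
                    (norm_nonneg _)
          have h2 : ‖Φ 0 (t - s)‖ ≤ k1 * exp (-lam1 * (t - s)) :=
            hnormP (t - s) (by linarith [hs.2])
          have hexpeq : exp (-lam1 * (t - s)) = exp (-lam1 * t) * exp (lam1 * s) := by
            rw [← exp_add]; ring_nf
          have h3 := hm s hs.1
          have hχs : χ s = exp (lam1 * s) * ‖Φ e s‖ := hχeq s hs.1
          calc ‖G' s‖ ≤ ‖Φ 0 (t - s)‖ * (‖B s - A‖ * ‖Φ e s‖) := h1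
            _ ≤ (k1 * exp (-lam1 * (t - s))) * (‖B s - A‖ * ‖Φ e s‖) := by
                apply mul_le_mul_of_nonneg_right h2
                  (mul_nonneg (norm_nonneg _) (norm_nonneg _))
            _ = (k1 * ‖B s - A‖) * exp (-lam1 * t) * (exp (lam1 * s) * ‖Φ e s‖) := by
                rw [hexpeq]; ring
            _ ≤ K * exp (-lam1 * t) * (exp (lam1 * s) * ‖Φ e s‖) := by
                apply mul_le_mul_of_nonneg_right _ (by positivity)
                exact mul_le_mul_of_nonneg_right h3 (exp_pos _).le
            _ = K * exp (-lam1 * t) * χ s := by rw [hχs]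
        have hnormint : ‖∫ s in (0:ℝ)..t, G' s‖ ≤
            K * exp (-lam1 * t) * ∫ s in (0:ℝ)..t, χ s := by
          calc ‖∫ s in (0:ℝ)..t, G' s‖ ≤ ∫ s in (0:ℝ)..t, ‖G' s‖ :=
                intervalIntegral.norm_integral_le_integral_norm ht
            _ ≤ ∫ s in (0:ℝ)..t, K * exp (-lam1 * t) * χ s := by
                apply intervalIntegral.integral_mono_on ht _ _ hptwise
                · exact hint.norm
                · exact (hχcont.intervalIntegrable 0 t).const_mul _
            _ = K * exp (-lam1 * t) * ∫ s in (0:ℝ)..t, χ s := by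
                rw [← intervalIntegral.integral_const_mul]
        have hΦet : ‖Φ e t‖ ≤ k1 * exp (-lam1 * t)
            + K * exp (-lam1 * t) * ∫ s in (0:ℝ)..t, χ s := by
          rw [hid]
          calc ‖Φ 0 t + ∫ s in (0:ℝ)..t, G' s‖
              ≤ ‖Φ 0 t‖ + ‖∫ s in (0:ℝ)..t, G' s‖ := norm_add_le _ _
            _ ≤ k1 * exp (-lam1 * t) + K * exp (-lam1 * t) * ∫ s in (0:ℝ)..t, χ s :=
                add_le_add (hnormP t ht) hnormint
        -- multiply by exp (lam1 * t)
        have hexpc : exp (-lam1 * t) * exp (lam1 * t) = 1 := by rw [← exp_add]; simp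
        have h6 := mul_le_mul_of_nonneg_right hΦet (exp_pos (lam1 * t)).le
        rw [hχeq t ht]
        calc exp (lam1 * t) * ‖Φ e t‖ = ‖Φ e t‖ * exp (lam1 * t) := by ring
          _ ≤ (k1 * exp (-lam1 * t) + K * exp (-lam1 * t) * ∫ s in (0:ℝ)..t, χ s)
              * exp (lam1 * t) := h6
          _ = k1 * (exp (-lam1 * t) * exp (lam1 * t))
              + K * (exp (-lam1 * t) * exp (lam1 * t)) * ∫ s in (0:ℝ)..t, χ s := by ring
          _ = k1 + K * ∫ s in (0:ℝ)..t, χ s := by rw [hexpc]; ring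
      -- Gronwall for w
      set w : ℝ → ℝ := fun τ => k1 + K * ∫ s in (0:ℝ)..τ, χ s with hwdef
      have hw' : ∀ τ : ℝ, HasDerivAt w (K * χ τ) τ := by
        intro τ
        have h1 : HasDerivAt (fun τ => ∫ s in (0:ℝ)..τ, χ s) (χ τ) τ :=
          intervalIntegral.integral_hasDerivAt_right (hχcont.intervalIntegrable 0 τ)
            (hχcont.stronglyMeasurableAtFilter MeasureTheory.volume (𝓝 τ))
            hχcont.continuousAt
        exact (h1.const_mul K).const_add k1
      have hw0 : ∀ τ, 0 ≤ τ → χ τ ≤ w τ := fun τ hτ => hkey τ hτ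
      have hwpos : ∀ τ, 0 ≤ τ → 0 ≤ w τ := by
        intro τ hτ
        have h1 : 0 ≤ ∫ s in (0:ℝ)..τ, χ s :=
          intervalIntegral.integral_nonneg hτ (fun s _ => hχ0 s)
        rw [hwdef]
        have := hk1.le
        positivity
      intro t ht
      have hwgr : w t ≤ k1 * exp (K * t) := by
        have := Fact1Aux.gronwall_norm_le (X := ℝ) w (fun τ => K * χ τ) K k1 0 t
          (fun τ _ => (hw' τ).continuousAt.continuousWithinAt)
          (fun τ hτ => (hw' τ).hasDerivWithinAt)
          (by simp [hwdef, intervalIntegral.integral_same]; exact (abs_of_pos hk1).le)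
          ?_ t (right_mem_Icc.2 ht)
        · rw [gronwallBound_ε0] at this
          calc w t ≤ ‖w t‖ := le_abs_self _
            _ ≤ k1 * exp (K * t) + 0 := by simpa using this
            _ = k1 * exp (K * t) := by ring
        · intro τ hτ
          have h1 : ‖K * χ τ‖ = K * χ τ := abs_of_nonneg (mul_nonneg hK0 (hχ0 τ))
          rw [h1]
          have h2 : w τ ≤ ‖w τ‖ := le_abs_self _
          have h3 := hw0 τ hτ.1
          have h4 := mul_le_mul_of_nonneg_left (le_trans h3 h2) hK0
          linarith
      -- conclude
      have hχt := le_trans (hw0 t ht) hwgr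
      rw [hχeq t ht] at hχt
      -- exp (lam1 t) ‖Φ e t‖ ≤ k1 exp (K t) with K ≤ lam1/2
      have hfin : ‖Φ e t‖ ≤ k1 * exp ((K - lam1) * t) := by
        have hexpc : exp (lam1 * t) * exp (-(lam1) * t) = 1 := by rw [← exp_add]; simp
        have h6 := mul_le_mul_of_nonneg_right hχt (exp_pos (-lam1 * t)).le
        have h7 : exp (K * t) * exp (-lam1 * t) = exp ((K - lam1) * t) := by
          rw [← exp_add]; ring_nf
        calc ‖Φ e t‖ = exp (lam1 * t) * ‖Φ e t‖ * exp (-lam1 * t) := by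
              rw [mul_comm (exp (lam1 * t)) _, mul_assoc, hexpc]; ring
          _ ≤ k1 * exp (K * t) * exp (-lam1 * t) := h6
          _ = k1 * exp ((K - lam1) * t) := by rw [mul_assoc, h7]
      have h8 : exp ((K - lam1) * t) ≤ exp (-lamt * t) := by
        apply exp_le_exp.2
        rw [hlamt]
        nlinarith
      calc ‖Φ e t‖ ≤ k1 * exp ((K - lam1) * t) := hfin
        _ ≤ k1 * exp (-lamt * t) := mul_le_mul_of_nonneg_left h8 hk1.le
    have hcocE : ∀ e T u, 0 ≤ T → 0 ≤ u → Efl e (T + u) = Efl (Efl e T) u := by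
      intro e T u hT hu
      have hmap : MapsTo (fun v : ℝ => T + v) (Icc 0 u) (Ici 0) :=
        fun v hv => by simp only [mem_Ici]; linarith [hv.1]
      have := Fact1Aux.eqOn_traj F hF u (fun v => Efl e (T + v)) (Efl (Efl e T))
        (ContinuousOn.comp (hEcont e)
          ((continuous_const.add continuous_id).continuousOn) hmap)
        ((hEcont (Efl e T)).mono Icc_subset_Ici_self)
        (fun s hs => (Fact1Aux.shift_deriv (Efl e) (fun t => F (Efl e t)) T hT
          (hflow e) s hs.1).mono (Ici_subset_Ici.2 hs.1))
        (fun s hs => (hflow (Efl e T) s hs.1).mono (Ici_subset_Ici.2 hs.1))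
        (by simp [hinit])
      exact this (right_mem_Icc.2 hu)
    have hcocΦ : ∀ e T u, 0 ≤ T → 0 ≤ u →
        Φ e (T + u) = (Φ (Efl e T) u) ∘L (Φ e T) := by
      intro e T u hT hu
      set e' := Efl e T with he'
      have hmap : MapsTo (fun v : ℝ => T + v) (Icc 0 u) (Ici 0) :=
        fun v hv => by simp only [mem_Ici]; linarith [hv.1]
      have := Fact1Aux.lin_eqOn (fun v => fderiv ℝ F (Efl e' v))
        (hGcont.comp_continuousOn (hEcont e')) u
        (fun v => Φ e (T + v)) (fun v => (Φ e' v) ∘L (Φ e T))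
        (ContinuousOn.comp (hΦcont e)
          ((continuous_const.add continuous_id).continuousOn) hmap)
        ((hcompLcont (Φ e T)).comp_continuousOn ((hΦcont e').mono Icc_subset_Ici_self))
        (fun v hv => by
          have h1 := (Fact1Aux.shift_deriv (Φ e)
            (fun t => (fderiv ℝ F (Efl e t)) ∘L Φ e t) T hT (hΦ e) v hv.1).mono
            (Ici_subset_Ici.2 hv.1)
          rwa [hcocE e T v hT hv.1, ← he'] at h1)
        (fun v hv => by
          have h1 := (((hΦ e' v hv.1).mono (Ici_subset_Ici.2 hv.1)).clm_comp
            (hasDerivWithinAt_const v (Ici v) (Φ e T)))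
          simpa [ContinuousLinearMap.comp_assoc] using h1)
        (by simp [hΦ0])
      have h2 := this (right_mem_Icc.2 hu)
      simpa using h2
    have hnbhd : ∀ e₀ : Euc n, ∃ η > (0:ℝ), ∃ C, 0 ≤ C ∧
        ∀ e ∈ ball e₀ η, ∀ t, 0 ≤ t → ‖Φ e t‖ ≤ C * exp (-lamt * t) := by
      intro e₀
      -- a time at which the reference trajectory is deep inside the small ball
      obtain ⟨T, hT0, hTsm⟩ : ∃ T, 0 ≤ T ∧ ‖Efl e₀ T‖ < r2/2 := by
        have h1 : ∀ᶠ t in atTop, ‖Efl e₀ t‖ < r2/2 :=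
          (hGA e₀).eventually (gt_mem_nhds (by positivity))
        obtain ⟨T, hT⟩ := (h1.and (eventually_ge_atTop (0:ℝ))).exists
        exact ⟨T, hT.2, hT.1⟩
      -- bound on the reference trajectory over [0, T]
      obtain ⟨R0, hR0⟩ := (isCompact_Icc.image_of_continuousOn
        ((hEcont e₀).mono Icc_subset_Ici_self)).isBounded.subset_closedBall 0
      have hR0' : ∀ u ∈ Icc 0 T, ‖Efl e₀ u‖ ≤ max R0 0 := by
        intro u hu
        have := hR0 (mem_image_of_mem (Efl e₀) hu)
        rw [mem_closedBall, dist_zero_right] at this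
        exact le_max_of_le_left this
      set R := max R0 0 + 1 with hRdef
      obtain ⟨KF, hKF⟩ := Fact1Aux.lipschitzOn_ball F hF R
      obtain ⟨M0, hM0⟩ := (isCompact_closedBall (0:Euc n) R).exists_bound_of_continuousOn
        (hGcont.continuousOn)
      set M := max M0 0 with hMdef
      have hM0' : 0 ≤ M := le_max_right _ _
      have hMb : ∀ x ∈ closedBall (0:Euc n) R, ‖fderiv ℝ F x‖ ≤ M :=
        fun x hx => le_max_of_le_left (hM0 x hx)
      set η := min (1/2) (r2/2) * exp (-(KF:ℝ) * T) with hηdef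
      have hη0 : 0 < η := by
        apply mul_pos (lt_min (by norm_num) (by positivity)) (exp_pos _)
      have hηexp : η * exp ((KF:ℝ) * T) = min (1/2) (r2/2) := by
        rw [hηdef, mul_assoc, ← exp_add]
        simp
      have hexpKF1 : exp (-(KF:ℝ) * T) ≤ 1 := by
        rw [neg_mul]
        exact exp_le_one_iff.2 (neg_nonpos.2 (mul_nonneg KF.coe_nonneg hT0))
      have hηhalf : η ≤ 1/2 := by
        rw [hηdef]
        calc min (1/2) (r2/2) * exp (-(KF:ℝ) * T) ≤ (1/2) * 1 :=
            mul_le_mul (min_le_left _ _) hexpKF1 (exp_pos _).le (by norm_num)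
          _ = 1/2 := by ring
      -- continuous dependence: trajectories from the closed η-ball stay close
      have hdep : ∀ e, dist e e₀ ≤ η →
          (∀ u ∈ Icc 0 T, dist (Efl e u) (Efl e₀ u) ≤ min (1/2) (r2/2)) ∧
          (∀ u ∈ Icc 0 T, ‖Efl e u‖ ≤ R) := by
        intro e he
        set d : ℝ → ℝ := fun v => dist (Efl e v) (Efl e₀ v) with hddef
        have hdc : ContinuousOn d (Icc 0 T) := by
          have := continuous_dist.comp_continuousOn
            (ContinuousOn.prodMk ((hEcont e).mono (Icc_subset_Ici_self : Icc (0:ℝ) T ⊆ Ici 0))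
              ((hEcont e₀).mono (Icc_subset_Ici_self : Icc (0:ℝ) T ⊆ Ici 0)))
          exact this
        have hd0 : d 0 ≤ η := by
          have : d 0 = dist e e₀ := by rw [hddef]; simp [hinit]
          rw [this]; exact he
        -- main claim: d stays below 1 on [0, T]
        have hgood : ∀ v ∈ Icc 0 T, d v < 1 := by
          by_contra hbad
          push_neg at hbad
          set Bad := {v | v ∈ Icc 0 T ∧ 1 ≤ d v} with hBdef
          have hBne : Bad.Nonempty := by
            obtain ⟨v, hv1, hv2⟩ := hbad
            exact ⟨v, hv1, hv2⟩
          have hBclosed : IsClosed Bad :=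
            hdc.preimage_isClosed_of_isClosed isClosed_Icc (isClosed_Ici (a := (1:ℝ)))
          have hBcompact : IsCompact Bad :=
            isCompact_Icc.of_isClosed_subset hBclosed (fun v hv => hv.1)
          set τ := sInf Bad with hτdef
          have hτmem : τ ∈ Bad := hBcompact.sInf_mem hBne
          have hτIcc : τ ∈ Icc 0 T := hτmem.1
          have hdlt : ∀ v ∈ Ico 0 τ, d v < 1 := by
            intro v hv
            by_contra hge
            push_neg at hge
            have : v ∈ Bad := ⟨⟨hv.1, le_trans hv.2.le hτIcc.2⟩, hge⟩
            have := csInf_le ⟨0, fun x hx => hx.1.1⟩ this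
            rw [← hτdef] at this
            linarith [hv.2]
          -- both trajectories stay in the ball of radius R on [0, τ)
          have hfs : ∀ v ∈ Ico 0 τ, Efl e v ∈ closedBall (0:Euc n) R := by
            intro v hv
            have h1 : ‖Efl e₀ v‖ ≤ max R0 0 :=
              hR0' v ⟨hv.1, le_trans hv.2.le hτIcc.2⟩
            have h2 := hdlt v hv
            rw [mem_closedBall, dist_zero_right, hRdef]
            have h3 : ‖Efl e v‖ ≤ ‖Efl e₀ v‖ + d v := by
              have h9 := norm_le_insert' (Efl e v) (Efl e₀ v)
              have h10 : d v = ‖Efl e v - Efl e₀ v‖ := by rw [hddef]; exact dist_eq_norm _ _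
              linarith
            linarith
          have hgs : ∀ v ∈ Ico 0 τ, Efl e₀ v ∈ closedBall (0:Euc n) R := by
            intro v hv
            have h1 : ‖Efl e₀ v‖ ≤ max R0 0 :=
              hR0' v ⟨hv.1, le_trans hv.2.le hτIcc.2⟩
            rw [mem_closedBall, dist_zero_right, hRdef]
            linarith
          have hdist := dist_le_of_trajectories_ODE_of_mem
            (v := fun _ => F) (s := fun _ => closedBall (0:Euc n) R) (K := KF)
            (fun _ _ => hKF)
            ((hEcont e).mono (Icc_subset_Ici_self.trans' (Icc_subset_Icc_right hτIcc.2)))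
            (fun v hv => (hflow e v hv.1).mono (Ici_subset_Ici.2 hv.1))
            hfs
            ((hEcont e₀).mono (Icc_subset_Ici_self.trans' (Icc_subset_Icc_right hτIcc.2)))
            (fun v hv => (hflow e₀ v hv.1).mono (Ici_subset_Ici.2 hv.1))
            hgs
            (by simpa [hinit] using he)
            τ (right_mem_Icc.2 hτIcc.1)
          have hcontr : d τ ≤ 1/2 := by
            have h1 : η * exp ((KF:ℝ) * (τ - 0)) ≤ η * exp ((KF:ℝ) * T) := by
              apply mul_le_mul_of_nonneg_left _ hη0.le
              apply exp_le_exp.2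
              have := mul_le_mul_of_nonneg_left (by linarith [hτIcc.2] : τ - 0 ≤ T) KF.coe_nonneg
              linarith
            have h2 : d τ ≤ η * exp ((KF:ℝ) * (τ - 0)) := hdist
            rw [hηexp] at h1
            have h3 : min (1/2) (r2/2) ≤ 1/2 := min_le_left _ _
            linarith
          have : (1:ℝ) ≤ d τ := hτmem.2
          linarith
        -- now run the estimate on all of [0, T]
        have hfs : ∀ v ∈ Ico 0 T, Efl e v ∈ closedBall (0:Euc n) R := by
          intro v hv
          have h1 : ‖Efl e₀ v‖ ≤ max R0 0 := hR0' v ⟨hv.1, hv.2.le⟩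
          have h2 := hgood v ⟨hv.1, hv.2.le⟩
          rw [mem_closedBall, dist_zero_right, hRdef]
          have h9 := norm_le_insert' (Efl e v) (Efl e₀ v)
          have h10 : d v = ‖Efl e v - Efl e₀ v‖ := by rw [hddef]; exact dist_eq_norm _ _
          have h4 : d v < 1 := h2
          linarith
        have hgs : ∀ v ∈ Ico 0 T, Efl e₀ v ∈ closedBall (0:Euc n) R := by
          intro v hv
          have h1 : ‖Efl e₀ v‖ ≤ max R0 0 := hR0' v ⟨hv.1, hv.2.le⟩
          rw [mem_closedBall, dist_zero_right, hRdef]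
          linarith
        have hdist := dist_le_of_trajectories_ODE_of_mem
          (v := fun _ => F) (s := fun _ => closedBall (0:Euc n) R) (K := KF)
          (fun _ _ => hKF)
          ((hEcont e).mono Icc_subset_Ici_self)
          (fun v hv => (hflow e v hv.1).mono (Ici_subset_Ici.2 hv.1))
          hfs
          ((hEcont e₀).mono Icc_subset_Ici_self)
          (fun v hv => (hflow e₀ v hv.1).mono (Ici_subset_Ici.2 hv.1))
          hgs
          (by simpa [hinit] using he)
        constructor
        · intro u hu
          have h1 := hdist u hu
          have h2 : η * exp ((KF:ℝ) * (u - 0)) ≤ η * exp ((KF:ℝ) * T) := by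
            apply mul_le_mul_of_nonneg_left _ hη0.le
            apply exp_le_exp.2
            have := mul_le_mul_of_nonneg_left (by linarith [hu.2] : u - 0 ≤ T) KF.coe_nonneg
            linarith
          rw [hηexp] at h2
          exact le_trans h1 h2
        · intro u hu
          rcases eq_or_lt_of_le hu.2 with heq | hlt
          · -- u = T : use continuity? instead treat directly via hdist at u
            have h1 := hdist u hu
            have h2 : η * exp ((KF:ℝ) * (u - 0)) ≤ η * exp ((KF:ℝ) * T) := by
              apply mul_le_mul_of_nonneg_left _ hη0.le
              apply exp_le_exp.2
              have := mul_le_mul_of_nonneg_left (by linarith [hu.2] : u - 0 ≤ T) KF.coe_nonneg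
              linarith
            rw [hηexp] at h2
            have h9 := norm_le_insert' (Efl e u) (Efl e₀ u)
            have h10 : dist (Efl e u) (Efl e₀ u) = ‖Efl e u - Efl e₀ u‖ := dist_eq_norm _ _
            have h4 : ‖Efl e₀ u‖ ≤ max R0 0 := hR0' u hu
            have h5 : min (1/2) (r2/2) ≤ 1/2 := min_le_left _ _
            rw [hRdef]
            have h6 := le_trans h1 h2
            linarith
          · have := hfs u ⟨hu.1, hlt⟩
            rwa [mem_closedBall, dist_zero_right] at this
      -- the constant
      set C := (k1 + 1) * exp ((M + lamt) * T) with hCdef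
      have hC0 : 0 ≤ C := by positivity
      refine ⟨η, hη0, C, hC0, ?_⟩
      intro e heball t ht
      have he : dist e e₀ ≤ η := (mem_ball.1 heball).le
      obtain ⟨hdep1, hdep2⟩ := hdep e he
      -- Gronwall bound for Φ e on [0, T]
      have hΦT : ∀ u ∈ Icc 0 T, ‖Φ e u‖ ≤ exp (M * u) := by
        have hgr := Fact1Aux.gronwall_norm_le (Φ e)
          (fun s => (fderiv ℝ F (Efl e s)) ∘L Φ e s) M 1 0 T
          ((hΦcont e).mono Icc_subset_Ici_self)
          (fun s hs => (hΦ e s hs.1).mono (Ici_subset_Ici.2 hs.1))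
          (by rw [hΦ0]; exact ContinuousLinearMap.norm_id_le)
          ?_
        · intro u hu
          have := hgr u hu
          rwa [gronwallBound_ε0, one_mul] at this
        · intro s hs
          have h1 : Efl e s ∈ closedBall (0:Euc n) R := by
            rw [mem_closedBall, dist_zero_right]
            exact hdep2 s ⟨hs.1, hs.2.le⟩
          calc ‖(fderiv ℝ F (Efl e s)) ∘L Φ e s‖
              ≤ ‖fderiv ℝ F (Efl e s)‖ * ‖Φ e s‖ := ContinuousLinearMap.opNorm_comp_le _ _
            _ ≤ M * ‖Φ e s‖ + 0 := by
                have := mul_le_mul_of_nonneg_right (hMb _ h1) (norm_nonneg (Φ e s))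
                linarith
      rcases le_or_gt t T with htT | htT
      · -- small times
        have h1 := hΦT t ⟨ht, htT⟩
        have h2 : exp (M * t) ≤ exp (M * T) := exp_le_exp.2 (mul_le_mul_of_nonneg_left htT hM0')
        have h6 : exp ((M + lamt) * T) * exp (-lamt * t) = exp (M * T + lamt * (T - t)) := by
          rw [← exp_add]; congr 1; ring
        have h7 : exp (M * T) ≤ exp (M * T + lamt * (T - t)) :=
          exp_le_exp.2 (by nlinarith)
        calc ‖Φ e t‖ ≤ exp (M * t) := h1
          _ ≤ exp (M * T) := h2
          _ ≤ exp (M * T + lamt * (T - t)) := h7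
          _ = exp ((M + lamt) * T) * exp (-lamt * t) := h6.symm
          _ ≤ C * exp (-lamt * t) := by
              rw [hCdef]
              nlinarith [mul_pos (exp_pos ((M + lamt) * T)) (exp_pos (-lamt * t))]
      · -- large times : use the cocycle
        have hTt : t = T + (t - T) := by ring
        have h0tT : 0 ≤ t - T := by linarith
        have hcoc := hcocΦ e T (t - T) hT0 h0tT
        rw [show T + (t - T) = t by ring] at hcoc
        have he' : ‖Efl e T‖ ≤ r2 := by
          have h1 := hdep1 T (right_mem_Icc.2 hT0)
          have h2 : dist (Efl e T) (Efl e₀ T) ≤ r2/2 := le_trans h1 (min_le_right _ _)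
          have h9 := norm_le_insert' (Efl e T) (Efl e₀ T)
          have h10 : dist (Efl e T) (Efl e₀ T) = ‖Efl e T - Efl e₀ T‖ := dist_eq_norm _ _
          have h11 : ‖Efl e₀ T‖ ≤ r2/2 := hTsm.le
          linarith
        have hsm := hsmall (Efl e T) he' (t - T) h0tT
        have hΦeT : ‖Φ e T‖ ≤ exp (M * T) := hΦT T (right_mem_Icc.2 hT0)
        calc ‖Φ e t‖ = ‖(Φ (Efl e T) (t - T)) ∘L (Φ e T)‖ := by rw [hcoc]
          _ ≤ ‖Φ (Efl e T) (t - T)‖ * ‖Φ e T‖ := ContinuousLinearMap.opNorm_comp_le _ _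
          _ ≤ (k1 * exp (-lamt * (t - T))) * exp (M * T) := by
              apply mul_le_mul hsm hΦeT (norm_nonneg _) (by positivity)
          _ ≤ C * exp (-lamt * t) := by
              have h8 : exp (-lamt * (t - T)) * exp (M * T)
                  = exp ((M + lamt) * T) * exp (-lamt * t) := by
                rw [← exp_add, ← exp_add]; congr 1; ring
              calc (k1 * exp (-lamt * (t - T))) * exp (M * T)
                  = k1 * (exp ((M + lamt) * T) * exp (-lamt * t)) := by
                    rw [mul_assoc, h8]
                _ ≤ (k1 + 1) * exp ((M + lamt) * T) * exp (-lamt * t) := by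
                    nlinarith [mul_pos (exp_pos ((M + lamt) * T)) (exp_pos (-lamt * t))]
                _ = C * exp (-lamt * t) := by rw [hCdef]
    have hball : ∀ s : ℝ, ∃ C, 0 ≤ C ∧
        ∀ e ∈ closedBall (0:Euc n) s, ∀ t, 0 ≤ t → ‖Φ e t‖ ≤ C * exp (-lamt * t) := by
      intro s
      rcases lt_or_ge s 0 with hs | hs
      · exact ⟨0, le_rfl, fun e he => absurd he (by simp [closedBall_eq_empty.2 hs])⟩
      · choose η hη C hC0 hC using hnbhd
        obtain ⟨I, hI⟩ := (isCompact_closedBall (0:Euc n) s).elim_finite_subcover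
          (fun e₀ => ball e₀ (η e₀)) (fun e₀ => isOpen_ball)
          (fun e he => mem_iUnion.2 ⟨e, mem_ball_self (hη e)⟩)
        rcases I.eq_empty_or_nonempty with hIe | hIne
        · refine ⟨0, le_rfl, fun e he => ?_⟩
          exfalso; have := hI he; rw [hIe] at this; simpa using this
        · refine ⟨I.sup' hIne C, le_trans (hC0 hIne.choose) (Finset.le_sup' _ hIne.choose_spec),
            fun e he t ht => ?_⟩
          obtain ⟨e₀, he₀I, he₀⟩ := mem_iUnion₂.1 (hI he)
          exact le_trans (hC e₀ e he₀ t ht)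
            (mul_le_mul_of_nonneg_right (Finset.le_sup' _ he₀I) (exp_pos _).le)
    set S : ℝ → Set ℝ := fun s => {C | 0 ≤ C ∧
      ∀ e ∈ closedBall (0:Euc n) s, ∀ t, 0 ≤ t → ‖Φ e t‖ ≤ C * exp (-lamt * t)} with hS
    set g : ℝ → ℝ := fun s => sInf (S s) with hg
    have hSne : ∀ s, (S s).Nonempty := fun s => (hball s).imp (fun C hC => ⟨hC.1, hC.2⟩)
    have hSbdd : ∀ s, BddBelow (S s) := fun s => ⟨0, fun C hC => hC.1⟩
    have hg0 : ∀ s, 0 ≤ g s := fun s => le_csInf (hSne s) (fun C hC => hC.1)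
    have hgmono : ∀ s s', s ≤ s' → g s ≤ g s' := by
      intro s s' hss'
      apply csInf_le_csInf (hSbdd s) (hSne s')
      intro C hC
      exact ⟨hC.1, fun e he t ht => hC.2 e (closedBall_subset_closedBall hss' he) t ht⟩
    have hgbound : ∀ e t, 0 ≤ t → ‖Φ e t‖ ≤ g ‖e‖ * exp (-lamt * t) := by
      intro e t ht
      have hex : exp (-lamt * t) * exp (lamt * t) = 1 := by
        rw [← exp_add]; simp
      have h1 : ‖Φ e t‖ * exp (lamt * t) ≤ g ‖e‖ := by
        apply le_csInf (hSne _)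
        intro C hC
        have h2 := hC.2 e (by simp [mem_closedBall, dist_zero_right]) t ht
        have h3 := mul_le_mul_of_nonneg_right h2 (exp_pos (lamt * t)).le
        rw [mul_assoc, hex, mul_one] at h3
        exact h3
      have hex' : exp (lamt * t) * exp (-lamt * t) = 1 := by
        rw [← exp_add]; simp
      have h4 := mul_le_mul_of_nonneg_right h1 (exp_pos (-lamt * t)).le
      rw [mul_assoc, hex', mul_one] at h4
      exact h4
    refine ⟨lamt, hlamt0, fun s => g s + s, ?_, ?_, ?_⟩
    · intro a _ b _ hab
      have := hgmono a b hab.le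
      simp only; linarith
    · intro s hs; have := hg0 s; show (0:ℝ) ≤ g s + s; linarith
    · intro e δ t ht
      have h1 := hgbound e t ht
      calc ‖Φ e t δ‖ ≤ ‖Φ e t‖ * ‖δ‖ := (Φ e t).le_opNorm δ
        _ ≤ (g ‖e‖ * exp (-lamt*t)) * ‖δ‖ :=
            mul_le_mul_of_nonneg_right h1 (norm_nonneg δ)
        _ ≤ ((g ‖e‖ + ‖e‖) * exp (-lamt*t)) * ‖δ‖ := by
            have h2 : 0 ≤ ‖e‖ * exp (-lamt*t) * ‖δ‖ := by positivity
            nlinarith [h2]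
end

section
/- Let F : ℝ^{n} → ℝ^{n} be C¹ with F(0) = 0 and let E(e,t) denote the forward-complete flow of ė = F(e). Let Q be a symmetric positive definite matrix and let P be a symmetric positive definite matrix satisfying the Lyapunov equation (∂F/∂e)(0)ᵀ P + P (∂F/∂e)(0) = −Q. Define γ(e) := 2 (μ_max{P}/μ_min{P}) |(∂F/∂e)(e) − (∂F/∂e)(0)|. Then for all e, δ in ℝ^{n} and all t ≥ 0, |Φ(e,t) δ| ≤ √(μ_max{P}/μ_min{P}) · exp( (1/2) ∫₀ᵗ γ(E(e,s)) ds ) · exp( −(μ_min{Q}/(2 μ_max{P})) t ) · |δ|. -/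
open Real Set Filter
open scoped RealInnerProductSpace Topology

/-- Smallest eigenvalue of a symmetric operator: the infimum of its quadratic form
on the unit sphere. -/
noncomputable def muMin {n : ℕ} (A : Euc n →L[ℝ] Euc n) : ℝ :=
  sInf {r : ℝ | ∃ v : Euc n, ‖v‖ = 1 ∧ r = ⟪A v, v⟫}

/-- Largest eigenvalue of a symmetric operator: the supremum of its quadratic form
on the unit sphere. -/
noncomputable def muMax {n : ℕ} (A : Euc n →L[ℝ] Euc n) : ℝ :=
  sSup {r : ℝ | ∃ v : Euc n, ‖v‖ = 1 ∧ r = ⟪A v, v⟫}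

lemma muSet_bddAbove {n : ℕ} (A : Euc n →L[ℝ] Euc n) :
    BddAbove {r : ℝ | ∃ v : Euc n, ‖v‖ = 1 ∧ r = ⟪A v, v⟫} := by
  refine ⟨‖A‖, ?_⟩
  rintro r ⟨v, hv, rfl⟩
  calc ⟪A v, v⟫ ≤ ‖A v‖ * ‖v‖ := real_inner_le_norm _ _
    _ ≤ ‖A‖ * ‖v‖ * ‖v‖ := by
        have := A.le_opNorm v
        nlinarith [norm_nonneg v, norm_nonneg (A v)]
    _ = ‖A‖ := by rw [hv]; ring

lemma muSet_bddBelow {n : ℕ} (A : Euc n →L[ℝ] Euc n) :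
    BddBelow {r : ℝ | ∃ v : Euc n, ‖v‖ = 1 ∧ r = ⟪A v, v⟫} := by
  refine ⟨-‖A‖, ?_⟩
  rintro r ⟨v, hv, rfl⟩
  have h1 : |⟪A v, v⟫| ≤ ‖A v‖ * ‖v‖ := abs_real_inner_le_norm _ _
  have h2 : ‖A v‖ ≤ ‖A‖ * ‖v‖ := A.le_opNorm v
  rw [hv] at h1 h2
  simp only [mul_one] at h1 h2
  have := abs_le.mp (h1.trans h2)
  linarith [this.1]

lemma quad_le_muMax {n : ℕ} (A : Euc n →L[ℝ] Euc n) (v : Euc n) :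
    ⟪A v, v⟫ ≤ muMax A * ‖v‖ ^ 2 := by
  rcases eq_or_ne v 0 with rfl | hv
  · simp
  · have hn : (0:ℝ) < ‖v‖ := norm_pos_iff.mpr hv
    set u : Euc n := ‖v‖⁻¹ • v with hu
    have hu1 : ‖u‖ = 1 := by
      rw [hu, norm_smul, norm_inv, norm_norm, inv_mul_cancel₀ hn.ne']
    have hmem : ⟪A u, u⟫ ∈ {r : ℝ | ∃ v : Euc n, ‖v‖ = 1 ∧ r = ⟪A v, v⟫} := ⟨u, hu1, rfl⟩
    have hle : ⟪A u, u⟫ ≤ muMax A := le_csSup (muSet_bddAbove A) hmem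
    have hq : ⟪A u, u⟫ = ‖v‖⁻¹ * (‖v‖⁻¹ * ⟪A v, v⟫) := by
      rw [hu, map_smul, real_inner_smul_left, real_inner_smul_right]
    rw [hq] at hle
    have hk : ‖v‖⁻¹ * ‖v‖ = 1 := inv_mul_cancel₀ hn.ne'
    have key : ‖v‖⁻¹ * (‖v‖⁻¹ * ⟪A v, v⟫) * ‖v‖^2 = ⟪A v, v⟫ := by
      rw [pow_two, show ‖v‖⁻¹ * (‖v‖⁻¹ * ⟪A v, v⟫) * (‖v‖*‖v‖)
        = (‖v‖⁻¹*‖v‖)*((‖v‖⁻¹*‖v‖)*⟪A v, v⟫) from by ring, hk]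
      ring
    nlinarith [sq_nonneg ‖v‖]

lemma muMin_le_quad {n : ℕ} (A : Euc n →L[ℝ] Euc n) (v : Euc n) :
    muMin A * ‖v‖ ^ 2 ≤ ⟪A v, v⟫ := by
  rcases eq_or_ne v 0 with rfl | hv
  · simp
  · have hn : (0:ℝ) < ‖v‖ := norm_pos_iff.mpr hv
    set u : Euc n := ‖v‖⁻¹ • v with hu
    have hu1 : ‖u‖ = 1 := by
      rw [hu, norm_smul, norm_inv, norm_norm, inv_mul_cancel₀ hn.ne']
    have hmem : ⟪A u, u⟫ ∈ {r : ℝ | ∃ v : Euc n, ‖v‖ = 1 ∧ r = ⟪A v, v⟫} := ⟨u, hu1, rfl⟩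
    have hle : muMin A ≤ ⟪A u, u⟫ := csInf_le (muSet_bddBelow A) hmem
    have hq : ⟪A u, u⟫ = ‖v‖⁻¹ * (‖v‖⁻¹ * ⟪A v, v⟫) := by
      rw [hu, map_smul, real_inner_smul_left, real_inner_smul_right]
    rw [hq] at hle
    have hk : ‖v‖⁻¹ * ‖v‖ = 1 := inv_mul_cancel₀ hn.ne'
    have key : ‖v‖⁻¹ * (‖v‖⁻¹ * ⟪A v, v⟫) * ‖v‖^2 = ⟪A v, v⟫ := by
      rw [pow_two, show ‖v‖⁻¹ * (‖v‖⁻¹ * ⟪A v, v⟫) * (‖v‖*‖v‖)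
        = (‖v‖⁻¹*‖v‖)*((‖v‖⁻¹*‖v‖)*⟪A v, v⟫) from by ring, hk]
      ring
    nlinarith [sq_nonneg ‖v‖]

lemma muMin_pos {n : ℕ} (hn : 0 < n) (A : Euc n →L[ℝ] Euc n)
    (hA : ∀ v : Euc n, v ≠ 0 → 0 < ⟪A v, v⟫) : 0 < muMin A := by
  haveI : Nonempty (Fin n) := ⟨⟨0, hn⟩⟩
  obtain ⟨w, hw⟩ := exists_norm_eq (Euc n) (zero_le_one)
  have hcont : ContinuousOn (fun v : Euc n => ⟪A v, v⟫) (Metric.sphere (0:Euc n) 1) :=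
    (Continuous.inner (A.continuous) continuous_id).continuousOn
  obtain ⟨v₀, hv₀, hmin⟩ := (isCompact_sphere (0:Euc n) 1).exists_isMinOn
    ⟨w, by simpa [mem_sphere_zero_iff_norm] using hw⟩ hcont
  have hv₀1 : ‖v₀‖ = 1 := by simpa [mem_sphere_zero_iff_norm] using hv₀
  have hv₀pos : 0 < ⟪A v₀, v₀⟫ := hA v₀ (by intro h; rw [h] at hv₀1; simp at hv₀1)
  have : ⟪A v₀, v₀⟫ ≤ muMin A := by
    refine le_csInf ⟨⟪A v₀, v₀⟫, ⟨v₀, hv₀1, rfl⟩⟩ ?_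
    rintro r ⟨v, hv, rfl⟩
    exact hmin (by simpa [mem_sphere_zero_iff_norm] using hv)
  linarith

lemma muMax_pos {n : ℕ} (hn : 0 < n) (A : Euc n →L[ℝ] Euc n)
    (hA : ∀ v : Euc n, v ≠ 0 → 0 < ⟪A v, v⟫) : 0 < muMax A := by
  haveI : Nonempty (Fin n) := ⟨⟨0, hn⟩⟩
  obtain ⟨w, hw⟩ := exists_norm_eq (Euc n) (zero_le_one)
  have hwne : w ≠ 0 := by intro h; rw [h] at hw; simp at hw
  have : ⟪A w, w⟫ ≤ muMax A := le_csSup (muSet_bddAbove A) ⟨w, hw, rfl⟩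
  linarith [hA w hwne]

lemma muMin_le_muMax {n : ℕ} (hn : 0 < n) (A : Euc n →L[ℝ] Euc n) :
    muMin A ≤ muMax A := by
  haveI : Nonempty (Fin n) := ⟨⟨0, hn⟩⟩
  obtain ⟨w, hw⟩ := exists_norm_eq (Euc n) (zero_le_one)
  exact (csInf_le (muSet_bddBelow A) ⟨w, hw, rfl⟩).trans
    (le_csSup (muSet_bddAbove A) ⟨w, hw, rfl⟩)

/-- Cauchy–Schwarz for positive semidefinite selfadjoint form. -/
lemma psd_cauchy_schwarz {n : ℕ} (P : Euc n →L[ℝ] Euc n) (hPsa : IsSelfAdjoint P)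
    (hP : ∀ v : Euc n, 0 ≤ ⟪P v, v⟫) (a b : Euc n) :
    ⟪P a, b⟫ ≤ Real.sqrt ⟪P a, a⟫ * Real.sqrt ⟪P b, b⟫ := by
  have hsym : ∀ u v : Euc n, ⟪P u, v⟫ = ⟪P v, u⟫ := by
    intro u v
    have h1 : ⟪P u, v⟫ = ⟪u, P v⟫ := by
      conv_lhs => rw [← hPsa.adjoint_eq]
      exact ContinuousLinearMap.adjoint_inner_left P v u
    rw [h1, real_inner_comm]
  have hquad : ∀ x : ℝ, 0 ≤ ⟪P b, b⟫ * (x * x) + (2 * ⟪P a, b⟫) * x + ⟪P a, a⟫ := by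
    intro x
    have := hP (a + x • b)
    have expand : ⟪P (a + x • b), a + x • b⟫ =
        ⟪P a, a⟫ + x * ⟪P a, b⟫ + x * ⟪P b, a⟫ + x * (x * ⟪P b, b⟫) := by
      simp only [map_add, map_smul, inner_add_left, inner_add_right,
        real_inner_smul_left, real_inner_smul_right]
      ring
    rw [expand, hsym b a] at this
    nlinarith [this]
  have hd := discrim_le_zero hquad
  rw [discrim] at hd
  have hsq : ⟪P a, b⟫ ^ 2 ≤ ⟪P a, a⟫ * ⟪P b, b⟫ := by nlinarith
  calc ⟪P a, b⟫ ≤ |⟪P a, b⟫| := le_abs_self _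
    _ = Real.sqrt (⟪P a, b⟫ ^ 2) := (Real.sqrt_sq_eq_abs _).symm
    _ ≤ Real.sqrt (⟪P a, a⟫ * ⟪P b, b⟫) := Real.sqrt_le_sqrt hsq
    _ = Real.sqrt ⟪P a, a⟫ * Real.sqrt ⟪P b, b⟫ := Real.sqrt_mul (hP a) _

/-- Symmetry of a selfadjoint form. -/
lemma sa_comm {n : ℕ} (P : Euc n →L[ℝ] Euc n) (hPsa : IsSelfAdjoint P) (u v : Euc n) :
    ⟪P u, v⟫ = ⟪P v, u⟫ := by
  have h1 : ⟪P u, v⟫ = ⟪u, P v⟫ := by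
    conv_lhs => rw [← hPsa.adjoint_eq]
    exact ContinuousLinearMap.adjoint_inner_left P v u
  rw [h1, real_inner_comm]

set_option maxHeartbeats 1000000 in
/-- Grönwall-type estimate (see statement). -/
theorem gronwall_linearized_bound
    {n : ℕ}
    (F : Euc n → Euc n) (hF : ContDiff ℝ 1 F) (hF0 : F 0 = 0)
    (Efl : Euc n → ℝ → Euc n)
    (hinit : ∀ e, Efl e 0 = e)
    (hflow : ∀ e t, 0 ≤ t → HasDerivWithinAt (Efl e) (F (Efl e t)) (Ici 0) t)
    (Φ : Euc n → ℝ → Euc n →L[ℝ] Euc n)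
    (hΦ0 : ∀ e, Φ e 0 = ContinuousLinearMap.id ℝ (Euc n))
    (hΦ : ∀ e t, 0 ≤ t →
      HasDerivWithinAt (Φ e) ((fderiv ℝ F (Efl e t)) ∘L Φ e t) (Ici 0) t)
    -- symmetric positive definite P and Q with the Lyapunov equation
    (Q P : Euc n →L[ℝ] Euc n)
    (hQsa : IsSelfAdjoint Q) (hQpos : ∀ v, v ≠ 0 → 0 < ⟪Q v, v⟫)
    (hPsa : IsSelfAdjoint P) (hPpos : ∀ v, v ≠ 0 → 0 < ⟪P v, v⟫)
    (hLyap : ContinuousLinearMap.adjoint (fderiv ℝ F 0) ∘L P + P ∘L fderiv ℝ F 0 = -Q) :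
    ∀ (e δ : Euc n) (t : ℝ), 0 ≤ t →
      ‖Φ e t δ‖ ≤ Real.sqrt (muMax P / muMin P) *
        exp ((1/2) * ∫ s in (0:ℝ)..t,
          2 * (muMax P / muMin P) * ‖fderiv ℝ F (Efl e s) - fderiv ℝ F 0‖) *
        exp (-(muMin Q / (2 * muMax P)) * t) * ‖δ‖ := by
  intro e δ t₀ ht₀
  rcases Nat.eq_zero_or_pos n with hn0 | hn
  · subst hn0
    have hδ : δ = 0 := by ext i; exact i.elim0
    simp only [hδ, map_zero, norm_zero, mul_zero]
    exact le_refl 0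
  · -- abbreviations
    have hPpsd : ∀ v : Euc n, 0 ≤ ⟪P v, v⟫ := by
      intro v
      rcases eq_or_ne v 0 with rfl | h
      · simp
      · exact (hPpos v h).le
    have hmP : 0 < muMin P := muMin_pos hn P hPpos
    have hMP : 0 < muMax P := muMax_pos hn P hPpos
    have hmQ : 0 < muMin Q := muMin_pos hn Q hQpos
    set c : ℝ := muMin Q / muMax P with hc
    have hcpos : 0 < c := div_pos hmQ hMP
    -- derivative of the solution of the linearized equation
    have hx : ∀ t, 0 ≤ t → HasDerivWithinAt (fun s => Φ e s δ)
        (fderiv ℝ F (Efl e t) (Φ e t δ)) (Ici 0) t := by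
      intro t ht
      have h := (hΦ e t ht).clm_apply (hasDerivWithinAt_const t (Ici 0) δ)
      simpa using h
    -- the Lyapunov function along the solution
    have hVderiv : ∀ t, 0 ≤ t → HasDerivWithinAt (fun s => ⟪P (Φ e s δ), Φ e s δ⟫)
        (⟪P (Φ e t δ), fderiv ℝ F (Efl e t) (Φ e t δ)⟫ +
          ⟪P (fderiv ℝ F (Efl e t) (Φ e t δ)), Φ e t δ⟫) (Ici 0) t := by
      intro t ht
      have hPx : HasDerivWithinAt (fun s => P (Φ e s δ))
          (P (fderiv ℝ F (Efl e t) (Φ e t δ))) (Ici 0) t := by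
        have := (hasDerivWithinAt_const t (Ici 0) P).clm_apply (hx t ht)
        simpa using this
      exact hPx.inner ℝ (hx t ht)
    -- the time-varying Gronwall coefficient, extended continuously to all of ℝ
    set g : ℝ → ℝ :=
      fun s => 2 * (muMax P / muMin P) * ‖fderiv ℝ F (Efl e (max s 0)) - fderiv ℝ F 0‖
      with hgdef
    have hgcont : Continuous g := by
      have h1 : Continuous (fderiv ℝ F) := hF.continuous_fderiv one_ne_zero
      have hE : ContinuousOn (Efl e) (Ici 0) := fun t ht => (hflow e t ht).continuousWithinAt
      have h2 : Continuous (fun s : ℝ => Efl e (max s 0)) :=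
        hE.comp_continuous (continuous_id.max continuous_const) (fun s => le_max_right s 0)
      exact continuous_const.mul ((h1.comp h2).sub continuous_const).norm
    have hgnn : ∀ s, 0 ≤ g s := by
      intro s
      apply mul_nonneg _ (norm_nonneg _)
      positivity
    set G : ℝ → ℝ := fun t => ∫ s in (0:ℝ)..t, g s with hGdef
    have hG : ∀ t, HasDerivAt G (g t) t := fun t =>
      (hgcont.integral_hasStrictDerivAt 0 t).hasDerivAt
    have hGcont : Continuous G :=
      continuous_iff_continuousAt.mpr fun t => (hG t).continuousAt
    -- the key differential inequality
    have key : ∀ t, 0 ≤ t →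
        ⟪P (Φ e t δ), fderiv ℝ F (Efl e t) (Φ e t δ)⟫ +
          ⟪P (fderiv ℝ F (Efl e t) (Φ e t δ)), Φ e t δ⟫
        ≤ (g t - c) * ⟪P (Φ e t δ), Φ e t δ⟫ := by
      intro t ht
      set y : Euc n := Φ e t δ with hy
      set D : Euc n →L[ℝ] Euc n := fderiv ℝ F (Efl e t) - fderiv ℝ F 0 with hD
      have hAy : fderiv ℝ F (Efl e t) y = fderiv ℝ F 0 y + D y := by
        simp [hD, ContinuousLinearMap.sub_apply]
      -- Lyapunov part
      have happ : ⟪(ContinuousLinearMap.adjoint (fderiv ℝ F 0)) (P y), y⟫ +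
          ⟪P (fderiv ℝ F 0 y), y⟫ = -⟪Q y, y⟫ := by
        have h := congrArg (fun T : Euc n →L[ℝ] Euc n => ⟪T y, y⟫) hLyap
        simpa [ContinuousLinearMap.add_apply, ContinuousLinearMap.comp_apply,
          inner_add_left, ContinuousLinearMap.neg_apply, inner_neg_left] using h
      have h1 : ⟪P y, fderiv ℝ F 0 y⟫ =
          ⟪(ContinuousLinearMap.adjoint (fderiv ℝ F 0)) (P y), y⟫ :=
        (ContinuousLinearMap.adjoint_inner_left (fderiv ℝ F 0) y (P y)).symm
      have hlyap : ⟪P y, fderiv ℝ F 0 y⟫ + ⟪P (fderiv ℝ F 0 y), y⟫ = -⟪Q y, y⟫ := by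
        rw [h1]; exact happ
      have hQbound : c * ⟪P y, y⟫ ≤ ⟪Q y, y⟫ := by
        have hq := muMin_le_quad Q y
        have hv := quad_le_muMax P y
        have hcm : c * muMax P = muMin Q := div_mul_cancel₀ _ hMP.ne'
        nlinarith [mul_le_mul_of_nonneg_left hv hcpos.le]
      -- perturbation part
      have hsymPD : ⟪P y, D y⟫ = ⟪P (D y), y⟫ := sa_comm P hPsa y (D y)
      have hCS : ⟪P (D y), y⟫ ≤ Real.sqrt ⟪P (D y), D y⟫ * Real.sqrt ⟪P y, y⟫ :=
        psd_cauchy_schwarz P hPsa hPpsd (D y) y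
      have hs1 : Real.sqrt ⟪P (D y), D y⟫ ≤ Real.sqrt (muMax P) * ‖D y‖ := by
        have := quad_le_muMax P (D y)
        calc Real.sqrt ⟪P (D y), D y⟫ ≤ Real.sqrt (muMax P * ‖D y‖ ^ 2) :=
              Real.sqrt_le_sqrt this
          _ = Real.sqrt (muMax P) * ‖D y‖ := by
              rw [Real.sqrt_mul hMP.le, Real.sqrt_sq (norm_nonneg _)]
      have hs2 : Real.sqrt ⟪P y, y⟫ ≤ Real.sqrt (muMax P) * ‖y‖ := by
        have := quad_le_muMax P y
        calc Real.sqrt ⟪P y, y⟫ ≤ Real.sqrt (muMax P * ‖y‖ ^ 2) := Real.sqrt_le_sqrt this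
          _ = Real.sqrt (muMax P) * ‖y‖ := by
              rw [Real.sqrt_mul hMP.le, Real.sqrt_sq (norm_nonneg _)]
      have hPDy : ⟪P (D y), y⟫ ≤ muMax P * ‖D y‖ * ‖y‖ := by
        have hmul : Real.sqrt ⟪P (D y), D y⟫ * Real.sqrt ⟪P y, y⟫ ≤
            (Real.sqrt (muMax P) * ‖D y‖) * (Real.sqrt (muMax P) * ‖y‖) := by
          apply mul_le_mul hs1 hs2 (Real.sqrt_nonneg _)
          positivity
        have hss : Real.sqrt (muMax P) * Real.sqrt (muMax P) = muMax P :=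
          Real.mul_self_sqrt hMP.le
        calc ⟪P (D y), y⟫ ≤ Real.sqrt ⟪P (D y), D y⟫ * Real.sqrt ⟪P y, y⟫ := hCS
          _ ≤ (Real.sqrt (muMax P) * ‖D y‖) * (Real.sqrt (muMax P) * ‖y‖) := hmul
          _ = muMax P * ‖D y‖ * ‖y‖ := by linear_combination (‖D y‖ * ‖y‖) * hss
      have hDy : ‖D y‖ ≤ ‖D‖ * ‖y‖ := D.le_opNorm y
      have hPDy2 : ⟪P (D y), y⟫ ≤ muMax P * ‖D‖ * ‖y‖ ^ 2 := by
        have h2 : muMax P * ‖D y‖ * ‖y‖ ≤ muMax P * (‖D‖ * ‖y‖) * ‖y‖ := by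
          have := mul_le_mul_of_nonneg_left hDy hMP.le
          nlinarith [norm_nonneg y]
        calc ⟪P (D y), y⟫ ≤ muMax P * ‖D y‖ * ‖y‖ := hPDy
          _ ≤ muMax P * (‖D‖ * ‖y‖) * ‖y‖ := h2
          _ = muMax P * ‖D‖ * ‖y‖ ^ 2 := by ring
      -- conclude
      have hgt : g t = 2 * (muMax P / muMin P) * ‖D‖ := by
        rw [hgdef]; simp only [max_eq_left ht]; rw [hD]
      have hVlb : muMin P * ‖y‖ ^ 2 ≤ ⟪P y, y⟫ := muMin_le_quad P y
      have hMm : (muMax P / muMin P) * muMin P = muMax P := div_mul_cancel₀ _ hmP.ne'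
      have hpert : ⟪P y, D y⟫ + ⟪P (D y), y⟫ ≤ g t * ⟪P y, y⟫ := by
        rw [hsymPD, hgt]
        have hco : 0 ≤ 2 * (muMax P / muMin P) * ‖D‖ := by positivity
        have hstep := mul_le_mul_of_nonneg_left hVlb hco
        have hMm2 : 2 * (muMax P / muMin P) * ‖D‖ * (muMin P * ‖y‖ ^ 2) =
            2 * muMax P * ‖D‖ * ‖y‖ ^ 2 := by
          linear_combination (2 * ‖D‖ * ‖y‖ ^ 2) * hMm
        rw [hMm2] at hstep
        linarith [hPDy2, hstep]
      have hexpand : ⟪P y, fderiv ℝ F (Efl e t) y⟫ + ⟪P (fderiv ℝ F (Efl e t) y), y⟫ =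
          (⟪P y, fderiv ℝ F 0 y⟫ + ⟪P (fderiv ℝ F 0 y), y⟫) +
          (⟪P y, D y⟫ + ⟪P (D y), y⟫) := by
        rw [hAy]
        simp only [inner_add_right, map_add, inner_add_left]
        ring
      rw [hexpand, hlyap]
      nlinarith [hpert, hQbound]
    -- the decreasing auxiliary function W
    have hWderiv : ∀ t ∈ Ioi (0:ℝ), HasDerivAt
        (fun s => ⟪P (Φ e s δ), Φ e s δ⟫ * Real.exp (c * s - G s))
        ((⟪P (Φ e t δ), fderiv ℝ F (Efl e t) (Φ e t δ)⟫ +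
          ⟪P (fderiv ℝ F (Efl e t) (Φ e t δ)), Φ e t δ⟫) * Real.exp (c * t - G t) +
          ⟪P (Φ e t δ), Φ e t δ⟫ * ((c - g t) * Real.exp (c * t - G t))) t := by
      intro t ht
      have hVat : HasDerivAt (fun s => ⟪P (Φ e s δ), Φ e s δ⟫)
          (⟪P (Φ e t δ), fderiv ℝ F (Efl e t) (Φ e t δ)⟫ +
            ⟪P (fderiv ℝ F (Efl e t) (Φ e t δ)), Φ e t δ⟫) t :=
        (hVderiv t (le_of_lt ht)).hasDerivAt (Ici_mem_nhds ht)
      have hlin : HasDerivAt (fun s => c * s - G s) (c - g t) t := by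
        have h0 : HasDerivAt (fun s : ℝ => c * s) c t := by
          simpa using (hasDerivAt_id t).const_mul c
        exact h0.sub (hG t)
      have hexp := hlin.exp
      rw [mul_comm] at hexp
      exact hVat.mul hexp
    have hWanti : AntitoneOn
        (fun s => ⟪P (Φ e s δ), Φ e s δ⟫ * Real.exp (c * s - G s)) (Ici 0) := by
      apply antitoneOn_of_deriv_nonpos (convex_Ici 0)
      · have hVcont : ContinuousOn (fun s => ⟪P (Φ e s δ), Φ e s δ⟫) (Ici 0) :=
          fun t ht => (hVderiv t ht).continuousWithinAt
        exact hVcont.mul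
          ((Real.continuous_exp.comp ((continuous_const.mul continuous_id).sub
            hGcont)).continuousOn)
      · intro t ht
        rw [interior_Ici] at ht
        exact (hWderiv t ht).differentiableAt.differentiableWithinAt
      · intro t ht
        rw [interior_Ici] at ht
        rw [(hWderiv t ht).deriv]
        have hk := key t (le_of_lt ht)
        have hexp_pos : 0 < Real.exp (c * t - G t) := Real.exp_pos _
        nlinarith [mul_le_mul_of_nonneg_right hk hexp_pos.le]
    have hW0 : ⟪P (Φ e t₀ δ), Φ e t₀ δ⟫ * Real.exp (c * t₀ - G t₀) ≤ ⟪P δ, δ⟫ := by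
      have h := hWanti self_mem_Ici ht₀ ht₀
      have hΦ00 : Φ e 0 δ = δ := by rw [hΦ0]; rfl
      have hG0 : G 0 = 0 := intervalIntegral.integral_same
      simpa [hΦ00, hG0] using h
    -- unravel
    have hVt : ⟪P (Φ e t₀ δ), Φ e t₀ δ⟫ ≤ ⟪P δ, δ⟫ * Real.exp (G t₀ - c * t₀) := by
      have h := mul_le_mul_of_nonneg_right hW0 (Real.exp_pos (G t₀ - c * t₀)).le
      have he : Real.exp (c * t₀ - G t₀) * Real.exp (G t₀ - c * t₀) = 1 := by
        rw [← Real.exp_add]; norm_num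
      calc ⟪P (Φ e t₀ δ), Φ e t₀ δ⟫
          = ⟪P (Φ e t₀ δ), Φ e t₀ δ⟫ *
            (Real.exp (c * t₀ - G t₀) * Real.exp (G t₀ - c * t₀)) := by rw [he]; ring
        _ = ⟪P (Φ e t₀ δ), Φ e t₀ δ⟫ * Real.exp (c * t₀ - G t₀) *
            Real.exp (G t₀ - c * t₀) := by ring
        _ ≤ ⟪P δ, δ⟫ * Real.exp (G t₀ - c * t₀) := h
    have hxb : muMin P * ‖Φ e t₀ δ‖ ^ 2 ≤ ⟪P (Φ e t₀ δ), Φ e t₀ δ⟫ := muMin_le_quad P _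
    have hδb : ⟪P δ, δ⟫ ≤ muMax P * ‖δ‖ ^ 2 := quad_le_muMax P δ
    -- rewrite the integral in the goal
    have hI : (∫ s in (0:ℝ)..t₀,
        2 * (muMax P / muMin P) * ‖fderiv ℝ F (Efl e s) - fderiv ℝ F 0‖) = G t₀ := by
      apply intervalIntegral.integral_congr
      intro s hs
      rw [uIcc_of_le ht₀] at hs
      rw [hgdef]
      simp only [max_eq_left hs.1]
    rw [hI]
    -- the final bound, via squares
    set R : ℝ := Real.sqrt (muMax P / muMin P) * Real.exp ((1/2) * G t₀) *
      Real.exp (-(muMin Q / (2 * muMax P)) * t₀) * ‖δ‖ with hR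
    show ‖Φ e t₀ δ‖ ≤ R
    have hRnn : 0 ≤ R := by
      rw [hR]; positivity
    have hRsq : R ^ 2 = (muMax P / muMin P) * ‖δ‖ ^ 2 * Real.exp (G t₀ - c * t₀) := by
      rw [hR]
      have h1 : Real.sqrt (muMax P / muMin P) ^ 2 = muMax P / muMin P :=
        Real.sq_sqrt (by positivity)
      have h2 : Real.exp ((1/2) * G t₀) ^ 2 = Real.exp (G t₀) := by
        rw [← Real.exp_nat_mul]
        congr 1
        push_cast
        ring
      have h3 : Real.exp (-(muMin Q / (2 * muMax P)) * t₀) ^ 2 =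
          Real.exp (-(c * t₀)) := by
        rw [← Real.exp_nat_mul, hc]
        congr 1
        field_simp
        ring
      have h4 : Real.exp (G t₀) * Real.exp (-(c * t₀)) = Real.exp (G t₀ - c * t₀) := by
        rw [← Real.exp_add]; ring_nf
      calc (Real.sqrt (muMax P / muMin P) * Real.exp ((1/2) * G t₀) *
            Real.exp (-(muMin Q / (2 * muMax P)) * t₀) * ‖δ‖) ^ 2
          = Real.sqrt (muMax P / muMin P) ^ 2 * Real.exp ((1/2) * G t₀) ^ 2 *
            Real.exp (-(muMin Q / (2 * muMax P)) * t₀) ^ 2 * ‖δ‖ ^ 2 := by ring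
        _ = (muMax P / muMin P) * (Real.exp (G t₀) * Real.exp (-(c * t₀))) * ‖δ‖ ^ 2 := by
            rw [h1, h2, h3]; ring
        _ = (muMax P / muMin P) * ‖δ‖ ^ 2 * Real.exp (G t₀ - c * t₀) := by
            rw [h4]; ring
    have hsq : ‖Φ e t₀ δ‖ ^ 2 ≤ R ^ 2 := by
      rw [hRsq]
      have hstep : muMin P * ‖Φ e t₀ δ‖ ^ 2 ≤
          muMax P * ‖δ‖ ^ 2 * Real.exp (G t₀ - c * t₀) := by
        have h5 := mul_le_mul_of_nonneg_right hδb (Real.exp_pos (G t₀ - c * t₀)).le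
        linarith [hxb.trans (hVt.trans h5)]
      rw [div_mul_eq_mul_div, div_mul_eq_mul_div, le_div_iff₀ hmP]
      nlinarith [hstep]
    nlinarith [hsq, norm_nonneg (Φ e t₀ δ), hRnn]
end

section
/- Consider the scalar system ė = −e/(1+e²) on ℝ and let E(e,t) denote its solution with E(e,0) = e. Then for all e in ℝ and all t ≥ 0, E(e,t)² exp(E(e,t)²) = e² exp(e²) exp(−2t); consequently E(e,t)² ≤ e² exp(e²) exp(−2t), i.e. |E(e,t)| ≤ k(|e|) exp(−t)·1 with k(s) = s exp(s²/2), so |E(e,t)| ≤ |e| exp(e²/2) exp(−t). -/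
open Real Set Filter
open scoped Topology

/-- For the scalar system ė = −e/(1+e²) with globally defined flow E(e,t):
E(e,t)² exp(E(e,t)²) = e² exp(e²) exp(−2t), hence
E(e,t)² ≤ e² exp(e²) exp(−2t) and |E(e,t)| ≤ |e| exp(e²/2) exp(−t),
i.e. |E(e,t)| ≤ k(|e|) exp(−t) with k(s) = s exp(s²/2). -/
theorem scalar_example_estimates
    (E : ℝ → ℝ → ℝ)
    (hinit : ∀ e, E e 0 = e)
    (hflow : ∀ e t, HasDerivAt (E e) (-(E e t) / (1 + (E e t) ^ 2)) t) :
    ∀ e t : ℝ, 0 ≤ t →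
      (E e t) ^ 2 * exp ((E e t) ^ 2) = e ^ 2 * exp (e ^ 2) * exp (-2 * t) ∧
      (E e t) ^ 2 ≤ e ^ 2 * exp (e ^ 2) * exp (-2 * t) ∧
      |E e t| ≤ |e| * exp (e ^ 2 / 2) * exp (-t) := by
  intro e t ht
  set f : ℝ → ℝ := fun s => (E e s) ^ 2 * exp ((E e s) ^ 2) * exp (2 * s) with hf
  have hderiv : ∀ s, HasDerivAt f 0 s := by
    intro s
    have hx := hflow e s
    set x := E e s with hxdef
    have hpos : (0 : ℝ) < 1 + x ^ 2 := by positivity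
    have h1 : HasDerivAt (fun u => (E e u) ^ 2) (2 * x * (-x / (1 + x ^ 2))) s := by
      refine (hx.pow 2).congr_deriv ?_
      push_cast
      ring
    have h2 : HasDerivAt (fun u => exp ((E e u) ^ 2))
        (exp (x ^ 2) * (2 * x * (-x / (1 + x ^ 2)))) s := by
      simpa [mul_comm] using h1.exp
    have h3 : HasDerivAt (fun u : ℝ => exp (2 * u)) (exp (2 * s) * 2) s := by
      have h : HasDerivAt (fun u : ℝ => 2 * u) 2 s := by
        simpa using (hasDerivAt_id s).const_mul (2 : ℝ)
      simpa [mul_comm] using h.exp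
    have h4 := (h1.mul h2).mul h3
    refine (h4.congr_deriv ?_ : HasDerivAt f _ s)
    simp only [Pi.mul_apply]
    rw [← hxdef]
    field_simp
    ring
  have hconst : ∀ s : ℝ, f s = f 0 := by
    intro s
    exact is_const_of_deriv_eq_zero
      (fun u => ((hderiv u).differentiableAt)) (fun u => (hderiv u).deriv) s 0
  have h0 : f 0 = e ^ 2 * exp (e ^ 2) := by
    simp [hf, hinit]
  have heq : (E e t) ^ 2 * exp ((E e t) ^ 2) = e ^ 2 * exp (e ^ 2) * exp (-2 * t) := by
    have hft := hconst t
    rw [h0] at hft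
    have hexp : exp (2 * t) ≠ 0 := (exp_pos _).ne'
    have : (E e t) ^ 2 * exp ((E e t) ^ 2)
        = e ^ 2 * exp (e ^ 2) / exp (2 * t) := by
      field_simp [hf] at hft ⊢
      linarith [hft]
    rw [this, div_eq_mul_inv, ← Real.exp_neg]
    ring_nf
  refine ⟨heq, ?_, ?_⟩
  · have h1 : (1 : ℝ) ≤ exp ((E e t) ^ 2) := by
      have := Real.one_le_exp (by positivity : (0:ℝ) ≤ (E e t) ^ 2)
      exact this
    nlinarith [sq_nonneg (E e t), heq]
  · have hB : (0 : ℝ) ≤ |e| * exp (e ^ 2 / 2) * exp (-t) := by positivity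
    have hsq : (E e t) ^ 2 ≤ (|e| * exp (e ^ 2 / 2) * exp (-t)) ^ 2 := by
      have ha : exp (e ^ 2 / 2) ^ 2 = exp (e ^ 2) := by
        rw [← Real.exp_nat_mul]; norm_num; ring_nf
      have hb : exp (-t) ^ 2 = exp (-2 * t) := by
        rw [← Real.exp_nat_mul]; ring_nf
      have hrw : (|e| * exp (e ^ 2 / 2) * exp (-t)) ^ 2
          = e ^ 2 * exp (e ^ 2) * exp (-2 * t) := by
        rw [mul_pow, mul_pow, sq_abs, ha, hb]
      rw [hrw]
      have h1 : (1 : ℝ) ≤ exp ((E e t) ^ 2) :=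
        Real.one_le_exp (by positivity : (0:ℝ) ≤ (E e t) ^ 2)
      nlinarith [sq_nonneg (E e t), heq]
    nlinarith [abs_nonneg (E e t), sq_abs (E e t)]
end

section
/- Consider the scalar system ė = −e/(1+e²) on ℝ with flow E(e,t), and its linearization along solutions δ̇ = −((1−E(e,t)²)/(1+E(e,t)²)) δ, whose solution from δ at time 0 is δE(δ,e,t) = exp( −t + ∫₀ᵗ 2E(e,s)²/(1+E(e,s)²) ds ) δ. Then for all e, δ in ℝ and all t ≥ 0, |δE(δ,e,t)| ≤ exp( −t + 2 k(|e|)² (1 − exp(−t)) ) |δ|, where k(s) = s exp(s²/2); in particular |δE(δ,e,t)| ≤ k̃(|e|) exp(−t)|δ| with k̃(s) = exp(2 s² exp(s²)). -/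
open Real Set Filter
open scoped Topology

/-- For the scalar system ė = −e/(1+e²) with flow E(e,t) satisfying
|E(e,t)| ≤ |e| exp(e²/2) exp(−t), the solution of the linearization along
solutions, δE(δ,e,t) = exp(−t + ∫₀ᵗ 2E(e,s)²/(1+E(e,s)²) ds) δ, satisfies
|δE(δ,e,t)| ≤ exp(−t + 2k(|e|)²(1−exp(−t))) |δ| with k(s) = s exp(s²/2), and in
particular |δE(δ,e,t)| ≤ k̃(|e|) exp(−t) |δ| with k̃(s) = exp(2 s² exp(s²)). -/
theorem scalar_example_linearized_estimates
    (E : ℝ → ℝ → ℝ)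
    (hinit : ∀ e, E e 0 = e)
    (hflow : ∀ e t, HasDerivAt (E e) (-(E e t) / (1 + (E e t) ^ 2)) t)
    (hdecay : ∀ e t, 0 ≤ t → |E e t| ≤ |e| * exp (e ^ 2 / 2) * exp (-t))
    -- the solution of the linearization along the solution through e
    (δE : ℝ → ℝ → ℝ → ℝ)
    (hδE : ∀ δ e t, δE δ e t =
      exp (-t + ∫ s in (0:ℝ)..t, 2 * (E e s) ^ 2 / (1 + (E e s) ^ 2)) * δ) :
    ∀ δ e t : ℝ, 0 ≤ t →
      |δE δ e t| ≤ exp (-t + 2 * (|e| * exp (e ^ 2 / 2)) ^ 2 * (1 - exp (-t))) * |δ| ∧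
      |δE δ e t| ≤ exp (2 * e ^ 2 * exp (e ^ 2)) * exp (-t) * |δ| := by
  intro δ e t ht
  set K : ℝ := |e| * exp (e ^ 2 / 2) with hK
  have hKnn : 0 ≤ K := by positivity
  have hEcont : Continuous (E e) :=
    continuous_iff_continuousAt.mpr fun s => (hflow e s).continuousAt
  have hfc : Continuous (fun s => 2 * (E e s) ^ 2 / (1 + (E e s) ^ 2)) := by
    apply Continuous.div (by continuity) (by continuity)
    intro s; positivity
  have hint1 : IntervalIntegrable (fun s => 2 * (E e s) ^ 2 / (1 + (E e s) ^ 2))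
      MeasureTheory.volume 0 t := hfc.intervalIntegrable 0 t
  have hint2 : IntervalIntegrable (fun s => 2 * K ^ 2 * exp (-2 * s))
      MeasureTheory.volume 0 t := (by continuity : Continuous fun s : ℝ => 2 * K ^ 2 * exp (-2 * s)).intervalIntegrable 0 t
  have hmono : (∫ s in (0:ℝ)..t, 2 * (E e s) ^ 2 / (1 + (E e s) ^ 2))
      ≤ ∫ s in (0:ℝ)..t, 2 * K ^ 2 * exp (-2 * s) := by
    apply intervalIntegral.integral_mono_on ht hint1 hint2
    intro s hs
    have hs0 : 0 ≤ s := hs.1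
    have hE : |E e s| ≤ K * exp (-s) := hdecay e s hs0
    have hE2 : (E e s) ^ 2 ≤ K ^ 2 * exp (-2 * s) := by
      have := sq_le_sq' (neg_le_of_abs_le hE) (le_of_abs_le hE)
      calc (E e s) ^ 2 ≤ (K * exp (-s)) ^ 2 := this
        _ = K ^ 2 * exp (-2 * s) := by
          rw [mul_pow, pow_two (exp (-s)), ← Real.exp_add]; ring_nf
    have hden : (1:ℝ) ≤ 1 + (E e s) ^ 2 := by nlinarith [sq_nonneg (E e s)]
    calc 2 * (E e s) ^ 2 / (1 + (E e s) ^ 2) ≤ 2 * (E e s) ^ 2 / 1 := by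
          apply div_le_div_of_nonneg_left (by positivity) one_pos hden
      _ = 2 * (E e s) ^ 2 := by ring
      _ ≤ 2 * K ^ 2 * exp (-2 * s) := by nlinarith
  have hcalc : (∫ s in (0:ℝ)..t, 2 * K ^ 2 * exp (-2 * s))
      = K ^ 2 * (1 - exp (-2 * t)) := by
    have hderiv : ∀ s ∈ Set.uIcc (0:ℝ) t,
        HasDerivAt (fun u => -(K ^ 2) * exp (-2 * u)) (2 * K ^ 2 * exp (-2 * s)) s := by
      intro s _
      have h0 : HasDerivAt (fun u : ℝ => -2 * u) (-2) s := by
        simpa using (hasDerivAt_id s).const_mul (-2 : ℝ)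
      have h1 : HasDerivAt (fun u : ℝ => exp (-2 * u)) (exp (-2 * s) * (-2)) s :=
        (Real.hasDerivAt_exp (-2 * s)).comp s h0
      have := h1.const_mul (-(K ^ 2))
      exact this.congr_deriv (by ring)
    rw [intervalIntegral.integral_eq_sub_of_hasDerivAt hderiv hint2]
    simp only [mul_zero, Real.exp_zero]
    ring
  have hbound : (∫ s in (0:ℝ)..t, 2 * (E e s) ^ 2 / (1 + (E e s) ^ 2))
      ≤ 2 * K ^ 2 * (1 - exp (-t)) := by
    have h2t : K ^ 2 * (1 - exp (-2 * t)) ≤ 2 * K ^ 2 * (1 - exp (-t)) := by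
      have he : exp (-2 * t) = exp (-t) * exp (-t) := by rw [← Real.exp_add]; ring_nf
      nlinarith [sq_nonneg (1 - exp (-t)), sq_nonneg K, Real.exp_pos (-t)]
    rw [hcalc] at hmono; linarith
  have h1 : |δE δ e t| ≤ exp (-t + 2 * K ^ 2 * (1 - exp (-t))) * |δ| := by
    rw [hδE, abs_mul, abs_of_pos (Real.exp_pos _)]
    exact mul_le_mul_of_nonneg_right (Real.exp_le_exp.mpr (by linarith)) (abs_nonneg δ)
  refine ⟨h1, h1.trans ?_⟩
  apply mul_le_mul_of_nonneg_right ?_ (abs_nonneg δ)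
  rw [← Real.exp_add]
  apply Real.exp_le_exp.mpr
  have hK2 : K ^ 2 = e ^ 2 * exp (e ^ 2) := by
    rw [hK, mul_pow, sq_abs, pow_two (exp (e ^ 2 / 2)), ← Real.exp_add]; ring_nf
  have h1e : 1 - exp (-t) ≤ 1 := by linarith [Real.exp_pos (-t)]
  have : 2 * K ^ 2 * (1 - exp (-t)) ≤ 2 * K ^ 2 := by nlinarith [sq_nonneg K]
  rw [hK2] at this ⊢
  linarith
end
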